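/- arXiv:1102.5170 — 6 statements merged into one kernel-verified Lean document; each statement's English description precedes it below -/
import Mathlib

section
/- (Contraction of base norm distance.) Let C ⊆ V and C' ⊆ V' be proper cones with bases B = C ∩ {v | ⟨e,v⟩ = 1} and B' = C' ∩ {v' | ⟨e',v'⟩ = 1}, and let T : V → V' be a linear base-preserving map (T(B) ⊆ B'). Then for all v₁, v₂ ∈ V with ⟨e,v₁⟩ = ⟨e,v₂⟩: ‖T v₁ − T v₂‖_{B'} ≤ ‖v₁ − v₂‖_B · tanh(Δ(T)/4), where tanh(∞/4) := 1. -/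
noncomputable section

variable {V : Type*} [NormedAddCommGroup V] [InnerProductSpace ℝ V]

/-- A proper cone: closed, convex, closed under nonnegative scaling, pointed and solid. -/
def IsProperCone (C : Set V) : Prop :=
  IsClosed C ∧ Convex ℝ C ∧ (∀ (r : ℝ), 0 ≤ r → ∀ x ∈ C, r • x ∈ C) ∧
    (C ∩ (-C) = {0}) ∧ (Submodule.span ℝ C = ⊤)

/-- `sup_C(a/b) := inf {λ : ℝ | λ • b - a ∈ C}`, as an extended real (`⊤` if no such `λ`). -/
def supRatio (C : Set V) (a b : V) : EReal :=
  sInf ((fun l : ℝ => (l : EReal)) '' {l : ℝ | l • b - a ∈ C})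

/-- `inf_C(a/b) := sup {λ : ℝ | a - λ • b ∈ C}`. -/
def infRatio (C : Set V) (a b : V) : EReal :=
  sSup ((fun l : ℝ => (l : EReal)) '' {l : ℝ | a - l • b ∈ C})

/-- Hilbert's projective metric `h_C(a,b) = ln (sup_C(a/b) * sup_C(b/a)) ∈ [0,∞]`. -/
def hilbertDist (C : Set V) (a b : V) : EReal :=
  if supRatio C a b = ⊤ ∨ supRatio C b a = ⊤ then ⊤
  else ((Real.log ((supRatio C a b).toReal * (supRatio C b a).toReal) : ℝ) : EReal)

/-- The oscillation `osc_C(a/b) = sup_C(a/b) - inf_C(a/b)`. -/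
def oscRatio (C : Set V) (a b : V) : EReal :=
  supRatio C a b - infRatio C a b

variable {V' : Type*} [NormedAddCommGroup V'] [InnerProductSpace ℝ V']

/-- The projective diameter `Δ(T)` of a cone-preserving linear map `T`. -/
def projDiam (C : Set V) (C' : Set V') (T : V →ₗ[ℝ] V') : EReal :=
  ⨆ (a : V) (_ : a ∈ C \ {0}) (b : V) (_ : b ∈ C \ {0}), hilbertDist C' (T a) (T b)

/-- `tanh(x/4)`, with the convention `tanh(⊤/4) = 1`. -/
def tanhQuarter (x : EReal) : ℝ :=
  if x = ⊤ then 1 else Real.tanh (x.toReal / 4)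

/-- `tanh(x/2)`, with the convention `tanh(⊤/2) = 1`. -/
def tanhHalf (x : EReal) : ℝ :=
  if x = ⊤ then 1 else Real.tanh (x.toReal / 2)

/-- The dual cone of `C` (identifying `V` with its dual via the inner product). -/
def dualConeSet (C : Set V) : Set V := {w : V | ∀ c ∈ C, 0 ≤ (inner ℝ w c : ℝ)}

/-- The base norm `‖v‖_B` induced by the cone `C` and the functional `⟨e, ·⟩`. -/
def baseNorm (C : Set V) (e : V) (v : V) : ℝ :=
  sInf {r : ℝ | ∃ cp ∈ C, ∃ cm ∈ C, v = cp - cm ∧ r = (inner ℝ e cp : ℝ) + (inner ℝ e cm : ℝ)}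

/-- The negativity `N_B(v)` induced by the cone `C` and the functional `⟨e, ·⟩`. -/
def negativity (C : Set V) (e : V) (v : V) : ℝ :=
  sInf {r : ℝ | ∃ cp ∈ C, ∃ cm ∈ C, v = cp - cm ∧ r = (inner ℝ e cm : ℝ)}

variable {C : Set V} {e : V}

lemma aux_zero_mem (hC : IsProperCone C) : (0 : V) ∈ C := by
  have h : (0 : V) ∈ C ∩ (-C) := hC.2.2.2.1 ▸ Set.mem_singleton 0
  exact h.1

lemma aux_pointed (hC : IsProperCone C) {x : V} (h1 : x ∈ C) (h2 : -x ∈ C) : x = 0 := by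
  have h : x ∈ C ∩ (-C) := ⟨h1, by simpa using h2⟩
  rw [hC.2.2.2.1] at h
  exact h

lemma aux_add_mem (hC : IsProperCone C) {a b : V} (ha : a ∈ C) (hb : b ∈ C) : a + b ∈ C := by
  have h := hC.2.1 ha hb (by norm_num : (0:ℝ) ≤ 1/2) (by norm_num : (0:ℝ) ≤ 1/2) (by norm_num)
  have h2 := hC.2.2.1 2 (by norm_num) _ h
  have : (2:ℝ) • ((1/2 : ℝ) • a + (1/2 : ℝ) • b) = a + b := by
    rw [smul_add, smul_smul, smul_smul]; norm_num
  rwa [this] at h2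

lemma aux_exists_decomp (hC : IsProperCone C) (v : V) :
    ∃ cp ∈ C, ∃ cm ∈ C, v = cp - cm := by
  let P : Submodule ℝ V :=
    { carrier := {x | ∃ cp ∈ C, ∃ cm ∈ C, x = cp - cm}
      add_mem' := by
        rintro x y ⟨a, ha, b, hb, rfl⟩ ⟨c, hc, d, hd, rfl⟩
        exact ⟨a + c, aux_add_mem hC ha hc, b + d, aux_add_mem hC hb hd, by abel⟩
      zero_mem' := ⟨0, aux_zero_mem hC, 0, aux_zero_mem hC, by simp⟩
      smul_mem' := by
        rintro r x ⟨a, ha, b, hb, rfl⟩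
        rcases le_or_gt 0 r with h | h
        · exact ⟨r • a, hC.2.2.1 r h a ha, r • b, hC.2.2.1 r h b hb, by rw [smul_sub]⟩
        · refine ⟨(-r) • b, hC.2.2.1 _ (by linarith) _ hb, (-r) • a, hC.2.2.1 _ (by linarith) _ ha, ?_⟩
          rw [smul_sub, neg_smul, neg_smul]; abel }
  have hsub : C ⊆ P := fun c hc => ⟨c, hc, 0, aux_zero_mem hC, by simp⟩
  have hv : v ∈ P := by
    have h := Submodule.span_le.2 hsub
    rw [hC.2.2.2.2] at h
    exact h trivial
  exact hv

lemma aux_dual_nonneg (he : e ∈ interior (dualConeSet C)) {c : V} (hc : c ∈ C) :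
    0 ≤ (inner ℝ e c : ℝ) := interior_subset he c hc

lemma aux_dual_pos (he : e ∈ interior (dualConeSet C)) {c : V} (hc : c ∈ C) (hc0 : c ≠ 0) :
    0 < (inner ℝ e c : ℝ) := by
  obtain ⟨ε, hε, hball⟩ := Metric.isOpen_iff.1 isOpen_interior e he
  have hcn : (0:ℝ) < ‖c‖ := norm_pos_iff.2 hc0
  set t : ℝ := ε / (2 * ‖c‖) with ht
  have htpos : 0 < t := by positivity
  have hu : e - t • c ∈ dualConeSet C := by
    apply interior_subset
    apply hball
    rw [Metric.mem_ball, dist_eq_norm]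
    have : e - t • c - e = -(t • c) := by abel
    rw [this, norm_neg, norm_smul, Real.norm_eq_abs, abs_of_pos htpos, ht]
    have : ε / (2 * ‖c‖) * ‖c‖ = ε / 2 := by field_simp
    rw [this]; linarith
  have h0 := hu c hc
  rw [inner_sub_left, real_inner_smul_left] at h0
  nlinarith [real_inner_self_eq_norm_sq c, mul_pos htpos (mul_pos hcn hcn), sq_nonneg ‖c‖]


lemma tanh_formula (x : ℝ) : Real.tanh x = (Real.exp x ^ 2 - 1) / (Real.exp x ^ 2 + 1) := by
  have h := Real.exp_pos x
  rw [Real.tanh_eq_sinh_div_cosh, Real.sinh_eq, Real.cosh_eq, Real.exp_neg]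
  rw [div_eq_div_iff (by positivity : ((Real.exp x + (Real.exp x)⁻¹) / 2 : ℝ) ≠ 0)
    (by positivity : (Real.exp x ^ 2 + 1 : ℝ) ≠ 0)]
  field_simp

lemma tanh_mono {x y : ℝ} (h : x ≤ y) : Real.tanh x ≤ Real.tanh y := by
  rw [tanh_formula, tanh_formula]
  have hx := Real.exp_pos x
  have hy := Real.exp_pos y
  have hxy : Real.exp x ≤ Real.exp y := Real.exp_le_exp.2 h
  rw [div_le_div_iff₀ (by positivity) (by positivity)]
  nlinarith

lemma tanh_lt_one' (x : ℝ) : Real.tanh x < 1 := by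
  rw [tanh_formula]
  have hx := Real.exp_pos x
  rw [div_lt_one (by positivity)]
  linarith

lemma tanh_nonneg' {x : ℝ} (h : 0 ≤ x) : 0 ≤ Real.tanh x := by
  have := tanh_mono h
  rwa [Real.tanh_zero] at this



lemma supRatio_spec (hC : IsProperCone C) (he : e ∈ interior (dualConeSet C))
    {a b : V} (ha : a ∈ C) (ha1 : (inner ℝ e a : ℝ) = 1) (hb1 : (inner ℝ e b : ℝ) = 1)
    (hfin : supRatio C a b ≠ ⊤) :
    ∃ M : ℝ, supRatio C a b = (M : EReal) ∧ 1 ≤ M ∧ M • b - a ∈ C := by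
  set S : Set ℝ := {l : ℝ | l • b - a ∈ C} with hS
  have hSlb : ∀ l ∈ S, (1:ℝ) ≤ l := by
    intro l hl
    have h0 := aux_dual_nonneg he hl
    rw [inner_sub_right, real_inner_smul_right, ha1, hb1] at h0
    linarith
  have hbdd : BddBelow S := ⟨1, hSlb⟩
  have hSne : S.Nonempty := by
    by_contra h
    rw [Set.not_nonempty_iff_eq_empty] at h
    apply hfin
    rw [supRatio, ← hS, h]
    simp
  have hScl : IsClosed S := by
    have : Continuous fun l : ℝ => l • b - a :=
      (continuous_id.smul continuous_const).sub continuous_const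
    exact hC.1.preimage this
  have hMmem : sInf S ∈ S := hScl.csInf_mem hSne hbdd
  refine ⟨sInf S, ?_, le_csInf hSne hSlb, hMmem⟩
  rw [supRatio, ← hS]
  apply le_antisymm
  · exact sInf_le (Set.mem_image_of_mem _ hMmem)
  · apply le_sInf
    rintro x ⟨l, hl, rfl⟩
    simp only []
    exact_mod_cast csInf_le hbdd hl

lemma supRatio_self (hC : IsProperCone C) {x : V} (hx : x ∈ C) (hx0 : x ≠ 0) :
    supRatio C x x = ((1:ℝ) : EReal) := by
  have hSeq : {l : ℝ | l • x - x ∈ C} = Set.Ici (1:ℝ) := by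
    ext l
    simp only [Set.mem_setOf_eq, Set.mem_Ici]
    constructor
    · intro hl
      by_contra h
      push_neg at h
      have h1 : (1 - l) • x ∈ C := hC.2.2.1 _ (by linarith) _ hx
      have h2 : -((1-l) • x) ∈ C := by
        have : -((1-l) • x) = l • x - x := by
          rw [sub_smul, one_smul]; abel
        rw [this]; exact hl
      have := aux_pointed hC h1 h2
      rw [smul_eq_zero] at this
      rcases this with h' | h'
      · linarith
      · exact hx0 h'
    · intro hl
      have : l • x - x = (l - 1) • x := by rw [sub_smul, one_smul]
      rw [this]
      exact hC.2.2.1 _ (by linarith) _ hx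
  rw [supRatio, hSeq]
  apply le_antisymm
  · exact sInf_le (Set.mem_image_of_mem _ (by simp : (1:ℝ) ∈ Set.Ici (1:ℝ)))
  · apply le_sInf
    rintro y ⟨l, hl, rfl⟩
    simp only [Set.mem_Ici] at hl
    simp only []
    exact_mod_cast hl

lemma hilbertDist_ne_bot (C : Set V) (a b : V) : hilbertDist C a b ≠ ⊥ := by
  rw [hilbertDist]
  split
  · simp
  · simp

lemma hilbertDist_self (hC : IsProperCone C) {x : V} (hx : x ∈ C) (hx0 : x ≠ 0) :
    hilbertDist C x x = 0 := by
  rw [hilbertDist, supRatio_self hC hx hx0]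
  have hne : ¬(((1:ℝ):EReal) = ⊤ ∨ ((1:ℝ):EReal) = ⊤) := by
    simp only [or_self]
    exact fun h => EReal.coe_ne_top 1 h
  rw [if_neg hne]
  norm_num



lemma key_decomp (hC : IsProperCone C) (he : e ∈ interior (dualConeSet C))
    {a b : V} (ha : a ∈ C) (hb : b ∈ C) (ha1 : (inner ℝ e a : ℝ) = 1) (hb1 : (inner ℝ e b : ℝ) = 1)
    (hfin : hilbertDist C a b ≠ ⊤) :
    ∃ cp ∈ C, ∃ cm ∈ C, a - b = cp - cm ∧
      (inner ℝ e cp : ℝ) + (inner ℝ e cm : ℝ) ≤ 2 * Real.tanh ((hilbertDist C a b).toReal / 4) := by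
  have hsup1 : supRatio C a b ≠ ⊤ := by
    intro h; exact hfin (by rw [hilbertDist, if_pos (Or.inl h)])
  have hsup2 : supRatio C b a ≠ ⊤ := by
    intro h; exact hfin (by rw [hilbertDist, if_pos (Or.inr h)])
  obtain ⟨M, hMeq, hM1, hMmem⟩ := supRatio_spec hC he ha ha1 hb1 hsup1
  obtain ⟨M', hM'eq, hM'1, hM'mem⟩ := supRatio_spec hC he hb hb1 ha1 hsup2
  have hMpos : (0:ℝ) < M := by linarith
  have hM'pos : (0:ℝ) < M' := by linarith
  have htoReal : (hilbertDist C a b).toReal = Real.log (M * M') := by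
    rw [hilbertDist, if_neg (by push_neg; exact ⟨hsup1, hsup2⟩), hMeq, hM'eq]
    rw [EReal.toReal_coe, EReal.toReal_coe, EReal.toReal_coe]
  set s : ℝ := Real.sqrt (M * M') with hs
  have hMM' : (1:ℝ) ≤ M * M' := by nlinarith
  have hsq : s ^ 2 = M * M' := Real.sq_sqrt (by positivity)
  have hs1 : 1 ≤ s := by nlinarith [Real.sqrt_nonneg (M * M')]
  have htanh : Real.tanh ((hilbertDist C a b).toReal / 4) = (s - 1) / (s + 1) := by
    rw [htoReal, tanh_formula]
    have hexp : Real.exp (Real.log (M * M') / 4) ^ 2 = s := by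
      rw [sq, ← Real.exp_add]
      have h4 : Real.log (M * M') / 4 + Real.log (M * M') / 4 = Real.log (M * M') / 2 := by ring
      rw [h4, Real.exp_half, Real.exp_log (by positivity)]
    rw [hexp]
  rw [htanh]
  set m : ℝ := 1 / M' with hm
  have hmpos : 0 < m := by positivity
  have hmM' : m * M' = 1 := by rw [hm]; field_simp
  have hm1 : m ≤ 1 := by rw [hm, div_le_one hM'pos]; exact hM'1
  rcases eq_or_lt_of_le (show m ≤ M by linarith) with hMm | hMm
  · -- degenerate: M = m forces M = M' = 1, hence a = b
    have hM'one : M' = 1 := by nlinarith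
    have hMone : M = 1 := by rw [← hMm, hm, hM'one]; norm_num
    have hba : b - a ∈ C := by rw [← one_smul ℝ b, ← hMone]; exact hMmem
    have hab : a - b ∈ C := by rw [← one_smul ℝ a, ← hM'one]; exact hM'mem
    have heq : a - b = 0 := aux_pointed hC hab (by rw [neg_sub]; exact hba)
    refine ⟨0, aux_zero_mem hC, 0, aux_zero_mem hC, by rw [heq, sub_zero], ?_⟩
    simp only [inner_zero_right]
    have : (0:ℝ) ≤ (s - 1) / (s + 1) := div_nonneg (by linarith) (by linarith)
    norm_num
    linarith
  · set α : ℝ := (M - 1) / (M - m) with hα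
    set β : ℝ := (1 - m) / (M - m) with hβ
    have hMmpos : (0:ℝ) < M - m := by linarith
    have hαnn : 0 ≤ α := div_nonneg (by linarith) (by linarith)
    have hβnn : 0 ≤ β := div_nonneg (by linarith) (by linarith)
    have hamb : a - m • b ∈ C := by
      have h1 : m • (M' • a - b) ∈ C := hC.2.2.1 m (le_of_lt hmpos) _ hM'mem
      have h2 : m • (M' • a - b) = a - m • b := by
        rw [smul_sub, smul_smul, hmM', one_smul]
      rwa [h2] at h1
    refine ⟨α • (a - m • b), hC.2.2.1 α hαnn _ hamb,
            β • (M • b - a), hC.2.2.1 β hβnn _ hMmem, ?_, ?_⟩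
    · have h1 : α + β = 1 := by
        rw [hα, hβ, ← add_div, div_eq_one_iff_eq (ne_of_gt hMmpos)]; ring
      have h2 : α * m + β * M = 1 := by
        rw [hα, hβ]; field_simp; ring
      have h3 : α • (a - m • b) - β • (M • b - a) = (α + β) • a - (α * m + β * M) • b := by
        module
      rw [h3, h1, h2, one_smul, one_smul]
    · have hip : (inner ℝ e (α • (a - m • b)) : ℝ) = α * (1 - m) := by
        rw [real_inner_smul_right, inner_sub_right, real_inner_smul_right, ha1, hb1]; ring
      have him : (inner ℝ e (β • (M • b - a)) : ℝ) = β * (M - 1) := by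
        rw [real_inner_smul_right, inner_sub_right, real_inner_smul_right, ha1, hb1]; ring
      rw [hip, him]
      have hsm : s ^ 2 * m = M := by
        rw [hsq, mul_assoc, mul_comm M', hmM', mul_one]
      have hsum : α * (1 - m) + β * (M - 1) = 2 * ((M - 1) * (1 - m)) / (M - m) := by
        rw [hα, hβ]; field_simp; ring
      rw [hsum, ← mul_div_assoc, div_le_div_iff₀ hMmpos (by linarith : (0:ℝ) < s + 1)]
      nlinarith [mul_nonneg (sq_nonneg (m * s - 1)) (by linarith : (0:ℝ) ≤ s + 1), hsm,
        mul_pos hmpos (by linarith : (0:ℝ) < s)]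


/-- **Contraction of base norm distance.** -/
theorem baseNorm_distance_contraction
    {V : Type*} [NormedAddCommGroup V] [InnerProductSpace ℝ V] [FiniteDimensional ℝ V]
    {V' : Type*} [NormedAddCommGroup V'] [InnerProductSpace ℝ V'] [FiniteDimensional ℝ V']
    (C : Set V) (C' : Set V') (hC : IsProperCone C) (hC' : IsProperCone C')
    (e : V) (he : e ∈ interior (dualConeSet C))
    (e' : V') (he' : e' ∈ interior (dualConeSet C'))
    (B : Set V) (hB : B = C ∩ {v : V | (inner ℝ e v : ℝ) = 1})
    (B' : Set V') (hB' : B' = C' ∩ {v : V' | (inner ℝ e' v : ℝ) = 1})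
    (T : V →ₗ[ℝ] V') (hT : ∀ b ∈ B, T b ∈ B')
    (v₁ v₂ : V) (hv : (inner ℝ e v₁ : ℝ) = (inner ℝ e v₂ : ℝ)) :
    baseNorm C' e' (T v₁ - T v₂) ≤ baseNorm C e (v₁ - v₂) * tanhQuarter (projDiam C C' T) := by
  -- T maps the cone into the cone and preserves the functional value
  have hce' : ∀ c ∈ C, T c ∈ C' ∧ (inner ℝ e' (T c) : ℝ) = (inner ℝ e c : ℝ) := by
    intro c hc
    rcases eq_or_ne c 0 with rfl | hc0
    · exact ⟨by rw [map_zero]; exact aux_zero_mem hC',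
        by rw [map_zero, inner_zero_right, inner_zero_right]⟩
    · have hpos := aux_dual_pos he hc hc0
      have hmem : (inner ℝ e c : ℝ)⁻¹ • c ∈ B := by
        rw [hB]
        refine ⟨hC.2.2.1 _ (by positivity) _ hc, ?_⟩
        simp only [Set.mem_setOf_eq, real_inner_smul_right]
        field_simp
      have h1 := hT _ hmem
      rw [hB'] at h1
      obtain ⟨h1c, h1e⟩ := h1
      rw [map_smul] at h1c h1e
      rw [Set.mem_setOf_eq, real_inner_smul_right] at h1e
      constructor
      · have h2 := hC'.2.2.1 (inner ℝ e c : ℝ) (le_of_lt hpos) _ h1c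
        rwa [smul_smul, mul_inv_cancel₀ (ne_of_gt hpos), one_smul] at h2
      · field_simp at h1e
        linarith
  set v : V := v₁ - v₂ with hvdef
  have hTv : T v₁ - T v₂ = T v := by rw [hvdef, map_sub]
  have hve : (inner ℝ e v : ℝ) = 0 := by rw [hvdef, inner_sub_right, hv]; ring
  set S : Set ℝ := {r : ℝ | ∃ cp ∈ C, ∃ cm ∈ C, v = cp - cm ∧
      r = (inner ℝ e cp : ℝ) + (inner ℝ e cm : ℝ)} with hSdef
  set S' : Set ℝ := {r : ℝ | ∃ cp ∈ C', ∃ cm ∈ C', T v₁ - T v₂ = cp - cm ∧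
      r = (inner ℝ e' cp : ℝ) + (inner ℝ e' cm : ℝ)} with hS'def
  have hBN : baseNorm C e v = sInf S := by rw [hSdef]; rfl
  have hBN' : baseNorm C' e' (T v₁ - T v₂) = sInf S' := by rw [hS'def]; rfl
  have hSne : S.Nonempty := by
    obtain ⟨cp, hcp, cm, hcm, hd⟩ := aux_exists_decomp hC v
    exact ⟨_, cp, hcp, cm, hcm, hd, rfl⟩
  have hSbdd : BddBelow S := by
    refine ⟨0, ?_⟩
    rintro r ⟨cp, hcp, cm, hcm, -, rfl⟩
    have h1 := aux_dual_nonneg he hcp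
    have h2 := aux_dual_nonneg he hcm
    linarith
  have hS'bdd : BddBelow S' := by
    refine ⟨0, ?_⟩
    rintro r ⟨cp, hcp, cm, hcm, -, rfl⟩
    have h1 := aux_dual_nonneg he' hcp
    have h2 := aux_dual_nonneg he' hcm
    linarith
  set t : ℝ := tanhQuarter (projDiam C C' T) with htdef
  have claim : ∀ r ∈ S, baseNorm C' e' (T v₁ - T v₂) ≤ r * t := by
    rintro r ⟨cp, hcp, cm, hcm, hd, hr⟩
    have hlameq : (inner ℝ e cp : ℝ) = (inner ℝ e cm : ℝ) := by
      have h0 : (inner ℝ e (cp - cm) : ℝ) = 0 := by rw [← hd]; exact hve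
      rw [inner_sub_right] at h0
      linarith
    set lam : ℝ := (inner ℝ e cp : ℝ) with hlam
    have hlamnn : 0 ≤ lam := aux_dual_nonneg he hcp
    have hr2 : r = 2 * lam := by rw [hr, ← hlameq]; ring
    rcases eq_or_lt_of_le hlamnn with hlam0 | hlampos
    · -- degenerate: lam = 0, so cp = cm = 0 and v = 0
      have hcp0 : cp = 0 := by
        by_contra h
        have hp := aux_dual_pos he hcp h
        rw [← hlam, ← hlam0] at hp
        exact lt_irrefl 0 hp
      have hcm0 : cm = 0 := by
        by_contra h
        have hp := aux_dual_pos he hcm h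
        rw [← hlameq, ← hlam0] at hp
        exact lt_irrefl 0 hp
      have hv0 : T v₁ - T v₂ = 0 := by
        rw [hTv, hd, hcp0, hcm0, sub_zero, map_zero]
      have h0mem : (0:ℝ) ∈ S' := by
        refine ⟨0, aux_zero_mem hC', 0, aux_zero_mem hC', by rw [hv0, sub_zero], by simp⟩
      have hle0 : baseNorm C' e' (T v₁ - T v₂) ≤ 0 := by
        rw [hBN']; exact csInf_le hS'bdd h0mem
      have : r * t = 0 := by rw [hr2, ← hlam0]; ring
      rw [this]; exact hle0
    · -- main case: lam > 0
      set b₁ : V := lam⁻¹ • cp with hb₁def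
      set b₂ : V := lam⁻¹ • cm with hb₂def
      have hb₁C : b₁ ∈ C := hC.2.2.1 _ (by positivity) _ hcp
      have hb₂C : b₂ ∈ C := hC.2.2.1 _ (by positivity) _ hcm
      have hb₁e : (inner ℝ e b₁ : ℝ) = 1 := by
        rw [hb₁def, real_inner_smul_right, ← hlam, inv_mul_cancel₀ (ne_of_gt hlampos)]
      have hb₂e : (inner ℝ e b₂ : ℝ) = 1 := by
        rw [hb₂def, real_inner_smul_right, ← hlameq,
          inv_mul_cancel₀ (ne_of_gt hlampos)]
      have hb₁B : b₁ ∈ B := by rw [hB]; exact ⟨hb₁C, hb₁e⟩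
      have hb₂B : b₂ ∈ B := by rw [hB]; exact ⟨hb₂C, hb₂e⟩
      have hTb₁ := hT _ hb₁B
      have hTb₂ := hT _ hb₂B
      rw [hB'] at hTb₁ hTb₂
      have hb₁ne : b₁ ≠ 0 := by
        intro h
        rw [h, inner_zero_right] at hb₁e
        norm_num at hb₁e
      have hb₂ne : b₂ ≠ 0 := by
        intro h
        rw [h, inner_zero_right] at hb₂e
        norm_num at hb₂e
      have hTcp : lam • T b₁ = T cp := by
        rw [hb₁def, map_smul, smul_smul, mul_inv_cancel₀ (ne_of_gt hlampos), one_smul]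
      have hTcm : lam • T b₂ = T cm := by
        rw [hb₂def, map_smul, smul_smul, mul_inv_cancel₀ (ne_of_gt hlampos), one_smul]
      have hle : hilbertDist C' (T b₁) (T b₂) ≤ projDiam C C' T := by
        refine le_iSup_of_le b₁ (le_iSup_of_le ?_ (le_iSup_of_le b₂ (le_iSup_of_le ?_ le_rfl)))
        · exact ⟨hb₁C, by simp [hb₁ne]⟩
        · exact ⟨hb₂C, by simp [hb₂ne]⟩
      by_cases hD : projDiam C C' T = ⊤
      · -- projective diameter infinite: plain contraction
        have ht1 : t = 1 := by rw [htdef, tanhQuarter, if_pos hD]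
        have hmem : r ∈ S' := by
          refine ⟨T cp, (hce' cp hcp).1, T cm, (hce' cm hcm).1, ?_, ?_⟩
          · rw [hTv, hd, map_sub]
          · rw [(hce' cp hcp).2, (hce' cm hcm).2, hr]
        rw [ht1, mul_one, hBN']
        exact csInf_le hS'bdd hmem
      · -- finite projective diameter: use the key decomposition
        have hfin : hilbertDist C' (T b₁) (T b₂) ≠ ⊤ := by
          intro h
          rw [h] at hle
          exact hD (top_le_iff.1 hle)
        obtain ⟨cp', hcp', cm', hcm', hdec, hval⟩ :=
          key_decomp hC' he' hTb₁.1 hTb₂.1 hTb₁.2 hTb₂.2 hfin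
        have hTveq : T v₁ - T v₂ = lam • cp' - lam • cm' := by
          rw [hTv, hd, map_sub, ← hTcp, ← hTcm, ← smul_sub, hdec, smul_sub]
        have hmem : (inner ℝ e' (lam • cp') : ℝ) + (inner ℝ e' (lam • cm') : ℝ) ∈ S' :=
          ⟨lam • cp', hC'.2.2.1 _ hlamnn _ hcp', lam • cm', hC'.2.2.1 _ hlamnn _ hcm',
            hTveq, rfl⟩
        have hstep1 : baseNorm C' e' (T v₁ - T v₂) ≤
            (inner ℝ e' (lam • cp') : ℝ) + (inner ℝ e' (lam • cm') : ℝ) := by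
          rw [hBN']; exact csInf_le hS'bdd hmem
        have hstep2 : (inner ℝ e' (lam • cp') : ℝ) + (inner ℝ e' (lam • cm') : ℝ)
            ≤ lam * (2 * Real.tanh ((hilbertDist C' (T b₁) (T b₂)).toReal / 4)) := by
          rw [real_inner_smul_right, real_inner_smul_right, ← mul_add]
          exact mul_le_mul_of_nonneg_left hval hlamnn
        have hstep3 : Real.tanh ((hilbertDist C' (T b₁) (T b₂)).toReal / 4) ≤ t := by
          rw [htdef, tanhQuarter, if_neg hD]
          apply tanh_mono
          have := EReal.toReal_le_toReal hle (hilbertDist_ne_bot C' (T b₁) (T b₂)) hD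
          linarith
        calc baseNorm C' e' (T v₁ - T v₂)
            ≤ lam * (2 * Real.tanh ((hilbertDist C' (T b₁) (T b₂)).toReal / 4)) :=
              le_trans hstep1 hstep2
          _ ≤ lam * (2 * t) := by
              apply mul_le_mul_of_nonneg_left _ hlamnn
              apply mul_le_mul_of_nonneg_left hstep3 (by norm_num)
          _ = r * t := by rw [hr2]; ring
  rw [hBN]
  rcases le_or_gt t 0 with ht | ht
  · obtain ⟨r0, hr0⟩ := hSne
    calc baseNorm C' e' (T v₁ - T v₂) ≤ r0 * t := claim r0 hr0
      _ ≤ sInf S * t := mul_le_mul_of_nonpos_right (csInf_le hSbdd hr0) ht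
  · have h2 : ∀ r ∈ S, baseNorm C' e' (T v₁ - T v₂) / t ≤ r := fun r hr =>
      (div_le_iff₀ ht).2 (claim r hr)
    have h3 := le_csInf hSne h2
    calc baseNorm C' e' (T v₁ - T v₂)
        = baseNorm C' e' (T v₁ - T v₂) / t * t := by field_simp
      _ ≤ sInf S * t := mul_le_mul_of_nonneg_right h3 (le_of_lt ht)

end
end

section
/- (Base norm contraction.) Let C ⊆ V and C' ⊆ V' be proper cones with bases B = C ∩ {v | ⟨e,v⟩ = 1} and B' = C' ∩ {v' | ⟨e',v'⟩ = 1}, and let T : V → V' be a linear base-preserving map (T(B) ⊆ B'). If v ∈ V satisfies ⟨e,v⟩ ≥ 0 and T(v) ∉ C', then ‖T v‖_{B'} ≤ ‖v‖_B · tanh(Δ(T)/2), where tanh(∞/2) := 1. -/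
noncomputable section

variable {V : Type*} [NormedAddCommGroup V] [InnerProductSpace ℝ V]

variable {V' : Type*} [NormedAddCommGroup V'] [InnerProductSpace ℝ V']

private lemma bnc_tanh_exp (x : ℝ) :
    Real.tanh x = (Real.exp (2*x) - 1)/(Real.exp (2*x) + 1) := by
  rw [Real.tanh_eq_sinh_div_cosh, Real.sinh_eq, Real.cosh_eq]
  have h1 : Real.exp (2*x) = Real.exp x * Real.exp x := by
    rw [← Real.exp_add]; ring_nf
  have h2 : Real.exp x * Real.exp (-x) = 1 := by rw [← Real.exp_add]; simp
  have h3 : Real.exp x ≠ 0 := (Real.exp_pos x).ne'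
  have h4 : Real.exp (-x) > 0 := Real.exp_pos _
  rw [h1]
  field_simp
  nlinarith [Real.exp_pos x]

private lemma bnc_tanh_mono {a b : ℝ} (hab : a ≤ b) : Real.tanh a ≤ Real.tanh b := by
  rw [bnc_tanh_exp, bnc_tanh_exp]
  have h1 : Real.exp (2*a) ≤ Real.exp (2*b) := Real.exp_le_exp.mpr (by linarith)
  have h2 : 0 < Real.exp (2*a) := Real.exp_pos _
  have h3 : 0 < Real.exp (2*b) := Real.exp_pos _
  rw [div_le_div_iff₀ (by linarith) (by linarith)]
  nlinarith

private lemma bnc_tanh_log {s : ℝ} (hs : 0 < s) :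
    Real.tanh (Real.log s / 2) = (s-1)/(s+1) := by
  rw [bnc_tanh_exp]
  have h : 2 * (Real.log s / 2) = Real.log s := by ring
  rw [h, Real.exp_log hs]

private lemma bnc_tanh_nonneg {a : ℝ} (ha : 0 ≤ a) : 0 ≤ Real.tanh a := by
  have h := bnc_tanh_mono ha
  simpa [Real.tanh_zero] using h

set_option maxHeartbeats 3200000 in
/-- **Base norm contraction (logarithmic negativity decrease).** -/
theorem baseNorm_contraction
    {V : Type*} [NormedAddCommGroup V] [InnerProductSpace ℝ V] [FiniteDimensional ℝ V]
    {V' : Type*} [NormedAddCommGroup V'] [InnerProductSpace ℝ V'] [FiniteDimensional ℝ V']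
    (C : Set V) (C' : Set V') (hC : IsProperCone C) (hC' : IsProperCone C')
    (e : V) (he : e ∈ interior (dualConeSet C))
    (e' : V') (he' : e' ∈ interior (dualConeSet C'))
    (B : Set V) (hB : B = C ∩ {v : V | (inner ℝ e v : ℝ) = 1})
    (B' : Set V') (hB' : B' = C' ∩ {v : V' | (inner ℝ e' v : ℝ) = 1})
    (T : V →ₗ[ℝ] V') (hT : ∀ b ∈ B, T b ∈ B')
    (v : V) (hv : 0 ≤ (inner ℝ e v : ℝ)) (hvC' : T v ∉ C') :
    baseNorm C' e' (T v) ≤ baseNorm C e v * tanhHalf (projDiam C C' T) := by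
  obtain ⟨hCcl, hCconv, hCsc, hCpt, hCsp⟩ := hC
  obtain ⟨hC'cl, hC'conv, hC'sc, hC'pt, hC'sp⟩ := hC'
  have h0C : (0:V) ∈ C := by
    have h : (0:V) ∈ C ∩ (-C) := by rw [hCpt]; rfl
    exact h.1
  have h0C' : (0:V') ∈ C' := by
    have h : (0:V') ∈ C' ∩ (-C') := by rw [hC'pt]; rfl
    exact h.1
  have haddC : ∀ a ∈ C, ∀ b ∈ C, a + b ∈ C := by
    intro a ha b hb
    have h2 := hCconv ha hb (by norm_num : (0:ℝ) ≤ 1/2) (by norm_num : (0:ℝ) ≤ 1/2)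
      (by norm_num)
    have h3 := hCsc 2 (by norm_num) _ h2
    have h4 : (2:ℝ) • ((1/2:ℝ) • a + (1/2:ℝ) • b) = a + b := by
      rw [smul_add, smul_smul, smul_smul]; norm_num
    rwa [h4] at h3
  have haddC' : ∀ a ∈ C', ∀ b ∈ C', a + b ∈ C' := by
    intro a ha b hb
    have h2 := hC'conv ha hb (by norm_num : (0:ℝ) ≤ 1/2) (by norm_num : (0:ℝ) ≤ 1/2)
      (by norm_num)
    have h3 := hC'sc 2 (by norm_num) _ h2
    have h4 : (2:ℝ) • ((1/2:ℝ) • a + (1/2:ℝ) • b) = a + b := by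
      rw [smul_add, smul_smul, smul_smul]; norm_num
    rwa [h4] at h3
  have hed : e ∈ dualConeSet C := interior_subset he
  have he'd : e' ∈ dualConeSet C' := interior_subset he'
  have hpos : ∀ c ∈ C, c ≠ 0 → 0 < (inner ℝ e c : ℝ) := by
    intro c hc hc0
    obtain ⟨ε, hε, hball⟩ := Metric.mem_nhds_iff.mp (mem_interior_iff_mem_nhds.mp he)
    have hcn : 0 < ‖c‖ := norm_pos_iff.mpr hc0
    set s : ℝ := ε / (2 * ‖c‖) with hs
    have hs0 : 0 < s := by positivity
    have hu : e - s • c ∈ Metric.ball e ε := by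
      rw [Metric.mem_ball, dist_eq_norm]
      have h1 : e - s • c - e = -(s • c) := by abel
      rw [h1, norm_neg, norm_smul, Real.norm_eq_abs, abs_of_pos hs0, hs]
      have h2 : ε / (2 * ‖c‖) * ‖c‖ = ε / 2 := by field_simp
      rw [h2]; linarith
    have h1 : 0 ≤ (inner ℝ (e - s • c) c : ℝ) := hball hu c hc
    rw [inner_sub_left, real_inner_smul_left, real_inner_self_eq_norm_sq] at h1
    nlinarith [mul_pos hs0 (pow_pos hcn 2)]
  have hTcone : ∀ c ∈ C, T c ∈ C' ∧ (inner ℝ e' (T c) : ℝ) = (inner ℝ e c : ℝ) := by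
    intro c hc
    rcases eq_or_ne c 0 with rfl | hc0
    · refine ⟨by simpa using h0C', by simp⟩
    · have hs : 0 < (inner ℝ e c : ℝ) := hpos c hc hc0
      have hbmem : (inner ℝ e c : ℝ)⁻¹ • c ∈ B := by
        rw [hB]
        refine ⟨hCsc _ (by positivity) c hc, ?_⟩
        simp only [Set.mem_setOf_eq, real_inner_smul_right]
        field_simp
      have hb' := hT _ hbmem
      rw [hB'] at hb'
      obtain ⟨hb'C, hb'e⟩ := hb'
      have hTc : T c = (inner ℝ e c : ℝ) • T ((inner ℝ e c : ℝ)⁻¹ • c) := by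
        rw [map_smul, smul_smul, mul_inv_cancel₀ hs.ne', one_smul]
      constructor
      · rw [hTc]; exact hC'sc _ hs.le _ hb'C
      · rw [hTc, real_inner_smul_right]
        have : (inner ℝ e' (T ((inner ℝ e c : ℝ)⁻¹ • c)) : ℝ) = 1 := hb'e
        rw [this, mul_one]
  -- the target set and its lower bound
  set S' := {r : ℝ | ∃ cp ∈ C', ∃ cm ∈ C', T v = cp - cm ∧
      r = (inner ℝ e' cp : ℝ) + (inner ℝ e' cm : ℝ)} with hS'def
  have hbdd' : BddBelow S' := by
    refine ⟨0, ?_⟩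
    rintro s ⟨a, ha, b, hb, -, rfl⟩
    have h1 := he'd a ha
    have h2 := he'd b hb
    linarith
  have hbnS' : baseNorm C' e' (T v) = sInf S' := rfl
  -- the source decomposition set
  set S := {r : ℝ | ∃ cp ∈ C, ∃ cm ∈ C, v = cp - cm ∧
      r = (inner ℝ e cp : ℝ) + (inner ℝ e cm : ℝ)} with hSdef
  have hbnS : baseNorm C e v = sInf S := rfl
  have hSne : S.Nonempty := by
    have hdecomp : ∀ w : V, w ∈ Submodule.span ℝ C → ∃ a ∈ C, ∃ b ∈ C, w = a - b := by
      intro w hw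
      induction hw using Submodule.span_induction with
      | mem a ha => exact ⟨a, ha, 0, h0C, by simp⟩
      | zero => exact ⟨0, h0C, 0, h0C, by simp⟩
      | add a b _ _ iha ihb =>
          obtain ⟨a1, ha1, a2, ha2, hae⟩ := iha
          obtain ⟨b1, hb1, b2, hb2, hbe⟩ := ihb
          exact ⟨a1 + b1, haddC _ ha1 _ hb1, a2 + b2, haddC _ ha2 _ hb2,
            by rw [hae, hbe]; abel⟩
      | smul r a _ ih =>
          obtain ⟨a1, ha1, a2, ha2, hae⟩ := ih
          rcases le_or_gt 0 r with hr | hr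
          · exact ⟨r • a1, hCsc r hr _ ha1, r • a2, hCsc r hr _ ha2,
              by rw [hae, smul_sub]⟩
          · exact ⟨(-r) • a2, hCsc (-r) (by linarith) _ ha2,
              (-r) • a1, hCsc (-r) (by linarith) _ ha1,
              by rw [hae, neg_smul, neg_smul, smul_sub]; abel⟩
    obtain ⟨a, ha, b, hb, hab⟩ := hdecomp v (by rw [hCsp]; trivial)
    exact ⟨_, a, ha, b, hb, hab, rfl⟩
  -- the key estimate for every decomposition of v
  have key : ∀ r ∈ S, 0 ≤ tanhHalf (projDiam C C' T) ∧
      baseNorm C' e' (T v) ≤ r * tanhHalf (projDiam C C' T) := by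
    rintro r ⟨cp, hcp, cm, hcm, hvdec, hr⟩
    obtain ⟨hxC', hxe⟩ := hTcone cp hcp
    obtain ⟨hyC', hye⟩ := hTcone cm hcm
    set x := T cp with hxdef
    set y := T cm with hydef
    set p : ℝ := (inner ℝ e cp : ℝ) with hpdef
    set m : ℝ := (inner ℝ e cm : ℝ) with hmdef
    have hTv : T v = x - y := by rw [hvdec, map_sub]
    have hcm0 : cm ≠ 0 := by
      rintro rfl
      apply hvC'
      have h1 : v = cp := by rw [hvdec]; simp
      rw [h1]; exact hxC'
    have hm : 0 < m := hpos cm hcm hcm0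
    have hcp0 : cp ≠ 0 := by
      rintro rfl
      have hv' := hv
      rw [hvdec, inner_sub_right, inner_zero_right] at hv'
      rw [← hmdef] at hv'
      linarith
    have hp : 0 < p := hpos cp hcp hcp0
    have hpm : m ≤ p := by
      have hv' := hv
      rw [hvdec, inner_sub_right] at hv'
      rw [← hpdef, ← hmdef] at hv'
      linarith
    have hx0 : x ≠ 0 := by
      intro h
      rw [h, inner_zero_right] at hxe
      linarith
    -- the β-side set
    set Bs := {l : ℝ | x - l • y ∈ C'} with hBsdef
    have hBs0 : (0:ℝ) ∈ Bs := by
      simp only [hBsdef, Set.mem_setOf_eq, zero_smul, sub_zero]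
      exact hxC'
    have hBsub : ∀ l ∈ Bs, l * m ≤ p := by
      intro l hl
      have h1 := he'd _ hl
      rw [inner_sub_right, real_inner_smul_right, hxe, hye] at h1
      linarith
    have hBbdd : BddAbove Bs := ⟨p/m, fun l hl => (le_div_iff₀ hm).mpr (hBsub l hl)⟩
    have hBcl : IsClosed Bs := IsClosed.preimage (by continuity) hC'cl
    set β := sSup Bs with hβdef
    have hβmem : β ∈ Bs := hBcl.csSup_mem ⟨0, hBs0⟩ hBbdd
    have hβ0 : 0 ≤ β := le_csSup hBbdd hBs0
    have hβ1 : β < 1 := by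
      by_contra hle
      push_neg at hle
      apply hvC'
      rw [hTv]
      have h1 : x - y = (x - β • y) + (β - 1) • y := by module
      rw [h1]
      exact haddC' _ hβmem _ (hC'sc (β-1) (by linarith) y hyC')
    have hpβm : 0 < p - β * m := by nlinarith
    -- nonnegativity of the contraction factor
    have hcpd : cp ∈ C \ {(0:V)} := ⟨hcp, by simpa using hcp0⟩
    have hcmd : cm ∈ C \ {(0:V)} := ⟨hcm, by simpa using hcm0⟩
    have hsxx : supRatio C' x x = ((1:ℝ) : EReal) := by
      have hEq : {l : ℝ | l • x - x ∈ C'} = Set.Ici 1 := by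
        ext l
        constructor
        · intro hl
          by_contra hl1
          rw [Set.mem_Ici] at hl1
          push_neg at hl1
          have h1 : l • x - x = -((1-l) • x) := by module
          have h2 : (1-l) • x ∈ C' := hC'sc (1-l) (by linarith) x hxC'
          have h3 : (1-l) • x ∈ C' ∩ (-C') := ⟨h2, by
            rw [Set.mem_neg]
            rw [Set.mem_setOf_eq, h1] at hl
            simpa using hl⟩
          rw [hC'pt] at h3
          have h4 : (1-l) • x = 0 := h3
          rcases smul_eq_zero.mp h4 with h5 | h5
          · linarith [h5]
          · exact hx0 h5
        · intro hl
          rw [Set.mem_Ici] at hl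
          have h1 : l • x - x = (l-1) • x := by module
          rw [Set.mem_setOf_eq, h1]
          exact hC'sc (l-1) (by linarith) x hxC'
      unfold supRatio
      rw [hEq]
      apply le_antisymm
      · exact sInf_le ⟨1, Set.self_mem_Ici, rfl⟩
      · apply le_sInf
        rintro z ⟨l, hl, rfl⟩
        simpa using EReal.coe_le_coe_iff.mpr hl
    have hΔ0 : (0 : EReal) ≤ projDiam C C' T := by
      have h1 : hilbertDist C' x x = ((0:ℝ) : EReal) := by
        have hcc : ¬(supRatio C' x x = ⊤ ∨ supRatio C' x x = ⊤) := by
          rw [hsxx]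
          exact not_or.mpr ⟨EReal.coe_ne_top 1, EReal.coe_ne_top 1⟩
        simp only [hilbertDist]
        rw [if_neg hcc, hsxx, EReal.toReal_coe]
        norm_num
      have h2 : hilbertDist C' x x ≤ projDiam C C' T := by
        unfold projDiam
        exact le_iSup_of_le cp <| le_iSup_of_le hcpd <| le_iSup_of_le cp <|
          le_iSup_of_le hcpd le_rfl
      rw [h1] at h2
      simpa using h2
    have ht0 : 0 ≤ tanhHalf (projDiam C C' T) := by
      simp only [tanhHalf]
      split_ifs with hc
      · norm_num
      · apply bnc_tanh_nonneg
        have h1 := EReal.toReal_le_toReal hΔ0 (by simp) hc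
        simp only [EReal.toReal_zero] at h1
        linarith
    refine ⟨ht0, ?_⟩
    by_cases hΔtop : projDiam C C' T = ⊤
    · -- infinite diameter : the trivial bound suffices
      have ht1 : tanhHalf (projDiam C C' T) = 1 := by
        simp only [tanhHalf, if_pos hΔtop]
      have hdec : T v = (x - β • y) - (1 - β) • y := by rw [hTv]; module
      have hmem : (p - β*m) + (1-β)*m ∈ S' := by
        refine ⟨x - β • y, hβmem, (1-β) • y, hC'sc (1-β) (by linarith) y hyC', hdec, ?_⟩
        rw [inner_sub_right, real_inner_smul_right, real_inner_smul_right, hxe, hye]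
      have hb1 : baseNorm C' e' (T v) ≤ (p - β*m) + (1-β)*m := by
        rw [hbnS']
        exact csInf_le hbdd' hmem
      rw [ht1, hr, mul_one]
      nlinarith [mul_nonneg hβ0 hm.le]
    · -- finite diameter
      have hhle : hilbertDist C' x y ≤ projDiam C C' T := by
        unfold projDiam
        exact le_iSup_of_le cp <| le_iSup_of_le hcpd <| le_iSup_of_le cm <|
          le_iSup_of_le hcmd le_rfl
      have hhtop : hilbertDist C' x y ≠ ⊤ := by
        intro h
        exact hΔtop (top_le_iff.mp (h ▸ hhle))
      have hcond : ¬(supRatio C' x y = ⊤ ∨ supRatio C' y x = ⊤) := by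
        intro hor
        exact hhtop (by simp only [hilbertDist, if_pos hor])
      push_neg at hcond
      obtain ⟨hsxy, hsyx⟩ := hcond
      -- the α-side set
      set A := {l : ℝ | l • y - x ∈ C'} with hAdef
      have hAlb : ∀ l ∈ A, p ≤ l * m := by
        intro l hl
        have h1 := he'd _ hl
        rw [inner_sub_right, real_inner_smul_right, hxe, hye] at h1
        linarith
      have hAbdd : BddBelow A := ⟨p/m, fun l hl => (div_le_iff₀ hm).mpr (hAlb l hl)⟩
      have hAne : A.Nonempty := by
        by_contra hA0
        rw [Set.not_nonempty_iff_eq_empty] at hA0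
        apply hsxy
        unfold supRatio
        rw [← hAdef, hA0]
        simp
      have hAcl : IsClosed A := IsClosed.preimage (by continuity) hC'cl
      set α := sInf A with hαdef
      have hαmem : α ∈ A := hAcl.csInf_mem hAne hAbdd
      have hαm : p ≤ α * m := hAlb α hαmem
      have hα1 : 1 ≤ α := by nlinarith
      have hαβ : β < α := lt_of_lt_of_le hβ1 hα1
      -- the α̃-side set
      set A2 := {l : ℝ | l • x - y ∈ C'} with hA2def
      have hA2lb : ∀ l ∈ A2, m ≤ l * p := by
        intro l hl
        have h1 := he'd _ hl
        rw [inner_sub_right, real_inner_smul_right, hxe, hye] at h1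
        linarith
      have hA2bdd : BddBelow A2 := ⟨m/p, fun l hl => (div_le_iff₀ hp).mpr (hA2lb l hl)⟩
      have hA2ne : A2.Nonempty := by
        by_contra hA0
        rw [Set.not_nonempty_iff_eq_empty] at hA0
        apply hsyx
        unfold supRatio
        rw [← hA2def, hA0]
        simp
      have hA2cl : IsClosed A2 := IsClosed.preimage (by continuity) hC'cl
      set γ := sInf A2 with hγdef
      have hγmem : γ ∈ A2 := hA2cl.csInf_mem hA2ne hA2bdd
      have hγp : m ≤ γ * p := hA2lb γ hγmem
      have hγ0 : 0 < γ := by nlinarith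
      -- β ≥ 1/γ
      have hinv : γ⁻¹ ∈ Bs := by
        have h1 := hC'sc γ⁻¹ (by positivity) _ hγmem
        have h2 : γ⁻¹ • (γ • x - y) = x - γ⁻¹ • y := by
          rw [smul_sub, smul_smul, inv_mul_cancel₀ hγ0.ne', one_smul]
        rw [h2] at h1
        exact h1
      have hβγ : 1 ≤ γ * β := by
        have h1 : γ⁻¹ ≤ β := le_csSup hBbdd hinv
        calc (1:ℝ) = γ * γ⁻¹ := (mul_inv_cancel₀ hγ0.ne').symm
        _ ≤ γ * β := mul_le_mul_of_nonneg_left h1 hγ0.le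
      -- identify the sup ratios
      have hsx' : supRatio C' x y = (α : EReal) := by
        unfold supRatio
        rw [← hAdef]
        apply le_antisymm
        · exact sInf_le ⟨α, hαmem, rfl⟩
        · apply le_sInf
          rintro z ⟨l, hl, rfl⟩
          exact EReal.coe_le_coe_iff.mpr (csInf_le hAbdd hl)
      have hsy' : supRatio C' y x = (γ : EReal) := by
        unfold supRatio
        rw [← hA2def]
        apply le_antisymm
        · exact sInf_le ⟨γ, hγmem, rfl⟩
        · apply le_sInf
          rintro z ⟨l, hl, rfl⟩
          exact EReal.coe_le_coe_iff.mpr (csInf_le hA2bdd hl)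
      have hh : hilbertDist C' x y = ((Real.log (α * γ) : ℝ) : EReal) := by
        have hcc : ¬(supRatio C' x y = ⊤ ∨ supRatio C' y x = ⊤) := not_or.mpr ⟨hsxy, hsyx⟩
        simp only [hilbertDist]
        rw [if_neg hcc, hsx', hsy', EReal.toReal_coe, EReal.toReal_coe]
      have hΔr : Real.log (α * γ) ≤ (projDiam C C' T).toReal := by
        rw [hh] at hhle
        have h1 := EReal.toReal_le_toReal hhle (EReal.coe_ne_bot _) hΔtop
        simpa using h1
      have hαγ : 0 < α * γ := mul_pos (by linarith) hγ0
      have htt : (α*γ - 1)/(α*γ + 1) ≤ tanhHalf (projDiam C C' T) := by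
        simp only [tanhHalf, if_neg hΔtop]
        rw [← bnc_tanh_log hαγ]
        exact bnc_tanh_mono (by linarith)
      -- the decomposition of T v
      set μ : ℝ := (α-1)/(α-β) with hμdef
      set ν : ℝ := (1-β)/(α-β) with hνdef
      have hαβ' : 0 < α - β := by linarith
      have hμ0 : 0 ≤ μ := by
        rw [hμdef]; exact div_nonneg (by linarith) (by linarith)
      have hν0 : 0 ≤ ν := by
        rw [hνdef]; exact div_nonneg (by linarith) (by linarith)
      have hμν : μ + ν = 1 := by
        rw [hμdef, hνdef]
        rw [← add_div, div_eq_one_iff_eq hαβ'.ne']; ring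
      have hμνβα : μ*β + ν*α = 1 := by
        rw [hμdef, hνdef]
        field_simp
        ring
      have hdec : T v = μ • (x - β • y) - ν • (α • y - x) := by
        rw [hTv]
        have h1 : μ • (x - β • y) - ν • (α • y - x) = (μ+ν) • x - (μ*β+ν*α) • y := by
          module
        rw [h1, hμν, hμνβα, one_smul, one_smul]
      have hmem : μ*(p - β*m) + ν*(α*m - p) ∈ S' := by
        refine ⟨μ • (x - β • y), hC'sc μ hμ0 _ hβmem,
          ν • (α • y - x), hC'sc ν hν0 _ hαmem, hdec, ?_⟩
        rw [real_inner_smul_right, real_inner_smul_right, inner_sub_right,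
          inner_sub_right, real_inner_smul_right, real_inner_smul_right, hxe, hye]
      have hbase : baseNorm C' e' (T v) ≤ μ*(p - β*m) + ν*(α*m - p) := by
        rw [hbnS']
        exact csInf_le hbdd' hmem
      have hsum : 0 < α + β := by linarith
      have key1 : ((α-1)*(p-β*m) + (1-β)*(α*m-p)) * (α+β) ≤ (p+m) * ((α-β)*(α-β)) := by
        nlinarith [mul_nonneg (mul_nonneg hβ0 (by linarith : (0:ℝ) ≤ α - 1))
            (by linarith : (0:ℝ) ≤ α*m - p),
          mul_nonneg (mul_nonneg (by linarith : (0:ℝ) ≤ α) (by linarith : (0:ℝ) ≤ 1 - β))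
            hpβm.le]
      have hstep1 : μ*(p - β*m) + ν*(α*m - p) ≤ (p+m) * ((α-β)/(α+β)) := by
        rw [hμdef, hνdef]
        have h2 : (α-1)/(α-β)*(p-β*m) + (1-β)/(α-β)*(α*m-p)
            = ((α-1)*(p-β*m) + (1-β)*(α*m-p)) / (α-β) := by ring
        rw [h2, div_le_iff₀ hαβ']
        have h3 : (p+m) * ((α-β)/(α+β)) * (α-β) = (p+m)*((α-β)*(α-β))/(α+β) := by ring
        rw [h3, le_div_iff₀ hsum]
        exact key1
      have hstep2 : (p+m) * ((α-β)/(α+β)) ≤ (p+m) * ((α*γ-1)/(α*γ+1)) := by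
        apply mul_le_mul_of_nonneg_left _ (by linarith : (0:ℝ) ≤ p + m)
        rw [div_le_div_iff₀ hsum (by nlinarith : (0:ℝ) < α*γ+1)]
        nlinarith [mul_nonneg (by linarith : (0:ℝ) ≤ α) (by linarith : (0:ℝ) ≤ γ*β - 1)]
      have hstep3 : (p+m) * ((α*γ-1)/(α*γ+1)) ≤ (p+m) * tanhHalf (projDiam C C' T) :=
        mul_le_mul_of_nonneg_left htt (by linarith)
      calc baseNorm C' e' (T v) ≤ μ*(p - β*m) + ν*(α*m - p) := hbase
      _ ≤ (p+m) * ((α-β)/(α+β)) := hstep1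
      _ ≤ (p+m) * ((α*γ-1)/(α*γ+1)) := hstep2
      _ ≤ (p+m) * tanhHalf (projDiam C C' T) := hstep3
      _ = r * tanhHalf (projDiam C C' T) := by rw [hr]
  -- assemble
  obtain ⟨r₀, hr₀⟩ := id hSne
  have ht0 : 0 ≤ tanhHalf (projDiam C C' T) := (key r₀ hr₀).1
  rcases ht0.eq_or_lt with heq | hlt
  · have h1 := (key r₀ hr₀).2
    rw [← heq, mul_zero] at h1
    calc baseNorm C' e' (T v) ≤ 0 := h1
    _ = baseNorm C e v * tanhHalf (projDiam C C' T) := by rw [← heq, mul_zero]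
  · have hle : baseNorm C' e' (T v) / tanhHalf (projDiam C C' T) ≤ sInf S :=
      le_csInf hSne (fun r hr => (div_le_iff₀ hlt).mpr ((key r hr).2))
    calc baseNorm C' e' (T v)
        = baseNorm C' e' (T v) / tanhHalf (projDiam C C' T) * tanhHalf (projDiam C C' T) := by
          field_simp
    _ ≤ sInf S * tanhHalf (projDiam C C' T) :=
        mul_le_mul_of_nonneg_right hle ht0
    _ = baseNorm C e v * tanhHalf (projDiam C C' T) := by rw [hbnS]


end
end

section
/- (Base norm contraction coefficient.) Let C ⊆ V and C' ⊆ V' be proper cones with bases B = C ∩ {v | ⟨e,v⟩ = 1} and B' = C' ∩ {v' | ⟨e',v'⟩ = 1}, and let T : V → V' be any linear map. Then sup_{v₁ ≠ v₂ ∈ B} ‖T v₁ − T v₂‖_{B'} / ‖v₁ − v₂‖_B = (1/2) · sup_{v₁, v₂ ∈ ext(B)} ‖T v₁ − T v₂‖_{B'}, where ext(B) denotes the set of extreme points of B; moreover the supremum on the right-hand side may equivalently be taken over all v₁, v₂ ∈ B. -/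
noncomputable section

variable {V : Type*} [NormedAddCommGroup V] [InnerProductSpace ℝ V]

variable {V' : Type*} [NormedAddCommGroup V'] [InnerProductSpace ℝ V']

namespace BNC

variable {W : Type*} [NormedAddCommGroup W] [InnerProductSpace ℝ W]

/-- The decomposition set underlying `baseNorm`. -/
def bnSet (C : Set W) (e v : W) : Set ℝ :=
  {r : ℝ | ∃ cp ∈ C, ∃ cm ∈ C, v = cp - cm ∧ r = (inner ℝ e cp : ℝ) + (inner ℝ e cm : ℝ)}

lemma baseNorm_eq (C : Set W) (e v : W) : baseNorm C e v = sInf (bnSet C e v) := rfl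

lemma zero_mem {C : Set W} (hC : IsProperCone C) : (0 : W) ∈ C := by
  have h := hC.2.2.2.1
  have h0 : (0 : W) ∈ C ∩ (-C) := by rw [h]; rfl
  exact h0.1

lemma add_mem {C : Set W} (hC : IsProperCone C) {a b : W} (ha : a ∈ C) (hb : b ∈ C) :
    a + b ∈ C := by
  have h := hC.2.1 ha hb (by norm_num : (0:ℝ) ≤ 1/2) (by norm_num : (0:ℝ) ≤ 1/2) (by norm_num)
  have h2 := hC.2.2.1 2 (by norm_num) _ h
  convert h2 using 1
  rw [smul_add, smul_smul, smul_smul]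
  norm_num

lemma exists_decomp {C : Set W} (hC : IsProperCone C) (v : W) :
    ∃ cp ∈ C, ∃ cm ∈ C, v = cp - cm := by
  let p : Submodule ℝ W :=
    { carrier := {v : W | ∃ cp ∈ C, ∃ cm ∈ C, v = cp - cm}
      add_mem' := by
        rintro a b ⟨ap, hap, am, ham, rfl⟩ ⟨bp, hbp, bm, hbm, rfl⟩
        exact ⟨ap + bp, add_mem hC hap hbp, am + bm, add_mem hC ham hbm, by abel⟩
      zero_mem' := ⟨0, zero_mem hC, 0, zero_mem hC, by simp⟩
      smul_mem' := by
        rintro r a ⟨ap, hap, am, ham, rfl⟩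
        rcases le_or_gt 0 r with hr | hr
        · exact ⟨r • ap, hC.2.2.1 r hr _ hap, r • am, hC.2.2.1 r hr _ ham, by rw [smul_sub]⟩
        · refine ⟨(-r) • am, hC.2.2.1 (-r) (by linarith) _ ham,
            (-r) • ap, hC.2.2.1 (-r) (by linarith) _ hap, ?_⟩
          rw [smul_sub, neg_smul, neg_smul]
          abel }
  have htop : (⊤ : Submodule ℝ W) ≤ p := by
    rw [← hC.2.2.2.2]
    exact Submodule.span_le.2 (fun c hc => ⟨c, hc, 0, zero_mem hC, by simp⟩)
  exact htop Submodule.mem_top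

lemma bnSet_nonempty {C : Set W} (hC : IsProperCone C) (e v : W) :
    (bnSet C e v).Nonempty := by
  obtain ⟨cp, hcp, cm, hcm, hd⟩ := exists_decomp hC v
  exact ⟨_, cp, hcp, cm, hcm, hd, rfl⟩

lemma eps_bound {C : Set W} {e : W} (he : e ∈ interior (dualConeSet C)) :
    ∃ ε : ℝ, 0 < ε ∧ ∀ c ∈ C, ε * ‖c‖ ≤ (inner ℝ e c : ℝ) := by
  rcases Metric.isOpen_iff.1 isOpen_interior e he with ⟨δ, hδ, hball⟩
  refine ⟨δ / 2, by linarith, fun c hc => ?_⟩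
  rcases eq_or_ne c 0 with rfl | hc0
  · have : (0:ℝ) ≤ inner ℝ e (0:W) := (interior_subset he) 0 hc
    simpa using this
  · have hcnorm : 0 < ‖c‖ := norm_pos_iff.2 hc0
    have hmem : e - (δ / 2) • ‖c‖⁻¹ • c ∈ dualConeSet C := by
      apply interior_subset
      apply hball
      rw [Metric.mem_ball, dist_eq_norm]
      have h1 : e - (δ / 2) • ‖c‖⁻¹ • c - e = -((δ / 2) • ‖c‖⁻¹ • c) := by abel
      rw [h1, norm_neg, norm_smul, norm_smul, norm_inv, norm_norm,
        Real.norm_of_nonneg (by linarith : (0:ℝ) ≤ δ / 2),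
        inv_mul_cancel₀ (ne_of_gt hcnorm)]
      linarith
    have h2 := hmem c hc
    rw [inner_sub_left, real_inner_smul_left, real_inner_smul_left,
      real_inner_self_eq_norm_mul_norm] at h2
    have h3 : ‖c‖⁻¹ * (‖c‖ * ‖c‖) = ‖c‖ := by field_simp
    rw [h3] at h2
    linarith

lemma bnSet_lb {C : Set W} {e : W} {ε : ℝ} (hεC : ∀ c ∈ C, ε * ‖c‖ ≤ (inner ℝ e c : ℝ))
    (hε : 0 ≤ ε) (v : W) : ∀ r ∈ bnSet C e v, ε * ‖v‖ ≤ r := by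
  rintro r ⟨cp, hcp, cm, hcm, rfl, rfl⟩
  have h1 := hεC cp hcp
  have h2 := hεC cm hcm
  have h3 : ‖cp - cm‖ ≤ ‖cp‖ + ‖cm‖ := norm_sub_le _ _
  nlinarith [norm_nonneg (cp - cm)]

lemma bnSet_bddBelow {C : Set W} {e : W} (he : e ∈ interior (dualConeSet C)) (v : W) :
    BddBelow (bnSet C e v) := by
  refine ⟨0, ?_⟩
  rintro r ⟨cp, hcp, cm, hcm, rfl, rfl⟩
  have h1 := (interior_subset he) cp hcp
  have h2 := (interior_subset he) cm hcm
  positivity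

lemma baseNorm_nonneg {C : Set W} (hC : IsProperCone C) {e : W}
    (he : e ∈ interior (dualConeSet C)) (v : W) : 0 ≤ baseNorm C e v := by
  rw [baseNorm_eq]
  apply le_csInf (bnSet_nonempty hC e v)
  rintro r ⟨cp, hcp, cm, hcm, rfl, rfl⟩
  have h1 := (interior_subset he) cp hcp
  have h2 := (interior_subset he) cm hcm
  positivity

lemma baseNorm_le {C : Set W} {e : W} (he : e ∈ interior (dualConeSet C)) {v r : W → ℝ}
    : True := trivial

lemma baseNorm_le_of_mem {C : Set W} {e : W} (he : e ∈ interior (dualConeSet C)) {v : W}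
    {r : ℝ} (hr : r ∈ bnSet C e v) : baseNorm C e v ≤ r :=
  csInf_le (bnSet_bddBelow he v) hr

lemma le_baseNorm {C : Set W} (hC : IsProperCone C) {e : W} {ε : ℝ}
    (hεC : ∀ c ∈ C, ε * ‖c‖ ≤ (inner ℝ e c : ℝ)) (hε : 0 ≤ ε) (v : W) :
    ε * ‖v‖ ≤ baseNorm C e v :=
  le_csInf (bnSet_nonempty hC e v) (bnSet_lb hεC hε v)

lemma baseNorm_zero {C : Set W} (hC : IsProperCone C) {e : W}
    (he : e ∈ interior (dualConeSet C)) : baseNorm C e (0 : W) = 0 := by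
  refine le_antisymm ?_ (baseNorm_nonneg hC he 0)
  have h0 : (0:ℝ) ∈ bnSet C e (0:W) := ⟨0, zero_mem hC, 0, zero_mem hC, by simp, by simp⟩
  exact baseNorm_le_of_mem he h0

lemma baseNorm_add_le {C : Set W} (hC : IsProperCone C) {e : W}
    (he : e ∈ interior (dualConeSet C)) (a b : W) :
    baseNorm C e (a + b) ≤ baseNorm C e a + baseNorm C e b := by
  have step : ∀ ra ∈ bnSet C e a, ∀ rb ∈ bnSet C e b, baseNorm C e (a + b) ≤ ra + rb := by
    rintro ra ⟨ap, hap, am, ham, rfl, rfl⟩ rb ⟨bp, hbp, bm, hbm, rfl, rfl⟩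
    refine baseNorm_le_of_mem he ⟨ap + bp, add_mem hC hap hbp, am + bm, add_mem hC ham hbm,
      by abel, ?_⟩
    rw [inner_add_right, inner_add_right]
    ring
  have h1 : ∀ ra ∈ bnSet C e a, baseNorm C e (a + b) - ra ≤ baseNorm C e b := by
    intro ra hra
    exact le_csInf (bnSet_nonempty hC e b) (fun rb hrb => by linarith [step ra hra rb hrb])
  have h2 : baseNorm C e (a + b) - baseNorm C e b ≤ baseNorm C e a :=
    le_csInf (bnSet_nonempty hC e a) (fun ra hra => by linarith [h1 ra hra])
  linarith

lemma baseNorm_neg {C : Set W} (e : W) (v : W) : baseNorm C e (-v) = baseNorm C e v := by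
  unfold baseNorm
  congr 1
  ext r
  constructor
  · rintro ⟨cp, hcp, cm, hcm, hv, rfl⟩
    exact ⟨cm, hcm, cp, hcp, by rw [eq_comm, ← neg_eq_iff_eq_neg] at hv; rw [← hv]; abel, by ring⟩
  · rintro ⟨cp, hcp, cm, hcm, hv, rfl⟩
    exact ⟨cm, hcm, cp, hcp, by rw [hv]; abel, by ring⟩

lemma baseNorm_smul_le {C : Set W} (hC : IsProperCone C) {e : W}
    (he : e ∈ interior (dualConeSet C)) {t : ℝ} (ht : 0 ≤ t) (v : W) :
    baseNorm C e (t • v) ≤ t * baseNorm C e v := by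
  have step : ∀ r ∈ bnSet C e v, baseNorm C e (t • v) ≤ t * r := by
    rintro r ⟨cp, hcp, cm, hcm, rfl, rfl⟩
    refine baseNorm_le_of_mem he ⟨t • cp, hC.2.2.1 t ht _ hcp, t • cm, hC.2.2.1 t ht _ hcm,
      by rw [smul_sub], ?_⟩
    rw [real_inner_smul_right, real_inner_smul_right]
    ring
  rcases eq_or_lt_of_le ht with rfl | ht'
  · rw [zero_smul, baseNorm_zero hC he, zero_mul]
  · have h1 : baseNorm C e (t • v) / t ≤ baseNorm C e v := by
      apply le_csInf (bnSet_nonempty hC e v)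
      intro r hr
      rw [div_le_iff₀ ht']
      calc baseNorm C e (t • v) ≤ t * r := step r hr
        _ = r * t := by ring
    calc baseNorm C e (t • v) = (baseNorm C e (t • v) / t) * t := by field_simp
      _ ≤ baseNorm C e v * t := by
          apply mul_le_mul_of_nonneg_right h1 (le_of_lt ht')
      _ = t * baseNorm C e v := by ring

lemma baseNorm_sub_le {C : Set W} (hC : IsProperCone C) {e : W}
    (he : e ∈ interior (dualConeSet C)) (a b : W) :
    baseNorm C e a - baseNorm C e b ≤ baseNorm C e (a - b) := by
  have h := baseNorm_add_le hC he b (a - b)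
  rw [add_sub_cancel] at h
  linarith

lemma baseNorm_bound {C : Set W} (hC : IsProperCone C) {e : W}
    (he : e ∈ interior (dualConeSet C)) [FiniteDimensional ℝ W] :
    ∃ K : ℝ, 0 ≤ K ∧ ∀ w : W, baseNorm C e w ≤ K * ‖w‖ := by
  -- interior of C is nonempty
  have haff : affineSpan ℝ C = ⊤ := by
    have h0 : (0:W) ∈ C := zero_mem hC
    have hvs : vectorSpan ℝ C = ⊤ := by
      rw [vectorSpan_def]
      rw [eq_top_iff, ← hC.2.2.2.2]
      apply Submodule.span_le.2
      intro c hc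
      apply Submodule.subset_span
      exact ⟨c, hc, 0, h0, by simp⟩
    exact (AffineSubspace.affineSpan_eq_top_iff_vectorSpan_eq_top_of_nonempty ℝ W W ⟨0, h0⟩).2 hvs
  have hint : (interior C).Nonempty := (hC.2.1.interior_nonempty_iff_affineSpan_eq_top).2 haff
  obtain ⟨x₀, hx₀⟩ := hint
  rcases Metric.isOpen_iff.1 isOpen_interior x₀ hx₀ with ⟨δ, hδ, hball⟩
  have hx₀C : x₀ ∈ C := interior_subset hx₀
  have hex₀ : 0 ≤ (inner ℝ e x₀ : ℝ) := (interior_subset he) x₀ hx₀C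
  refine ⟨4 * (inner ℝ e x₀ : ℝ) / δ + ‖e‖, by positivity, fun w => ?_⟩
  rcases eq_or_ne w 0 with rfl | hw0
  · rw [baseNorm_zero hC he]; simp
  · have hwnorm : 0 < ‖w‖ := norm_pos_iff.2 hw0
    set s : ℝ := δ / 2 * ‖w‖⁻¹ with hs_def
    have hs : 0 < s := by positivity
    have hu : x₀ + s • w ∈ C := by
      apply interior_subset
      apply hball
      rw [Metric.mem_ball, dist_eq_norm]
      have h1 : x₀ + s • w - x₀ = s • w := by abel
      rw [h1, norm_smul, Real.norm_of_nonneg (le_of_lt hs), hs_def]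
      rw [mul_assoc, inv_mul_cancel₀ (ne_of_gt hwnorm)]
      linarith
    have hdecomp : w = s⁻¹ • (x₀ + s • w) - s⁻¹ • x₀ := by
      rw [smul_add, smul_smul, inv_mul_cancel₀ (ne_of_gt hs), one_smul]
      abel
    have hmem : (inner ℝ e (s⁻¹ • (x₀ + s • w)) : ℝ) + (inner ℝ e (s⁻¹ • x₀) : ℝ)
        ∈ bnSet C e w :=
      ⟨_, hC.2.2.1 s⁻¹ (by positivity) _ hu, _, hC.2.2.1 s⁻¹ (by positivity) _ hx₀C,
        hdecomp, rfl⟩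
    have hle := baseNorm_le_of_mem he hmem
    have hCS : (inner ℝ e w : ℝ) ≤ ‖e‖ * ‖w‖ := real_inner_le_norm e w
    have hval : (inner ℝ e (s⁻¹ • (x₀ + s • w)) : ℝ) + (inner ℝ e (s⁻¹ • x₀) : ℝ)
        = s⁻¹ * (2 * (inner ℝ e x₀ : ℝ)) + (inner ℝ e w : ℝ) := by
      rw [real_inner_smul_right, real_inner_smul_right, inner_add_right,
        real_inner_smul_right]
      field_simp
      ring
    have hsinv : s⁻¹ = 2 * ‖w‖ / δ := by
      rw [hs_def]
      field_simp
    rw [hval, hsinv] at hle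
    calc baseNorm C e w ≤ 2 * ‖w‖ / δ * (2 * (inner ℝ e x₀ : ℝ)) + (inner ℝ e w : ℝ) := hle
      _ ≤ 4 * (inner ℝ e x₀ : ℝ) / δ * ‖w‖ + ‖e‖ * ‖w‖ := by
          have : 2 * ‖w‖ / δ * (2 * (inner ℝ e x₀ : ℝ)) = 4 * (inner ℝ e x₀ : ℝ) / δ * ‖w‖ := by
            field_simp; ring
          linarith
      _ = (4 * (inner ℝ e x₀ : ℝ) / δ + ‖e‖) * ‖w‖ := by ring

lemma baseNorm_continuous {C : Set W} (hC : IsProperCone C) {e : W}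
    (he : e ∈ interior (dualConeSet C)) [FiniteDimensional ℝ W] :
    Continuous (baseNorm C e) := by
  obtain ⟨K, hK0, hK⟩ := baseNorm_bound hC he
  have hlip : LipschitzWith (Real.toNNReal K) (baseNorm C e) := by
    apply LipschitzWith.of_dist_le_mul
    intro a b
    rw [Real.dist_eq, dist_eq_norm, Real.coe_toNNReal K hK0, abs_sub_le_iff]
    constructor
    · calc baseNorm C e a - baseNorm C e b ≤ baseNorm C e (a - b) := baseNorm_sub_le hC he a b
        _ ≤ K * ‖a - b‖ := hK _
    · calc baseNorm C e b - baseNorm C e a ≤ baseNorm C e (b - a) := baseNorm_sub_le hC he b a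
        _ ≤ K * ‖b - a‖ := hK _
        _ = K * ‖a - b‖ := by rw [norm_sub_rev]
  exact hlip.continuous

end BNC

/-- **Base norm contraction coefficient.** -/
theorem baseNorm_contraction_coefficient
    {V : Type*} [NormedAddCommGroup V] [InnerProductSpace ℝ V] [FiniteDimensional ℝ V]
    {V' : Type*} [NormedAddCommGroup V'] [InnerProductSpace ℝ V'] [FiniteDimensional ℝ V']
    (C : Set V) (C' : Set V') (hC : IsProperCone C) (hC' : IsProperCone C')
    (e : V) (he : e ∈ interior (dualConeSet C))
    (e' : V') (he' : e' ∈ interior (dualConeSet C'))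
    (B : Set V) (hB : B = C ∩ {v : V | (inner ℝ e v : ℝ) = 1})
    (B' : Set V') (hB' : B' = C' ∩ {v : V' | (inner ℝ e' v : ℝ) = 1})
    (T : V →ₗ[ℝ] V') :
    sSup {r : ℝ | ∃ v₁ ∈ B, ∃ v₂ ∈ B, v₁ ≠ v₂ ∧
        r = baseNorm C' e' (T v₁ - T v₂) / baseNorm C e (v₁ - v₂)}
      = (1 / 2) * sSup {r : ℝ | ∃ v₁ ∈ Set.extremePoints ℝ B, ∃ v₂ ∈ Set.extremePoints ℝ B,
          r = baseNorm C' e' (T v₁ - T v₂)} ∧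
    sSup {r : ℝ | ∃ v₁ ∈ Set.extremePoints ℝ B, ∃ v₂ ∈ Set.extremePoints ℝ B,
          r = baseNorm C' e' (T v₁ - T v₂)}
      = sSup {r : ℝ | ∃ v₁ ∈ B, ∃ v₂ ∈ B, r = baseNorm C' e' (T v₁ - T v₂)} := by
  classical
  obtain ⟨ε, hε, hεC⟩ := BNC.eps_bound he
  obtain ⟨K, hK0, hK⟩ := BNC.baseNorm_bound hC' he'
  have hbn'0 : baseNorm C' e' (0 : V') = 0 := BNC.baseNorm_zero hC' he'
  have hbn'nonneg : ∀ w : V', 0 ≤ baseNorm C' e' w := BNC.baseNorm_nonneg hC' he'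
  have hBC : B ⊆ C := by rw [hB]; exact Set.inter_subset_left
  have hB1 : ∀ v ∈ B, (inner ℝ e v : ℝ) = 1 := by
    intro v hv; rw [hB] at hv; exact hv.2
  -- B is convex, closed, bounded, compact
  have hBconv : Convex ℝ B := by
    rw [hB]
    intro x hx y hy a b ha hb hab
    refine ⟨hC.2.1 hx.1 hy.1 ha hb hab, ?_⟩
    simp only [Set.mem_setOf_eq] at hx hy ⊢
    rw [inner_add_right, real_inner_smul_right, real_inner_smul_right, hx.2, hy.2]
    simpa using hab
  have hBclosed : IsClosed B := by
    rw [hB]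
    exact hC.1.inter
      (isClosed_eq (Continuous.inner continuous_const continuous_id) continuous_const)
  have hBnorm : ∀ v ∈ B, ‖v‖ ≤ ε⁻¹ := by
    intro v hv
    have h1 := hεC v (hBC hv)
    rw [hB1 v hv] at h1
    calc ‖v‖ = ε⁻¹ * (ε * ‖v‖) := by field_simp
      _ ≤ ε⁻¹ * 1 := mul_le_mul_of_nonneg_left h1 (inv_pos.2 hε).le
      _ = ε⁻¹ := mul_one _
  have hBbounded : Bornology.IsBounded B := by
    apply Bornology.IsBounded.subset (Metric.isBounded_closedBall (x := (0:V)) (r := ε⁻¹))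
    intro v hv
    rw [Metric.mem_closedBall, dist_zero_right]
    exact hBnorm v hv
  have hBcompact : IsCompact B := Metric.isCompact_of_isClosed_isBounded hBclosed hBbounded
  -- continuity and convexity of the numerator function
  have hTcont : Continuous T := T.continuous_of_finiteDimensional
  have hbn'cont : Continuous (baseNorm C' e') := BNC.baseNorm_continuous hC' he'
  have hconv_sum : ∀ (x y : V') (θ σ : ℝ), 0 ≤ θ → 0 ≤ σ → θ + σ = 1 →
      baseNorm C' e' (θ • x + σ • y) ≤ θ * baseNorm C' e' x + σ * baseNorm C' e' y := by
    intro x y θ σ hθ hσ hθσ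
    have h1 := BNC.baseNorm_smul_le hC' he' hθ x
    have h2 := BNC.baseNorm_smul_le hC' he' hσ y
    have h3 := BNC.baseNorm_add_le hC' he' (θ • x) (σ • y)
    linarith
  have hconv1 : ∀ w : V, ConvexOn ℝ (Set.univ : Set V)
      (fun v => baseNorm C' e' (T v - T w)) := by
    intro w
    refine ⟨convex_univ, fun a _ b _ θ σ hθ hσ hθσ => ?_⟩
    have hid : T (θ • a + σ • b) - T w = θ • (T a - T w) + σ • (T b - T w) := by
      have h3 : θ • (T a - T w) + σ • (T b - T w)
          = θ • T a + σ • T b - (θ + σ) • T w := by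
        rw [smul_sub, smul_sub, add_smul]; abel
      rw [h3, hθσ, one_smul, map_add, map_smul, map_smul]
    simp only
    rw [hid]
    exact hconv_sum _ _ θ σ hθ hσ hθσ
  have hconv2 : ∀ v : V, ConvexOn ℝ (Set.univ : Set V)
      (fun w => baseNorm C' e' (T v - T w)) := by
    intro v
    refine ⟨convex_univ, fun a _ b _ θ σ hθ hσ hθσ => ?_⟩
    have hid : T v - T (θ • a + σ • b) = θ • (T v - T a) + σ • (T v - T b) := by
      have h3 : θ • (T v - T a) + σ • (T v - T b)
          = (θ + σ) • T v - (θ • T a + σ • T b) := by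
        rw [smul_sub, smul_sub, add_smul]; abel
      rw [h3, hθσ, one_smul, map_add, map_smul, map_smul]
    simp only
    rw [hid]
    exact hconv_sum _ _ θ σ hθ hσ hθσ
  have hfcont1 : ∀ w : V, Continuous (fun v => baseNorm C' e' (T v - T w)) :=
    fun w => hbn'cont.comp (hTcont.sub continuous_const)
  have hfcont2 : ∀ v : V, Continuous (fun w => baseNorm C' e' (T v - T w)) :=
    fun v => hbn'cont.comp (continuous_const.sub hTcont)
  by_cases hBne : B.Nonempty
  · -- main case
    have hKM : closure (convexHull ℝ (Set.extremePoints ℝ B)) = B :=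
      closure_convexHull_extremePoints hBcompact hBconv
    have hEne : (Set.extremePoints ℝ B).Nonempty := hBcompact.extremePoints_nonempty hBne
    have hEB : Set.extremePoints ℝ B ⊆ B := extremePoints_subset
    set S₁ : Set ℝ := {r : ℝ | ∃ v₁ ∈ B, ∃ v₂ ∈ B, v₁ ≠ v₂ ∧
        r = baseNorm C' e' (T v₁ - T v₂) / baseNorm C e (v₁ - v₂)} with hS₁def
    set S₂ : Set ℝ := {r : ℝ | ∃ v₁ ∈ Set.extremePoints ℝ B, ∃ v₂ ∈ Set.extremePoints ℝ B,
        r = baseNorm C' e' (T v₁ - T v₂)} with hS₂def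
    set S₃ : Set ℝ := {r : ℝ | ∃ v₁ ∈ B, ∃ v₂ ∈ B,
        r = baseNorm C' e' (T v₁ - T v₂)} with hS₃def
    have h0S₂ : (0:ℝ) ∈ S₂ := by
      obtain ⟨x, hx⟩ := hEne
      exact ⟨x, hx, x, hx, by rw [sub_self, hbn'0]⟩
    have hTv : ∀ v : V, ‖T v‖ ≤ ‖LinearMap.toContinuousLinearMap T‖ * ‖v‖ := by
      intro v
      have h := (LinearMap.toContinuousLinearMap T).le_opNorm v
      rwa [show (LinearMap.toContinuousLinearMap T) v = T v from
        congrFun (LinearMap.coe_toContinuousLinearMap' T) v] at h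
    have hfB : ∀ v₁ ∈ B, ∀ v₂ ∈ B, baseNorm C' e' (T v₁ - T v₂)
        ≤ K * (‖LinearMap.toContinuousLinearMap T‖ * ε⁻¹
            + ‖LinearMap.toContinuousLinearMap T‖ * ε⁻¹) := by
      intro v₁ hv₁ v₂ hv₂
      calc baseNorm C' e' (T v₁ - T v₂) ≤ K * ‖T v₁ - T v₂‖ := hK _
        _ ≤ K * (‖T v₁‖ + ‖T v₂‖) :=
            mul_le_mul_of_nonneg_left (norm_sub_le _ _) hK0
        _ ≤ K * (‖LinearMap.toContinuousLinearMap T‖ * ε⁻¹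
            + ‖LinearMap.toContinuousLinearMap T‖ * ε⁻¹) := by
            apply mul_le_mul_of_nonneg_left _ hK0
            have h1 := (hTv v₁).trans
              (mul_le_mul_of_nonneg_left (hBnorm v₁ hv₁) (norm_nonneg _))
            have h2 := (hTv v₂).trans
              (mul_le_mul_of_nonneg_left (hBnorm v₂ hv₂) (norm_nonneg _))
            linarith
    have hS₂bdd : BddAbove S₂ := by
      refine ⟨K * (‖LinearMap.toContinuousLinearMap T‖ * ε⁻¹
          + ‖LinearMap.toContinuousLinearMap T‖ * ε⁻¹), ?_⟩
      rintro r ⟨v₁, hv₁, v₂, hv₂, rfl⟩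
      exact hfB v₁ (hEB hv₁) v₂ (hEB hv₂)
    have hM₂0 : 0 ≤ sSup S₂ := le_csSup hS₂bdd h0S₂
    have hS₂le : ∀ x ∈ Set.extremePoints ℝ B, ∀ y ∈ Set.extremePoints ℝ B,
        baseNorm C' e' (T x - T y) ≤ sSup S₂ :=
      fun x hx y hy => le_csSup hS₂bdd ⟨x, hx, y, hy, rfl⟩
    have stepA : ∀ x ∈ Set.extremePoints ℝ B, ∀ w ∈ B,
        baseNorm C' e' (T x - T w) ≤ sSup S₂ := by
      intro x hx w hw
      have hhull : convexHull ℝ (Set.extremePoints ℝ B)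
          ⊆ {u : V | baseNorm C' e' (T x - T u) ≤ sSup S₂} := by
        intro u hu
        obtain ⟨y, hy, hfy⟩ := (hconv2 x).exists_ge_of_mem_convexHull
          (Set.subset_univ (Set.extremePoints ℝ B)) hu
        exact le_trans hfy (hS₂le x hx y hy)
      have hclosed : IsClosed {u : V | baseNorm C' e' (T x - T u) ≤ sSup S₂} :=
        isClosed_le (hfcont2 x) continuous_const
      have hsub := closure_minimal hhull hclosed
      rw [hKM] at hsub
      exact hsub hw
    have key1 : ∀ v ∈ B, ∀ w ∈ B, baseNorm C' e' (T v - T w) ≤ sSup S₂ := by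
      intro v hv w hw
      have hhull : convexHull ℝ (Set.extremePoints ℝ B)
          ⊆ {u : V | baseNorm C' e' (T u - T w) ≤ sSup S₂} := by
        intro u hu
        obtain ⟨y, hy, hfy⟩ := (hconv1 w).exists_ge_of_mem_convexHull
          (Set.subset_univ (Set.extremePoints ℝ B)) hu
        exact le_trans hfy (stepA y hy w hw)
      have hclosed : IsClosed {u : V | baseNorm C' e' (T u - T w) ≤ sSup S₂} :=
        isClosed_le (hfcont1 w) continuous_const
      have hsub := closure_minimal hhull hclosed
      rw [hKM] at hsub
      exact hsub hv
    -- second equality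
    have heq2 : sSup S₂ = sSup S₃ := by
      refine le_antisymm (csSup_le_csSup ?_ ⟨0, h0S₂⟩ ?_) ?_
      · exact ⟨sSup S₂, by rintro r ⟨v₁, h1, v₂, h2, rfl⟩; exact key1 _ h1 _ h2⟩
      · rintro r ⟨v₁, h1, v₂, h2, rfl⟩
        exact ⟨v₁, hEB h1, v₂, hEB h2, rfl⟩
      · exact Real.sSup_le (by rintro r ⟨v₁, h1, v₂, h2, rfl⟩; exact key1 _ h1 _ h2) hM₂0
    -- first equality
    have hdpos : ∀ x ∈ B, ∀ y ∈ B, x ≠ y → 0 < baseNorm C e (x - y) := by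
      intro x hx y hy hxy
      have h1 := BNC.le_baseNorm hC hεC hε.le (x - y)
      have h2 : 0 < ‖x - y‖ := by rw [norm_pos_iff, sub_ne_zero]; exact hxy
      nlinarith
    have hS₁ub : ∀ r ∈ S₁, r ≤ 1 / 2 * sSup S₂ := by
      rintro r ⟨v₁, hv₁, v₂, hv₂, hne, rfl⟩
      have hd := hdpos v₁ hv₁ v₂ hv₂ hne
      have hnum : ∀ rd ∈ BNC.bnSet C e (v₁ - v₂),
          baseNorm C' e' (T v₁ - T v₂) ≤ rd / 2 * sSup S₂ := by
        rintro rd ⟨cp, hcp, cm, hcm, hdec, rfl⟩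
        have hipm : (inner ℝ e cm : ℝ) = (inner ℝ e cp : ℝ) := by
          have hh : (inner ℝ e (v₁ - v₂) : ℝ) = (inner ℝ e cp : ℝ) - (inner ℝ e cm : ℝ) := by
            rw [hdec, inner_sub_right]
          rw [inner_sub_right, hB1 v₁ hv₁, hB1 v₂ hv₂] at hh
          linarith
        have ht0 : 0 ≤ (inner ℝ e cp : ℝ) := (interior_subset he) cp hcp
        rcases eq_or_lt_of_le ht0 with heq0 | htpos
        · exfalso
          have hcp0 : cp = 0 := by
            by_contra h
            have h1 := hεC cp hcp
            have h2 : 0 < ‖cp‖ := norm_pos_iff.2 h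
            nlinarith
          have hcm0 : cm = 0 := by
            by_contra h
            have h1 := hεC cm hcm
            have h2 : 0 < ‖cm‖ := norm_pos_iff.2 h
            rw [hipm] at h1
            nlinarith
          apply hne
          have hv12 : v₁ - v₂ = 0 := by rw [hdec, hcp0, hcm0, sub_zero]
          exact sub_eq_zero.1 hv12
        · set t : ℝ := (inner ℝ e cp : ℝ) with ht_def
          have hbpB : t⁻¹ • cp ∈ B := by
            rw [hB]
            refine ⟨hC.2.2.1 t⁻¹ (by positivity) _ hcp, ?_⟩
            simp only [Set.mem_setOf_eq]
            rw [real_inner_smul_right, ← ht_def, inv_mul_cancel₀ (ne_of_gt htpos)]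
          have hbmB : t⁻¹ • cm ∈ B := by
            rw [hB]
            refine ⟨hC.2.2.1 t⁻¹ (by positivity) _ hcm, ?_⟩
            simp only [Set.mem_setOf_eq]
            rw [real_inner_smul_right, hipm, inv_mul_cancel₀ (ne_of_gt htpos)]
          have hidT : T v₁ - T v₂ = t • (T (t⁻¹ • cp) - T (t⁻¹ • cm)) := by
            have hTT : T v₁ - T v₂ = T cp - T cm := by
              rw [← map_sub, hdec, map_sub]
            rw [hTT, map_smul, map_smul, smul_sub, smul_smul, smul_smul,
              mul_inv_cancel₀ (ne_of_gt htpos), one_smul, one_smul]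
          calc baseNorm C' e' (T v₁ - T v₂)
              = baseNorm C' e' (t • (T (t⁻¹ • cp) - T (t⁻¹ • cm))) := by rw [hidT]
            _ ≤ t * baseNorm C' e' (T (t⁻¹ • cp) - T (t⁻¹ • cm)) :=
                BNC.baseNorm_smul_le hC' he' htpos.le _
            _ ≤ t * sSup S₂ :=
                mul_le_mul_of_nonneg_left (key1 _ hbpB _ hbmB) htpos.le
            _ = ((inner ℝ e cp : ℝ) + (inner ℝ e cm : ℝ)) / 2 * sSup S₂ := by
                rw [hipm, ← ht_def]; ring
      rcases eq_or_lt_of_le hM₂0 with hM0 | hMpos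
      · have hf0 : baseNorm C' e' (T v₁ - T v₂) = 0 := by
          obtain ⟨rd, hrd⟩ := BNC.bnSet_nonempty hC e (v₁ - v₂)
          have h1 := hnum rd hrd
          rw [← hM0, mul_zero] at h1
          exact le_antisymm h1 (hbn'nonneg _)
        rw [hf0, zero_div]
        positivity
      · have hdlb : 2 * baseNorm C' e' (T v₁ - T v₂) / sSup S₂ ≤ baseNorm C e (v₁ - v₂) := by
          apply le_csInf (BNC.bnSet_nonempty hC e (v₁ - v₂))
          intro rd hrd
          have h1 := hnum rd hrd
          rw [div_le_iff₀ hMpos]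
          nlinarith
        rw [div_le_iff₀ hd]
        rw [div_le_iff₀ hMpos] at hdlb
        nlinarith
    have hS₁bdd : BddAbove S₁ := ⟨1 / 2 * sSup S₂, fun r hr => hS₁ub r hr⟩
    have hS₁nonneg : 0 ≤ sSup S₁ := by
      apply Real.sSup_nonneg
      rintro r ⟨v₁, h1, v₂, h2, hne, rfl⟩
      exact div_nonneg (hbn'nonneg _) (BNC.baseNorm_nonneg hC he _)
    have heq1le : sSup S₁ ≤ 1 / 2 * sSup S₂ := Real.sSup_le hS₁ub (by linarith)
    have heq1ge : 1 / 2 * sSup S₂ ≤ sSup S₁ := by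
      have hM₂le : sSup S₂ ≤ 2 * sSup S₁ := by
        apply Real.sSup_le _ (by linarith)
        rintro r ⟨x, hx, y, hy, rfl⟩
        rcases eq_or_ne x y with rfl | hxy
        · rw [sub_self, hbn'0]; linarith
        · have hd := hdpos x (hEB hx) y (hEB hy) hxy
          have hd2 : baseNorm C e (x - y) ≤ 2 := by
            have hmem : (inner ℝ e x : ℝ) + (inner ℝ e y : ℝ) ∈ BNC.bnSet C e (x - y) :=
              ⟨x, hBC (hEB hx), y, hBC (hEB hy), rfl, rfl⟩
            have h1 := BNC.baseNorm_le_of_mem he hmem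
            rw [hB1 x (hEB hx), hB1 y (hEB hy)] at h1
            linarith
          have hmemS₁ : baseNorm C' e' (T x - T y) / baseNorm C e (x - y) ∈ S₁ :=
            ⟨x, hEB hx, y, hEB hy, hxy, rfl⟩
          have h1 := le_csSup hS₁bdd hmemS₁
          have h2 : 0 ≤ baseNorm C' e' (T x - T y) / baseNorm C e (x - y) :=
            div_nonneg (hbn'nonneg _) hd.le
          calc baseNorm C' e' (T x - T y)
              = baseNorm C' e' (T x - T y) / baseNorm C e (x - y) * baseNorm C e (x - y) := by
                field_simp
            _ ≤ sSup S₁ * 2 := mul_le_mul h1 hd2 hd.le hS₁nonneg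
            _ = 2 * sSup S₁ := by ring
      linarith
    exact ⟨le_antisymm heq1le heq1ge, heq2⟩
  · -- B is empty
    have hBempty : B = ∅ := Set.not_nonempty_iff_eq_empty.1 hBne
    have hEempty : Set.extremePoints ℝ B = ∅ := by
      have h := extremePoints_subset (𝕜 := ℝ) (A := B)
      rw [hBempty] at h ⊢
      exact Set.subset_empty_iff.1 h
    have h1 : {r : ℝ | ∃ v₁ ∈ B, ∃ v₂ ∈ B, v₁ ≠ v₂ ∧
        r = baseNorm C' e' (T v₁ - T v₂) / baseNorm C e (v₁ - v₂)} = ∅ := by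
      rw [hBempty]; simp
    have h2 : {r : ℝ | ∃ v₁ ∈ Set.extremePoints ℝ B, ∃ v₂ ∈ Set.extremePoints ℝ B,
        r = baseNorm C' e' (T v₁ - T v₂)} = ∅ := by
      rw [hEempty]; simp
    have h3 : {r : ℝ | ∃ v₁ ∈ B, ∃ v₂ ∈ B, r = baseNorm C' e' (T v₁ - T v₂)} = ∅ := by
      rw [hBempty]; simp
    rw [h1, h2, h3, Real.sSup_empty]
    norm_num


end
end

section
/- (Negativity contraction under non-deterministic operations.) For i = 1,…,N let T_i : V → V_i be linear cone-preserving maps (T_i(C) ⊆ C_i) w.r.t. proper cones C ⊆ V and C_i ⊆ V_i with bases B = C ∩ {v | ⟨e,v⟩ = 1} and B_i = C_i ∩ {v | ⟨e_i,v⟩ = 1}, satisfying Σ_{i=1}^N ⟨e_i, T_i(b)⟩ ≤ 1 for all b ∈ B. Let ρ ∈ V be such that p_i := ⟨e_i, T_i(ρ)⟩ ≥ 0 for all i. Then for any elements ρ_i ∈ V_i satisfying T_i(ρ) = p_i·ρ_i whenever p_i > 0: Σ_{i=1}^N p_i · N_{B_i}(ρ_i) ≤ N_B(ρ) · tanh(max_i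 Δ(T_i)/4), where tanh(∞/4) := 1. -/
noncomputable section

variable {V : Type*} [NormedAddCommGroup V] [InnerProductSpace ℝ V]

variable {V' : Type*} [NormedAddCommGroup V'] [InnerProductSpace ℝ V']

namespace NegAux

open Real Pointwise

variable {V : Type*} [NormedAddCommGroup V] [InnerProductSpace ℝ V]

lemma cone_zero {C : Set V} (hC : IsProperCone C) : (0 : V) ∈ C := by
  have h := hC.2.2.2.1
  have h0 : (0 : V) ∈ ({0} : Set V) := rfl
  rw [← h] at h0
  exact h0.1

lemma cone_smul {C : Set V} (hC : IsProperCone C) {r : ℝ} (hr : 0 ≤ r) {x : V}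
    (hx : x ∈ C) : r • x ∈ C := hC.2.2.1 r hr x hx

lemma cone_add {C : Set V} (hC : IsProperCone C) {x y : V} (hx : x ∈ C) (hy : y ∈ C) :
    x + y ∈ C := by
  have h := hC.2.1 hx hy (by norm_num : (0:ℝ) ≤ 1/2) (by norm_num : (0:ℝ) ≤ 1/2)
    (by norm_num)
  have h2 := cone_smul hC (by norm_num : (0:ℝ) ≤ 2) h
  convert h2 using 1
  module

lemma cone_pointed {C : Set V} (hC : IsProperCone C) {x : V} (hx : x ∈ C) (hx' : -x ∈ C) :
    x = 0 := by
  have h := hC.2.2.2.1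
  have : x ∈ C ∩ (-C) := ⟨hx, by simpa [Set.mem_neg] using hx'⟩
  rw [h] at this
  exact this

lemma dual_nonneg {C : Set V} {e : V} (he : e ∈ interior (dualConeSet C)) {c : V}
    (hc : c ∈ C) : 0 ≤ (inner ℝ e c : ℝ) := interior_subset he c hc

lemma inner_pos {C : Set V} {e : V} (he : e ∈ interior (dualConeSet C)) {c : V}
    (hc : c ∈ C) (hc0 : c ≠ 0) : 0 < (inner ℝ e c : ℝ) := by
  obtain ⟨ε, hε, hball⟩ := Metric.isOpen_iff.mp isOpen_interior e he
  have hcn : 0 < ‖c‖ := norm_pos_iff.mpr hc0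
  set u := (ε / (2 * ‖c‖)) • c with hu
  have hun : ‖u‖ = ε / 2 := by
    rw [hu, norm_smul, Real.norm_eq_abs, abs_of_pos (by positivity)]
    field_simp
  have hmem : e - u ∈ dualConeSet C := by
    apply interior_subset (hball ?_)
    simp only [Metric.mem_ball, dist_eq_norm]
    rw [sub_sub_cancel_left, norm_neg, hun]
    linarith
  have h0 := hmem c hc
  rw [inner_sub_left] at h0
  have huc : (inner ℝ u c : ℝ) = (ε / (2 * ‖c‖)) * ‖c‖ ^ 2 := by
    rw [hu, real_inner_smul_left, real_inner_self_eq_norm_sq]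
  have : (inner ℝ u c : ℝ) > 0 := by
    rw [huc]; positivity
  linarith

lemma exists_decomp {C : Set V} (hC : IsProperCone C) (v : V) :
    ∃ cp ∈ C, ∃ cm ∈ C, v = cp - cm := by
  let M : Submodule ℝ V :=
    { carrier := {v | ∃ cp ∈ C, ∃ cm ∈ C, v = cp - cm}
      add_mem' := by
        rintro x y ⟨a, ha, b, hb, rfl⟩ ⟨c, hc, d, hd, rfl⟩
        exact ⟨a + c, cone_add hC ha hc, b + d, cone_add hC hb hd, by abel⟩
      zero_mem' := ⟨0, cone_zero hC, 0, cone_zero hC, by simp⟩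
      smul_mem' := by
        rintro r x ⟨a, ha, b, hb, rfl⟩
        rcases le_or_gt 0 r with h | h
        · exact ⟨r • a, cone_smul hC h ha, r • b, cone_smul hC h hb, by rw [smul_sub]⟩
        · refine ⟨(-r) • b, cone_smul hC (by linarith) hb, (-r) • a,
            cone_smul hC (by linarith) ha, ?_⟩
          module }
  have hle : Submodule.span ℝ C ≤ M :=
    Submodule.span_le.mpr fun c hc => ⟨c, hc, 0, cone_zero hC, (sub_zero c).symm⟩
  rw [hC.2.2.2.2] at hle
  exact hle (Submodule.mem_top)

lemma negativity_le {C : Set V} {e : V} (he : e ∈ interior (dualConeSet C))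
    {v cp cm : V} (hcp : cp ∈ C) (hcm : cm ∈ C) (h : v = cp - cm) :
    negativity C e v ≤ (inner ℝ e cm : ℝ) := by
  apply csInf_le
  · refine ⟨0, ?_⟩
    rintro r ⟨cp', _, cm', hcm', _, rfl⟩
    exact dual_nonneg he hcm'
  · exact ⟨cp, hcp, cm, hcm, h, rfl⟩

lemma negativity_nonneg {C : Set V} {e : V} (he : e ∈ interior (dualConeSet C)) (v : V) :
    0 ≤ negativity C e v := by
  apply Real.sInf_nonneg
  rintro r ⟨cp', _, cm', hcm', _, rfl⟩
  exact dual_nonneg he hcm'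

lemma negativity_smul {C : Set V} (hC : IsProperCone C) (e : V) {p : ℝ} (hp : 0 < p)
    (v : V) : negativity C e (p • v) = p * negativity C e v := by
  have hset : {r : ℝ | ∃ cp ∈ C, ∃ cm ∈ C, p • v = cp - cm ∧ r = (inner ℝ e cm : ℝ)} =
      p • {r : ℝ | ∃ cp ∈ C, ∃ cm ∈ C, v = cp - cm ∧ r = (inner ℝ e cm : ℝ)} := by
    ext r
    constructor
    · rintro ⟨cp, hcp, cm, hcm, hv, rfl⟩
      refine ⟨(inner ℝ e (p⁻¹ • cm) : ℝ), ⟨p⁻¹ • cp, cone_smul hC (by positivity) hcp,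
        p⁻¹ • cm, cone_smul hC (by positivity) hcm, ?_, rfl⟩, ?_⟩
      · have := congrArg (fun w => p⁻¹ • w) hv
        simpa [smul_sub, smul_smul, inv_mul_cancel₀ hp.ne'] using this
      · simp only [smul_eq_mul, real_inner_smul_right]
        field_simp
    · rintro ⟨r', ⟨cp, hcp, cm, hcm, hv, rfl⟩, rfl⟩
      exact ⟨p • cp, cone_smul hC hp.le hcp, p • cm, cone_smul hC hp.le hcm,
        by rw [hv, smul_sub], by simp [real_inner_smul_right, smul_eq_mul]⟩
  rw [negativity, negativity, hset, Real.sInf_smul_of_nonneg hp.le, smul_eq_mul]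

lemma supRatio_eq {C : Set V} (hC : IsProperCone C) {a b : V} (ha : a ∈ C) (hb : b ∈ C)
    (ha0 : a ≠ 0) (hne : supRatio C a b ≠ ⊤) :
    ∃ M : ℝ, supRatio C a b = (M : EReal) ∧ 0 < M ∧ M • b - a ∈ C := by
  set S := {l : ℝ | l • b - a ∈ C} with hS
  have hSne : S.Nonempty := by
    by_contra h
    rw [Set.not_nonempty_iff_eq_empty] at h
    apply hne
    rw [supRatio, ← hS, h]
    simp
  have hpos : ∀ l ∈ S, 0 < l := by
    intro l hl
    by_contra hneg
    push_neg at hneg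
    have h1 : (-l) • b ∈ C := cone_smul hC (by linarith) hb
    have h2 : (l • b - a) + (-l) • b ∈ C := cone_add hC hl h1
    have h3 : (l • b - a) + (-l) • b = -a := by module
    rw [h3] at h2
    exact ha0 (cone_pointed hC ha h2)
  have hbdd : BddBelow S := ⟨0, fun l hl => (hpos l hl).le⟩
  have hclosed : IsClosed S := by
    have : S = (fun l : ℝ => l • b - a) ⁻¹' C := rfl
    rw [this]
    exact hC.1.preimage ((continuous_id.smul continuous_const).sub continuous_const)
  have hM : sInf S ∈ S := hclosed.csInf_mem hSne hbdd
  refine ⟨sInf S, ?_, hpos _ hM, hM⟩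
  apply le_antisymm
  · exact sInf_le ⟨sInf S, hM, rfl⟩
  · apply le_sInf
    rintro x ⟨l, hl, rfl⟩
    exact EReal.coe_le_coe_iff.mpr (csInf_le hbdd hl)

lemma pair_ge_one {C : Set V} (hC : IsProperCone C) {a b : V} (ha : a ∈ C) (hb : b ∈ C)
    (hb0 : b ≠ 0) {l₁ l₂ : ℝ} (h1 : l₁ • b - a ∈ C) (h2 : l₂ • a - b ∈ C) :
    1 ≤ l₁ * l₂ := by
  have hl2 : 0 < l₂ := by
    by_contra hneg
    push_neg at hneg
    have hA : (-l₂) • a ∈ C := cone_smul hC (by linarith) ha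
    have hB : (l₂ • a - b) + (-l₂) • a ∈ C := cone_add hC h2 hA
    have hE : (l₂ • a - b) + (-l₂) • a = -b := by module
    rw [hE] at hB
    exact hb0 (cone_pointed hC hb hB)
  have hz : l₂ • (l₁ • b - a) + (l₂ • a - b) ∈ C :=
    cone_add hC (cone_smul hC hl2.le h1) h2
  have he : l₂ • (l₁ • b - a) + (l₂ • a - b) = (l₁ * l₂ - 1) • b := by module
  rw [he] at hz
  by_contra hlt
  push_neg at hlt
  have hpos : (0:ℝ) ≤ 1 - l₁ * l₂ := by linarith
  have hB : (1 - l₁ * l₂) • b ∈ C := cone_smul hC hpos hb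
  have hneg : -((1 - l₁ * l₂) • b) = (l₁ * l₂ - 1) • b := by module
  have := cone_pointed hC hB (by rw [hneg]; exact hz)
  rw [smul_eq_zero] at this
  rcases this with h | h
  · linarith
  · exact hb0 h

lemma supRatio_top_of_left_zero {C : Set V} (hC : IsProperCone C) {b : V} (hb : b ∈ C)
    (hb0 : b ≠ 0) : supRatio C b (0 : V) = ⊤ := by
  have hemp : {l : ℝ | l • (0:V) - b ∈ C} = ∅ := by
    rw [Set.eq_empty_iff_forall_notMem]
    intro l hl
    simp only [Set.mem_setOf_eq, smul_zero, zero_sub] at hl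
    exact hb0 (cone_pointed hC hb hl)
  rw [supRatio, hemp, Set.image_empty]
  exact sInf_empty

lemma hilbertDist_nonneg {C : Set V} (hC : IsProperCone C) {a b : V} (ha : a ∈ C)
    (hb : b ∈ C) : (0 : EReal) ≤ hilbertDist C a b := by
  by_cases htop : supRatio C a b = ⊤ ∨ supRatio C b a = ⊤
  · rw [hilbertDist, if_pos htop]; exact le_top
  push_neg at htop
  obtain ⟨h1, h2⟩ := htop
  by_cases hb0 : b = 0
  · subst hb0
    by_cases ha0 : a = 0
    · subst ha0
      have hbot : supRatio C (0:V) (0:V) = ⊥ := by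
        rw [supRatio]
        apply sInf_eq_bot.mpr
        intro x hx
        by_cases hxt : x = ⊤
        · exact ⟨((0:ℝ) : EReal), ⟨0, by simp [cone_zero hC], rfl⟩, by
            rw [hxt]; exact EReal.coe_lt_top 0⟩
        · refine ⟨((x.toReal - 1 : ℝ) : EReal), ⟨x.toReal - 1, by simp [cone_zero hC], rfl⟩, ?_⟩
          calc ((x.toReal - 1 : ℝ) : EReal) < ((x.toReal : ℝ) : EReal) := by
                exact_mod_cast sub_one_lt _
            _ = x := EReal.coe_toReal hxt (ne_of_gt hx)
      rw [hilbertDist, if_neg (by rw [hbot]; simp)]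
      rw [hbot]
      simp [EReal.toReal_bot]
    · exact absurd (supRatio_top_of_left_zero hC ha ha0) h1
  · by_cases ha0 : a = 0
    · subst ha0
      exact absurd (supRatio_top_of_left_zero hC hb hb0) h2
    · obtain ⟨M, hMeq, hMpos, hMmem⟩ := supRatio_eq hC ha hb ha0 h1
      obtain ⟨M', hM'eq, hM'pos, hM'mem⟩ := supRatio_eq hC hb ha hb0 h2
      have hMM' : 1 ≤ M * M' := pair_ge_one hC ha hb hb0 hMmem hM'mem
      rw [hilbertDist, if_neg (by rw [hMeq, hM'eq]; simp)]
      rw [hMeq, hM'eq, EReal.toReal_coe, EReal.toReal_coe]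
      exact_mod_cast Real.log_nonneg hMM'

lemma tanh_eq_exp (x : ℝ) : Real.tanh x = (Real.exp (2*x) - 1) / (Real.exp (2*x) + 1) := by
  rw [Real.tanh_eq_sinh_div_cosh, Real.sinh_eq, Real.cosh_eq]
  have h2 : Real.exp (2*x) = Real.exp x * Real.exp x := by
    rw [← Real.exp_add]; ring_nf
  rw [h2, Real.exp_neg]
  have he : Real.exp x > 0 := Real.exp_pos x
  field_simp

lemma tanh_nonneg' {x : ℝ} (hx : 0 ≤ x) : 0 ≤ Real.tanh x := by
  rw [tanh_eq_exp]
  have h1 : 1 ≤ Real.exp (2*x) := Real.one_le_exp (by linarith)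
  have h2 : (0:ℝ) < Real.exp (2*x) + 1 := by positivity
  apply div_nonneg <;> linarith

lemma tanh_lt_one' (x : ℝ) : Real.tanh x < 1 := by
  rw [tanh_eq_exp]
  have h2 : (0:ℝ) < Real.exp (2*x) + 1 := by positivity
  rw [div_lt_one h2]
  linarith

lemma tanh_mono' {x y : ℝ} (h : x ≤ y) : Real.tanh x ≤ Real.tanh y := by
  rw [tanh_eq_exp, tanh_eq_exp]
  have hA : (0:ℝ) < Real.exp (2*x) := Real.exp_pos _
  have hB : (0:ℝ) < Real.exp (2*y) := Real.exp_pos _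
  have hAB : Real.exp (2*x) ≤ Real.exp (2*y) := Real.exp_le_exp.mpr (by linarith)
  rw [div_le_div_iff₀ (by linarith) (by linarith)]
  nlinarith

lemma tanh_log_quarter {u : ℝ} (hu : 1 ≤ u) :
    Real.tanh (Real.log u / 4) = (Real.sqrt u - 1) / (Real.sqrt u + 1) := by
  rw [tanh_eq_exp]
  have h1 : 2 * (Real.log u / 4) = Real.log (Real.sqrt u) := by
    rw [Real.log_sqrt (by linarith)]; ring
  rw [h1, Real.exp_log (Real.sqrt_pos.mpr (by linarith))]

lemma tq_nonneg {x : EReal} (hx : (0 : EReal) ≤ x) : 0 ≤ tanhQuarter x := by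
  rw [tanhQuarter]
  split_ifs with h
  · norm_num
  · apply tanh_nonneg'
    apply div_nonneg _ (by norm_num)
    have := EReal.toReal_le_toReal hx (by simp) h
    simpa using this

lemma tq_mono {x y : EReal} (h0 : (0 : EReal) ≤ x) (hxy : x ≤ y) :
    tanhQuarter x ≤ tanhQuarter y := by
  rw [tanhQuarter, tanhQuarter]
  split_ifs with h1 h2 h2
  · exact le_rfl
  · have ht : (⊤ : EReal) ≤ y := h1 ▸ hxy
    exact absurd (top_le_iff.mp ht) h2
  · exact (tanh_lt_one' _).le
  · apply tanh_mono'
    have hxb : x ≠ ⊥ := by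
      intro hx
      rw [hx] at h0
      exact absurd h0 (by simp)
    have := EReal.toReal_le_toReal hxy hxb h2
    linarith

lemma key {C : Set V} (hC : IsProperCone C) {e : V} (he : e ∈ interior (dualConeSet C))
    {a b : V} (ha : a ∈ C) (hb : b ∈ C) (hab : (inner ℝ e b : ℝ) ≤ (inner ℝ e a : ℝ)) :
    negativity C e (a - b) ≤ (inner ℝ e b : ℝ) * tanhQuarter (hilbertDist C a b) := by
  by_cases htop : hilbertDist C a b = ⊤
  · rw [htop, tanhQuarter, if_pos rfl, mul_one]
    exact negativity_le he ha hb rfl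
  · have hP : ¬(supRatio C a b = ⊤ ∨ supRatio C b a = ⊤) := by
      intro h
      exact htop (by rw [hilbertDist, if_pos h])
    push_neg at hP
    obtain ⟨h1, h2⟩ := hP
    by_cases hb0 : b = 0
    · subst hb0
      have h := negativity_le he ha (cone_zero hC) (rfl : a - 0 = a - 0)
      simp only [inner_zero_right, zero_mul] at h ⊢
      exact h
    by_cases ha0 : a = 0
    · subst ha0
      exact absurd (supRatio_top_of_left_zero hC hb hb0) h2
    obtain ⟨M, hMeq, hMpos, hMmem⟩ := supRatio_eq hC ha hb ha0 h1
    obtain ⟨M', hM'eq, hM'pos, hM'mem⟩ := supRatio_eq hC hb ha hb0 h2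
    have hMM' : 1 ≤ M * M' := pair_ge_one hC ha hb hb0 hMmem hM'mem
    have hdist : hilbertDist C a b = ((Real.log (M * M') : ℝ) : EReal) := by
      rw [hilbertDist, if_neg (by rw [hMeq, hM'eq]; simp), hMeq, hM'eq,
        EReal.toReal_coe, EReal.toReal_coe]
    have htq : tanhQuarter (hilbertDist C a b)
        = (Real.sqrt (M * M') - 1) / (Real.sqrt (M * M') + 1) := by
      rw [hdist, tanhQuarter, if_neg (EReal.coe_ne_top _), EReal.toReal_coe,
        tanh_log_quarter hMM']
    have hsq1 : 1 ≤ Real.sqrt (M * M') := by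
      rw [show (1:ℝ) = Real.sqrt 1 by rw [Real.sqrt_one]]
      exact Real.sqrt_le_sqrt hMM'
    have htqnn : 0 ≤ tanhQuarter (hilbertDist C a b) := by
      rw [htq]; apply div_nonneg <;> linarith
    set α := (inner ℝ e a : ℝ) with hα
    set β := (inner ℝ e b : ℝ) with hβ
    have hβpos : 0 < β := inner_pos he hb hb0
    have hMβ : α ≤ M * β := by
      have h0 := dual_nonneg he hMmem
      rw [inner_sub_right, real_inner_smul_right] at h0
      linarith
    have hM1 : 1 ≤ M := by nlinarith
    set m := M'⁻¹ with hm
    have hmpos : 0 < m := by rw [hm]; exact inv_pos.mpr hM'pos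
    have hmem2 : a - m • b ∈ C := by
      have h3 := cone_smul hC hmpos.le hM'mem
      have h4 : m • (M' • a - b) = a - m • b := by
        rw [smul_sub, hm, smul_smul, inv_mul_cancel₀ hM'pos.ne', one_smul]
      rwa [h4] at h3
    have hsub : a - b ∈ C → negativity C e (a - b) ≤ β * tanhQuarter (hilbertDist C a b) := by
      intro habC
      have hN := negativity_le he habC (cone_zero hC) (by rw [sub_zero] : a - b = (a - b) - 0)
      have hN0 : negativity C e (a - b) ≤ 0 := by simpa using hN
      nlinarith
    rcases lt_or_ge 1 m with hm1 | hm1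
    · apply hsub
      have h5 := cone_smul hC (by linarith : (0:ℝ) ≤ m - 1) hb
      have h6 := cone_add hC hmem2 h5
      have h7 : (a - m • b) + (m - 1) • b = a - b := by module
      rwa [h7] at h6
    · rcases eq_or_lt_of_le (le_trans hm1 hM1 : m ≤ M) with hmM | hmM
      · apply hsub
        have hm1' : m = 1 := le_antisymm hm1 (by rw [hmM]; exact hM1)
        rwa [hm1', one_smul] at hmem2
      · set s := (M - 1) / (M - m) with hs
        set t := (1 - m) / (M - m) with ht
        have hMm : 0 < M - m := by linarith
        have hs0 : 0 ≤ s := by rw [hs]; apply div_nonneg <;> linarith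
        have ht0 : 0 ≤ t := by rw [ht]; apply div_nonneg <;> linarith
        have hcp : s • (a - m • b) ∈ C := cone_smul hC hs0 hmem2
        have hcmC : t • (M • b - a) ∈ C := cone_smul hC ht0 hMmem
        have hdecomp : a - b = s • (a - m • b) - t • (M • b - a) := by
          rw [hs, ht]
          match_scalars
          · field_simp
            ring
          · field_simp
            ring
        have hNle := negativity_le he hcp hcmC hdecomp
        have hval : (inner ℝ e (t • (M • b - a)) : ℝ) = t * (M * β - α) := by
          rw [real_inner_smul_right, inner_sub_right, real_inner_smul_right, ← hα, ← hβ]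
        refine hNle.trans ?_
        rw [hval, htq]
        have hMu : M * M' = M / m := by
          rw [hm]
          field_simp
        have hsqrtu : Real.sqrt (M * M') = Real.sqrt M / Real.sqrt m := by
          rw [hMu, Real.sqrt_div (by linarith : (0:ℝ) ≤ M)]
        set sM := Real.sqrt M with hsM
        set sm := Real.sqrt m with hsm
        have hsM2 : sM ^ 2 = M := Real.sq_sqrt (by linarith)
        have hsm2 : sm ^ 2 = m := Real.sq_sqrt hmpos.le
        have hsmpos : 0 < sm := Real.sqrt_pos.mpr hmpos
        have hsMpos : 0 < sM := Real.sqrt_pos.mpr (by linarith)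
        have hspos : (0:ℝ) < sM + sm := by positivity
        have hfrac : (sM / sm - 1) / (sM / sm + 1) = (sM - sm) / (sM + sm) := by
          rw [div_eq_div_iff (by positivity : (0:ℝ) < sM / sm + 1).ne' hspos.ne']
          field_simp
        rw [hsqrtu, hfrac]
        have hstep1 : t * (M * β - α) ≤ t * (β * (M - 1)) := by
          apply mul_le_mul_of_nonneg_left _ ht0
          nlinarith
        refine hstep1.trans ?_
        rw [ht, div_mul_eq_mul_div, ← mul_div_assoc, div_le_div_iff₀ hMm hspos,
          ← hsM2, ← hsm2]
        nlinarith [mul_nonneg (mul_nonneg hβpos.le hspos.le) (sq_nonneg (1 - sm * sM))]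

end NegAux

/-- **Negativity contraction under non-deterministic operations.** -/
theorem negativity_contraction_nondeterministic
    {V : Type*} [NormedAddCommGroup V] [InnerProductSpace ℝ V] [FiniteDimensional ℝ V]
    {N : ℕ} {W : Fin N → Type*}
    [∀ i, NormedAddCommGroup (W i)] [∀ i, InnerProductSpace ℝ (W i)]
    [∀ i, FiniteDimensional ℝ (W i)]
    (C : Set V) (hC : IsProperCone C)
    (Ci : ∀ i, Set (W i)) (hCi : ∀ i, IsProperCone (Ci i))
    (e : V) (he : e ∈ interior (dualConeSet C))
    (ei : ∀ i, W i) (hei : ∀ i, ei i ∈ interior (dualConeSet (Ci i)))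
    (B : Set V) (hB : B = C ∩ {v : V | (inner ℝ e v : ℝ) = 1})
    (Bi : ∀ i, Set (W i)) (hBi : ∀ i, Bi i = Ci i ∩ {v : W i | (inner ℝ (ei i) v : ℝ) = 1})
    (T : ∀ i, V →ₗ[ℝ] W i) (hT : ∀ i, ∀ x ∈ C, T i x ∈ Ci i)
    (hsum : ∀ b ∈ B, (∑ i, (inner ℝ (ei i) (T i b) : ℝ)) ≤ 1)
    (ρ : V) (p : Fin N → ℝ)
    (hp : ∀ i, p i = (inner ℝ (ei i) (T i ρ) : ℝ)) (hp0 : ∀ i, 0 ≤ p i)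
    (ρi : ∀ i, W i) (hρi : ∀ i, 0 < p i → T i ρ = p i • ρi i) :
    (∑ i, p i * negativity (Ci i) (ei i) (ρi i))
      ≤ negativity C e ρ * tanhQuarter (⨆ i, projDiam C (Ci i) (T i)) := by
  classical
  set S := ⨆ i, projDiam C (Ci i) (T i) with hSdef
  have htq0 : 0 ≤ tanhQuarter S := by
    by_cases hbot : S = ⊥
    · rw [hbot, tanhQuarter, if_neg (by simp), EReal.toReal_bot]
      exact NegAux.tanh_nonneg' (by norm_num)
    · apply NegAux.tq_nonneg
      have hex : ∃ i, projDiam C (Ci i) (T i) ≠ ⊥ := by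
        by_contra h
        push_neg at h
        exact hbot (by rw [hSdef]; exact iSup_eq_bot.mpr h)
      obtain ⟨i, hi⟩ := hex
      rw [projDiam] at hi
      simp only [ne_eq, iSup_eq_bot, not_forall] at hi
      obtain ⟨a, ha, b, hb, _⟩ := hi
      calc (0 : EReal) ≤ hilbertDist (Ci i) (T i a) (T i b) :=
            NegAux.hilbertDist_nonneg (hCi i) (hT i a ha.1) (hT i b hb.1)
        _ ≤ projDiam C (Ci i) (T i) := by
            rw [projDiam]
            exact le_iSup_of_le a (le_iSup_of_le ha (le_iSup_of_le b (le_iSup_of_le hb le_rfl)))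
        _ ≤ S := by rw [hSdef]; exact le_iSup (fun j => projDiam C (Ci j) (T j)) i
  have hmain : ∀ cp ∈ C, ∀ cm ∈ C, ρ = cp - cm →
      (∑ i, p i * negativity (Ci i) (ei i) (ρi i)) ≤ tanhQuarter S * (inner ℝ e cm : ℝ) := by
    intro cp hcp cm hcm hd
    have hterm : ∀ i, p i * negativity (Ci i) (ei i) (ρi i)
        ≤ (inner ℝ (ei i) (T i cm) : ℝ) * tanhQuarter S := by
      intro i
      have hβ0 : 0 ≤ (inner ℝ (ei i) (T i cm) : ℝ) := NegAux.dual_nonneg (hei i) (hT i cm hcm)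
      by_cases hpi : p i = 0
      · rw [hpi, zero_mul]
        exact mul_nonneg hβ0 htq0
      · have hpi' : 0 < p i := lt_of_le_of_ne (hp0 i) (Ne.symm hpi)
        have hNeq : p i * negativity (Ci i) (ei i) (ρi i)
            = negativity (Ci i) (ei i) (T i ρ) := by
          rw [hρi i hpi', NegAux.negativity_smul (hCi i) (ei i) hpi']
        rw [hNeq]
        by_cases hcm0 : cm = 0
        · have hρC : ρ ∈ C := by rw [hd, hcm0, sub_zero]; exact hcp
          have hN := NegAux.negativity_le (hei i) (hT i ρ hρC) (NegAux.cone_zero (hCi i))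
            (by rw [sub_zero] : T i ρ = T i ρ - 0)
          rw [hcm0, map_zero]
          simp only [inner_zero_right, zero_mul]
          simpa using hN
        · by_cases hcp0 : cp = 0
          · exfalso
            have hpe : p i = -(inner ℝ (ei i) (T i cm) : ℝ) := by
              rw [hp i, hd, hcp0, zero_sub, map_neg, inner_neg_right]
            linarith
          · have hTd : T i ρ = T i cp - T i cm := by rw [hd, map_sub]
            rw [hTd]
            have hab : (inner ℝ (ei i) (T i cm) : ℝ) ≤ (inner ℝ (ei i) (T i cp) : ℝ) := by
              have hpe : p i = (inner ℝ (ei i) (T i cp) : ℝ) - (inner ℝ (ei i) (T i cm) : ℝ) := by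
                rw [hp i, hTd, inner_sub_right]
              linarith [hp0 i]
            refine (NegAux.key (hCi i) (hei i) (hT i cp hcp) (hT i cm hcm) hab).trans ?_
            apply mul_le_mul_of_nonneg_left _ hβ0
            apply NegAux.tq_mono
              (NegAux.hilbertDist_nonneg (hCi i) (hT i cp hcp) (hT i cm hcm))
            calc hilbertDist (Ci i) (T i cp) (T i cm) ≤ projDiam C (Ci i) (T i) := by
                  rw [projDiam]
                  exact le_iSup_of_le cp (le_iSup_of_le ⟨hcp, hcp0⟩
                    (le_iSup_of_le cm (le_iSup_of_le ⟨hcm, hcm0⟩ le_rfl)))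
              _ ≤ S := by rw [hSdef]; exact le_iSup (fun j => projDiam C (Ci j) (T j)) i
    have hsumβ : (∑ i, (inner ℝ (ei i) (T i cm) : ℝ)) ≤ (inner ℝ e cm : ℝ) := by
      by_cases hcm0 : cm = 0
      · simp [hcm0]
      · have hr : 0 < (inner ℝ e cm : ℝ) := NegAux.inner_pos he hcm hcm0
        have hbB : (inner ℝ e cm : ℝ)⁻¹ • cm ∈ B := by
          rw [hB]
          refine ⟨NegAux.cone_smul hC (by positivity) hcm, ?_⟩
          simp only [Set.mem_setOf_eq, real_inner_smul_right]
          field_simp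
        have hs1 := hsum _ hbB
        have heq : ∀ i, (inner ℝ (ei i) (T i ((inner ℝ e cm : ℝ)⁻¹ • cm)) : ℝ)
            = (inner ℝ e cm : ℝ)⁻¹ * (inner ℝ (ei i) (T i cm) : ℝ) := by
          intro i
          rw [map_smul, real_inner_smul_right]
        rw [Finset.sum_congr rfl (fun i _ => heq i), ← Finset.mul_sum] at hs1
        have h2 : (∑ i, (inner ℝ (ei i) (T i cm) : ℝ))
            = (inner ℝ e cm : ℝ) * ((inner ℝ e cm : ℝ)⁻¹ * ∑ i, (inner ℝ (ei i) (T i cm) : ℝ)) := by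
          field_simp
        rw [h2]
        calc (inner ℝ e cm : ℝ) * ((inner ℝ e cm : ℝ)⁻¹ * ∑ i, (inner ℝ (ei i) (T i cm) : ℝ))
            ≤ (inner ℝ e cm : ℝ) * 1 := mul_le_mul_of_nonneg_left hs1 hr.le
          _ = (inner ℝ e cm : ℝ) := mul_one _
    calc (∑ i, p i * negativity (Ci i) (ei i) (ρi i))
        ≤ ∑ i, (inner ℝ (ei i) (T i cm) : ℝ) * tanhQuarter S :=
          Finset.sum_le_sum fun i _ => hterm i
      _ = (∑ i, (inner ℝ (ei i) (T i cm) : ℝ)) * tanhQuarter S := by rw [Finset.sum_mul]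
      _ ≤ (inner ℝ e cm : ℝ) * tanhQuarter S := mul_le_mul_of_nonneg_right hsumβ htq0
      _ = tanhQuarter S * (inner ℝ e cm : ℝ) := mul_comm _ _
  obtain ⟨cp0, hcp0, cm0, hcm0, hd0⟩ := NegAux.exists_decomp hC ρ
  rcases eq_or_lt_of_le htq0 with htq | htq
  · have h1 := hmain cp0 hcp0 cm0 hcm0 hd0
    rw [← htq, zero_mul] at h1
    rw [← htq, mul_zero]
    exact h1
  · have hDne : {r : ℝ | ∃ cp ∈ C, ∃ cm ∈ C, ρ = cp - cm ∧ r = (inner ℝ e cm : ℝ)}.Nonempty :=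
      ⟨_, cp0, hcp0, cm0, hcm0, hd0, rfl⟩
    have hle : (∑ i, p i * negativity (Ci i) (ei i) (ρi i)) / tanhQuarter S
        ≤ negativity C e ρ := by
      rw [negativity]
      apply le_csInf hDne
      rintro r ⟨cp, hcp, cm, hcm, hd, rfl⟩
      rw [div_le_iff₀ htq]
      calc (∑ i, p i * negativity (Ci i) (ei i) (ρi i))
          ≤ tanhQuarter S * (inner ℝ e cm : ℝ) := hmain cp hcp cm hcm hd
        _ = (inner ℝ e cm : ℝ) * tanhQuarter S := mul_comm _ _
    calc (∑ i, p i * negativity (Ci i) (ei i) (ρi i))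
        = (∑ i, p i * negativity (Ci i) (ei i) (ρi i)) / tanhQuarter S * tanhQuarter S := by
          field_simp
      _ ≤ negativity C e ρ * tanhQuarter S := mul_le_mul_of_nonneg_right hle htq0


end
end

section
/- (Distinguishability norm vs. Hilbert's projective metric.) In the setting below, let B := C ∩ {v | ⟨e,v⟩ = 1} with C := (C_M)*, let b₁, b₂ ∈ B, set m := inf_C(b₁/b₂) and M₀ := sup_C(b₁/b₂), and assume 0 < m < M₀ < ∞. Then (1/2)‖b₁−b₂‖_(M) = sup_{E∈M} ⟨E, b₁−b₂⟩ ≤ (M₀−1)(1−m)/(M₀−m) ≤ 1/(1+m) − 1/(1+M₀) ≤ tanh(h_C(b₁,b₂)/4). -/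
noncomputable section

variable {V : Type*} [NormedAddCommGroup V] [InnerProductSpace ℝ V]

variable {V' : Type*} [NormedAddCommGroup V'] [InnerProductSpace ℝ V']

variable {V : Type*} [NormedAddCommGroup V] [InnerProductSpace ℝ V] in
/-- The cone `C_M := ⋃_{λ ≥ 0} λ • M` generated by a set `M`. -/
def coneOfSet (M : Set V) : Set V := {x : V | ∃ l : ℝ, 0 ≤ l ∧ ∃ E ∈ M, x = l • E}

variable {V : Type*} [NormedAddCommGroup V] [InnerProductSpace ℝ V] in
/-- The distinguishability norm `‖v‖_(M) := sup_{E ∈ M} ⟨2E - e, v⟩`. -/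
noncomputable def distNorm (M : Set V) (e : V) (v : V) : ℝ :=
  sSup {r : ℝ | ∃ E ∈ M, r = (inner ℝ (2 • E - e) v : ℝ)}

variable {V : Type*} [NormedAddCommGroup V] [InnerProductSpace ℝ V] in
/-- `M̃ := {E | 0 ≤_{C_M} E ≤_{C_M} e}`. -/
def mTilde (M : Set V) (e : V) : Set V :=
  {E : V | E ∈ coneOfSet M ∧ e - E ∈ coneOfSet M}
set_option maxHeartbeats 1000000 in
/-- **Distinguishability norm vs. Hilbert's projective metric.** -/
theorem distNorm_vs_hilbert_metric
    {V : Type*} [NormedAddCommGroup V] [InnerProductSpace ℝ V] [FiniteDimensional ℝ V]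
    (e : V) (M : Set V)
    (hMcl : IsClosed M) (hMconv : Convex ℝ M) (hMint : (interior M).Nonempty)
    (hMpt : M ∩ (-M) = {0}) (hMe : ∀ E ∈ M, e - E ∈ M)
    (C : Set V) (hCdef : C = dualConeSet (coneOfSet M))
    (B : Set V) (hBdef : B = C ∩ {v : V | (inner ℝ e v : ℝ) = 1})
    (b₁ : V) (hb₁ : b₁ ∈ B) (b₂ : V) (hb₂ : b₂ ∈ B)
    (m M₀ : ℝ) (hm : (m : EReal) = infRatio C b₁ b₂) (hM₀ : (M₀ : EReal) = supRatio C b₁ b₂)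
    (hm0 : 0 < m) (hmM : m < M₀) :
    (1 / 2) * distNorm M e (b₁ - b₂) = sSup {r : ℝ | ∃ E ∈ M, r = (inner ℝ E (b₁ - b₂) : ℝ)} ∧
    sSup {r : ℝ | ∃ E ∈ M, r = (inner ℝ E (b₁ - b₂) : ℝ)} ≤ (M₀ - 1) * (1 - m) / (M₀ - m) ∧
    (M₀ - 1) * (1 - m) / (M₀ - m) ≤ 1 / (1 + m) - 1 / (1 + M₀) ∧
    1 / (1 + m) - 1 / (1 + M₀) ≤ tanhQuarter (hilbertDist C b₁ b₂) := by
  rw [hBdef] at hb₁ hb₂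
  obtain ⟨hb₁C, hb₁e⟩ := hb₁
  obtain ⟨hb₂C, hb₂e⟩ := hb₂
  simp only [Set.mem_setOf_eq] at hb₁e hb₂e
  have hb₁e' : (inner ℝ b₁ e : ℝ) = 1 := by rw [real_inner_comm]; exact hb₁e
  have hb₂e' : (inner ℝ b₂ e : ℝ) = 1 := by rw [real_inner_comm]; exact hb₂e
  -- basic cone facts
  have h0M : (0:V) ∈ M := by
    have : (0:V) ∈ M ∩ (-M) := by rw [hMpt]; rfl
    exact this.1
  have heM : e ∈ M := by simpa using hMe 0 h0M
  have hconeM : ∀ E ∈ M, E ∈ coneOfSet M := fun E hE => ⟨1, zero_le_one, E, hE, (one_smul ℝ E).symm⟩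
  have hCpos : ∀ c ∈ C, ∀ k ∈ coneOfSet M, 0 ≤ (inner ℝ c k : ℝ) := by
    intro c hc k hk; rw [hCdef] at hc; exact hc k hk
  have hCsmul : ∀ r : ℝ, 0 ≤ r → ∀ c ∈ C, r • c ∈ C := by
    intro r hr c hc
    rw [hCdef]
    intro k hk
    rw [real_inner_smul_left]
    exact mul_nonneg hr (hCpos c hc k hk)
  have hCclosed : IsClosed C := by
    have : C = ⋂ k ∈ coneOfSet M, {w : V | 0 ≤ (inner ℝ w k : ℝ)} := by
      ext w; simp [hCdef, dualConeSet]
    rw [this]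
    exact isClosed_biInter fun k _ =>
      isClosed_le continuous_const (continuous_id.inner continuous_const)
  -- the sets
  set S₁ : Set ℝ := {l : ℝ | b₁ - l • b₂ ∈ C} with hS₁
  set S₂ : Set ℝ := {l : ℝ | l • b₂ - b₁ ∈ C} with hS₂
  have hS₁ub : ∀ l ∈ S₁, l ≤ m := by
    intro l hl
    have : (l : EReal) ≤ (m : EReal) := by
      rw [hm]; exact le_sSup ⟨l, hl, rfl⟩
    exact_mod_cast this
  have hS₁ne : S₁.Nonempty := by
    by_contra h
    rw [Set.not_nonempty_iff_eq_empty] at h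
    rw [infRatio, ← hS₁, h] at hm
    simp at hm
  have hS₁closed : IsClosed S₁ := by
    have : S₁ = (fun l : ℝ => b₁ - l • b₂) ⁻¹' C := rfl
    rw [this]
    exact hCclosed.preimage (continuous_const.sub (continuous_id.smul continuous_const))
  have hmS₁ : m ∈ S₁ := by
    have hlub : IsLUB S₁ m := by
      constructor
      · exact hS₁ub
      · intro b hb
        have : (m : EReal) ≤ (b : EReal) := by
          rw [hm]
          exact sSup_le (by rintro x ⟨l, hl, rfl⟩; simp only []; exact_mod_cast hb hl)
        exact_mod_cast this
    have := hS₁closed.csSup_mem hS₁ne ⟨m, hS₁ub⟩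
    rwa [hlub.csSup_eq hS₁ne] at this
  have hS₂lb : ∀ l ∈ S₂, M₀ ≤ l := by
    intro l hl
    have : (M₀ : EReal) ≤ (l : EReal) := by
      rw [hM₀]; exact sInf_le ⟨l, hl, rfl⟩
    exact_mod_cast this
  have hS₂ne : S₂.Nonempty := by
    by_contra h
    rw [Set.not_nonempty_iff_eq_empty] at h
    rw [supRatio, ← hS₂, h] at hM₀
    simp at hM₀
  have hS₂closed : IsClosed S₂ := by
    have : S₂ = (fun l : ℝ => l • b₂ - b₁) ⁻¹' C := rfl
    rw [this]
    exact hCclosed.preimage ((continuous_id.smul continuous_const).sub continuous_const)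
  have hM₀S₂ : M₀ ∈ S₂ := by
    have hglb : IsGLB S₂ M₀ := by
      constructor
      · exact hS₂lb
      · intro b hb
        have : (b : EReal) ≤ (M₀ : EReal) := by
          rw [hM₀]
          exact le_sInf (by rintro x ⟨l, hl, rfl⟩; simp only []; exact_mod_cast hb hl)
        exact_mod_cast this
    have := hS₂closed.csInf_mem hS₂ne ⟨M₀, hS₂lb⟩
    rwa [hglb.csInf_eq hS₂ne] at this
  -- p and q
  set p : V := b₁ - m • b₂ with hp
  set q : V := M₀ • b₂ - b₁ with hq
  have hpC : p ∈ C := hmS₁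
  have hqC : q ∈ C := hM₀S₂
  have hecone : e ∈ coneOfSet M := hconeM e heM
  have hep : (inner ℝ p e : ℝ) = 1 - m := by
    rw [hp, inner_sub_left, real_inner_smul_left, hb₁e', hb₂e']
    ring
  have heq : (inner ℝ q e : ℝ) = M₀ - 1 := by
    rw [hq, inner_sub_left, real_inner_smul_left, hb₁e', hb₂e']
    ring
  have hm1 : m ≤ 1 := by
    have := hCpos p hpC e hecone
    rw [hep] at this; linarith
  have hM₀1 : 1 ≤ M₀ := by
    have := hCpos q hqC e hecone
    rw [heq] at this; linarith
  have hMm : 0 < M₀ - m := by linarith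
  -- the key per-element bound
  have hkey : ∀ E ∈ M, (inner ℝ E (b₁ - b₂) : ℝ) ≤ (M₀ - 1) * (1 - m) / (M₀ - m) := by
    intro E hE
    have hx0 : 0 ≤ (inner ℝ p E : ℝ) := hCpos p hpC E (hconeM E hE)
    have hy0 : 0 ≤ (inner ℝ q E : ℝ) := hCpos q hqC E (hconeM E hE)
    have hxe : (inner ℝ p E : ℝ) ≤ 1 - m := by
      have := hCpos p hpC (e - E) (hconeM _ (hMe E hE))
      rw [inner_sub_right, hep] at this
      linarith
    have hid : (M₀ - m) • (b₁ - b₂) = (M₀ - 1) • p - (1 - m) • q := by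
      rw [hp, hq]
      simp only [smul_sub, smul_smul, sub_smul, one_smul]
      module
    have hinner : (M₀ - m) * (inner ℝ E (b₁ - b₂) : ℝ)
        = (M₀ - 1) * (inner ℝ p E : ℝ) - (1 - m) * (inner ℝ q E : ℝ) := by
      have := congrArg (fun w => (inner ℝ E w : ℝ)) hid
      simp only [inner_smul_right, inner_sub_right] at this
      rw [inner_sub_right, this, real_inner_comm p E, real_inner_comm q E]
    rw [le_div_iff₀ hMm, mul_comm, hinner]
    nlinarith [mul_nonneg (sub_nonneg.2 hM₀1) hx0, mul_nonneg (sub_nonneg.2 hm1) hy0]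
  have hKnonneg : 0 ≤ (M₀ - 1) * (1 - m) / (M₀ - m) :=
    div_nonneg (mul_nonneg (by linarith) (by linarith)) (le_of_lt hMm)
  -- the sup set
  set S : Set ℝ := {r : ℝ | ∃ E ∈ M, r = (inner ℝ E (b₁ - b₂) : ℝ)} with hS
  have hSne : S.Nonempty := ⟨_, e, heM, rfl⟩
  have hSbdd : BddAbove S := ⟨(M₀ - 1) * (1 - m) / (M₀ - m), by
    rintro r ⟨E, hE, rfl⟩; exact hkey E hE⟩
  have part2 : sSup S ≤ (M₀ - 1) * (1 - m) / (M₀ - m) :=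
    Real.sSup_le (by rintro r ⟨E, hE, rfl⟩; exact hkey E hE) hKnonneg
  -- part 1 : distNorm
  have part1 : (1 / 2) * distNorm M e (b₁ - b₂) = sSup S := by
    have hev : (inner ℝ e (b₁ - b₂) : ℝ) = 0 := by
      rw [inner_sub_right, hb₁e, hb₂e]; ring
    have hset : {r : ℝ | ∃ E ∈ M, r = (inner ℝ (2 • E - e) (b₁ - b₂) : ℝ)}
        = (fun r : ℝ => 2 * r) '' S := by
      ext r
      constructor
      · rintro ⟨E, hE, rfl⟩
        refine ⟨(inner ℝ E (b₁ - b₂) : ℝ), ⟨E, hE, rfl⟩, ?_⟩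
        rw [inner_sub_left, hev, two_smul, inner_add_left]
        ring
      · rintro ⟨s, ⟨E, hE, rfl⟩, rfl⟩
        refine ⟨E, hE, ?_⟩
        rw [inner_sub_left, hev, two_smul, inner_add_left]
        ring
    rw [distNorm, hset]
    rw [← Monotone.map_csSup_of_continuousAt (f := fun r : ℝ => 2 * r)
      (continuous_const.mul continuous_id).continuousAt
      (fun a b hab => by dsimp; linarith) hSne hSbdd]
    ring
  -- supRatio C b₂ b₁ = 1/m
  have hsup21 : supRatio C b₂ b₁ = ((m⁻¹ : ℝ) : EReal) := by
    rw [supRatio]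
    apply le_antisymm
    · apply sInf_le
      refine ⟨m⁻¹, ?_, rfl⟩
      have : m⁻¹ • b₁ - b₂ = m⁻¹ • p := by
        rw [hp, smul_sub, smul_smul, inv_mul_cancel₀ (ne_of_gt hm0), one_smul]
      simp only [Set.mem_setOf_eq, this]
      exact hCsmul _ (by positivity) p hpC
    · apply le_sInf
      rintro x ⟨l, hl, rfl⟩
      simp only [Set.mem_setOf_eq] at hl
      have hl0 : 0 < l := by
        by_contra h
        push_neg at h
        have := hCpos _ hl e hecone
        rw [inner_sub_left, real_inner_smul_left, hb₁e', hb₂e'] at this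
        linarith
      have hmem : l⁻¹ ∈ S₁ := by
        have : b₁ - l⁻¹ • b₂ = l⁻¹ • (l • b₁ - b₂) := by
          rw [smul_sub, smul_smul, inv_mul_cancel₀ (ne_of_gt hl0), one_smul]
        simp only [hS₁, Set.mem_setOf_eq, this]
        exact hCsmul _ (by positivity) _ hl
      have : l⁻¹ ≤ m := hS₁ub _ hmem
      have hml : m⁻¹ ≤ l := by
        rw [inv_eq_one_div, div_le_iff₀ hm0]
        have h1 := mul_le_mul_of_nonneg_left this hl0.le
        rwa [mul_inv_cancel₀ (ne_of_gt hl0)] at h1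
      exact EReal.coe_le_coe_iff.2 hml
  -- compute hilbertDist and tanhQuarter
  have hM₀0 : 0 < M₀ := lt_trans hm0 hmM
  have hhd : hilbertDist C b₁ b₂ = ((Real.log (M₀ * m⁻¹) : ℝ) : EReal) := by
    rw [hilbertDist, ← hM₀, hsup21]
    rw [if_neg (by simp [EReal.coe_ne_top])]
    norm_num
  have htq : tanhQuarter (hilbertDist C b₁ b₂) = Real.tanh (Real.log (M₀ * m⁻¹) / 4) := by
    rw [hhd, tanhQuarter, if_neg (EReal.coe_ne_top _)]
    norm_num
  -- part 4
  have part4 : 1 / (1 + m) - 1 / (1 + M₀) ≤ tanhQuarter (hilbertDist C b₁ b₂) := by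
    rw [htq]
    set L : ℝ := Real.log (M₀ * m⁻¹) with hL
    set a : ℝ := Real.exp (L / 4) with ha
    have ha0 : 0 < a := Real.exp_pos _
    set t : ℝ := a * a with ht
    have ht0 : 0 < t := mul_pos ha0 ha0
    have htt : t * t = M₀ * m⁻¹ := by
      rw [ht, ha]
      simp only [← Real.exp_add]
      rw [show L / 4 + L / 4 + (L / 4 + L / 4) = L by ring, hL]
      exact Real.exp_log (by positivity)
    have hmt : m * (t * t) = M₀ := by
      rw [htt, mul_comm, mul_assoc, inv_mul_cancel₀ (ne_of_gt hm0), mul_one]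
    have h1tt : 1 < t * t := by
      rw [htt, ← div_eq_mul_inv]
      exact (one_lt_div hm0).2 hmM
    have h1t : 1 < t := by nlinarith [h1tt, ht0]
    have htanh : Real.tanh (L / 4) = (t - 1) / (t + 1) := by
      rw [Real.tanh_eq_sinh_div_cosh, Real.sinh_eq, Real.cosh_eq, Real.exp_neg, ← ha]
      have h1 : a + a⁻¹ ≠ 0 := by positivity
      have h2 : t + 1 ≠ 0 := by positivity
      field_simp
      rw [ht]; ring
    rw [htanh]
    have h1m : (0:ℝ) < 1 + m := by linarith
    have h1M : (0:ℝ) < 1 + M₀ := by linarith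
    rw [div_sub_div _ _ (ne_of_gt h1m) (ne_of_gt h1M),
      div_le_div_iff₀ (by positivity) (by positivity), ← hmt]
    nlinarith [mul_nonneg (sub_nonneg.2 h1t.le) (sq_nonneg (1 - m * t)), hm0.le, ht0.le]
  have part3 : (M₀ - 1) * (1 - m) / (M₀ - m) ≤ 1 / (1 + m) - 1 / (1 + M₀) := by
    have h1m : (0:ℝ) < 1 + m := by linarith
    have h1M : (0:ℝ) < 1 + M₀ := by linarith
    rw [div_sub_div _ _ (ne_of_gt h1m) (ne_of_gt h1M),
      div_le_div_iff₀ hMm (by positivity)]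
    nlinarith [sq_nonneg (m * M₀ - 1)]
  exact ⟨part1, part2, part3, part4⟩


end
end

section
/- (Distinguishability norm contraction.) Let M ⊆ V and M' ⊆ V' be as in the setting below, with induced cones C := (C_M)* ⊆ V, C' := (C_{M'})* ⊆ V' and bases B := C ∩ {v | ⟨e,v⟩ = 1}, B' := C' ∩ {v' | ⟨e',v'⟩ = 1}. Let T : V → V' be a linear map with adjoint T* : V' → V (⟨T*(w'), v⟩ = ⟨w', T(v)⟩). Then for all v₁, v₂ ∈ V with ⟨e,v₁⟩ = ⟨e,v₂⟩: (a) if T*(M') ⊆ M and T*(e') = e, then ‖T v₁ − T v₂‖_(M') ≤ ‖v₁ − v₂‖_(M); (b) if T is base-preserving (T(B) ⊆ B') and M = M̃, then ‖T v₁ − T v₂‖_(M') ≤ ‖v₁ − v₂‖_(M) · tanh(Δ(T)/4), where tanh(∞/4) := 1. -/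
noncomputable section

variable {V : Type*} [NormedAddCommGroup V] [InnerProductSpace ℝ V]

variable {V' : Type*} [NormedAddCommGroup V'] [InnerProductSpace ℝ V']

set_option linter.unusedSectionVars false
namespace DNC


lemma tanh_formula (x : ℝ) : Real.tanh x = (Real.exp (2*x) - 1)/(Real.exp (2*x) + 1) := by
  rw [Real.tanh_eq_sinh_div_cosh, Real.sinh_eq, Real.cosh_eq]
  have hE : Real.exp x > 0 := Real.exp_pos x
  have h1 : Real.exp (-x) = (Real.exp x)⁻¹ := Real.exp_neg x
  have h2 : Real.exp (2*x) = Real.exp x * Real.exp x := by rw [two_mul, Real.exp_add]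
  rw [h1, h2]
  field_simp

lemma tanh_mono {x y : ℝ} (h : x ≤ y) : Real.tanh x ≤ Real.tanh y := by
  rw [tanh_formula, tanh_formula]
  have hA : (0:ℝ) < Real.exp (2*x) := Real.exp_pos _
  have hB : (0:ℝ) < Real.exp (2*y) := Real.exp_pos _
  have hAB : Real.exp (2*x) ≤ Real.exp (2*y) := Real.exp_le_exp.2 (by linarith)
  rw [div_le_div_iff₀ (by linarith) (by linarith)]
  nlinarith

lemma tanh_le_one (x : ℝ) : Real.tanh x ≤ 1 := by
  rw [tanh_formula]
  have hA : (0:ℝ) < Real.exp (2*x) := Real.exp_pos _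
  rw [div_le_one (by linarith)]; linarith

lemma tanh_nonneg {x : ℝ} (h : 0 ≤ x) : 0 ≤ Real.tanh x := by
  rw [tanh_formula]
  have hA : (1:ℝ) ≤ Real.exp (2*x) := by
    rw [show (1:ℝ) = Real.exp 0 from (Real.exp_zero).symm]
    exact Real.exp_le_exp.2 (by linarith)
  have hA' : (0:ℝ) < Real.exp (2*x) := Real.exp_pos _
  apply div_nonneg <;> linarith

lemma ereal_sInf_image {S : Set ℝ} (hcl : IsClosed S) (hne : S.Nonempty) (hbd : BddBelow S) :
    sInf ((fun l : ℝ => (l : EReal)) '' S) = ((sInf S : ℝ) : EReal) ∧ sInf S ∈ S := by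
  have hmem : sInf S ∈ S := hcl.csInf_mem hne hbd
  refine ⟨le_antisymm (sInf_le ⟨sInf S, hmem, rfl⟩) (le_sInf ?_), hmem⟩
  rintro z ⟨l, hl, rfl⟩
  show ((sInf S : ℝ) : EReal) ≤ (l : EReal)
  exact_mod_cast csInf_le hbd hl


variable {W : Type*} [NormedAddCommGroup W] [InnerProductSpace ℝ W]

section Basic
variable {M : Set W} {e : W}

lemma zero_mem (hMpt : M ∩ (-M) = {0}) : (0 : W) ∈ M := by
  have : (0:W) ∈ M ∩ (-M) := hMpt ▸ rfl
  exact this.1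

lemma e_mem (hMpt : M ∩ (-M) = {0}) (hMe : ∀ E ∈ M, e - E ∈ M) : e ∈ M := by
  simpa using hMe 0 (zero_mem hMpt)

lemma mem_cone {E : W} (hE : E ∈ M) : E ∈ coneOfSet M := ⟨1, one_pos.le, E, hE, (one_smul ℝ E).symm⟩

lemma cone_smul {x : W} {c : ℝ} (hx : x ∈ coneOfSet M) (hc : 0 ≤ c) : c • x ∈ coneOfSet M := by
  obtain ⟨l, hl, E, hE, rfl⟩ := hx
  exact ⟨c * l, mul_nonneg hc hl, E, hE, smul_smul c l E⟩

lemma cone_zero_mem (hMpt : M ∩ (-M) = {0}) : (0 : W) ∈ coneOfSet M :=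
  ⟨0, le_rfl, 0, zero_mem hMpt, (zero_smul ℝ (0:W)).symm⟩

lemma cone_add (hMconv : Convex ℝ M) {x y : W} (hx : x ∈ coneOfSet M) (hy : y ∈ coneOfSet M) :
    x + y ∈ coneOfSet M := by
  obtain ⟨l, hl, E, hE, rfl⟩ := hx
  obtain ⟨m, hm, F, hF, rfl⟩ := hy
  rcases eq_or_lt_of_le (add_nonneg hl hm) with h0 | hpos
  · have hl0 : l = 0 := by linarith
    have hm0 : m = 0 := by linarith
    refine ⟨0, le_rfl, E, hE, ?_⟩
    simp [hl0, hm0]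
  · refine ⟨l + m, hpos.le, (l/(l+m)) • E + (m/(l+m)) • F,
      hMconv hE hF (by positivity) (by positivity) (by field_simp), ?_⟩
    rw [smul_add, smul_smul, smul_smul]
    have hne : l + m ≠ 0 := hpos.ne'
    field_simp

lemma dual_closed (S : Set W) : IsClosed (dualConeSet S) := by
  have : dualConeSet S = ⋂ c ∈ S, {w : W | 0 ≤ (inner ℝ w c : ℝ)} := by
    ext w; simp [dualConeSet]
  rw [this]
  exact isClosed_biInter fun c _ =>
    isClosed_le continuous_const (continuous_id.inner continuous_const)

lemma dual_zero_mem (S : Set W) : (0 : W) ∈ dualConeSet S := by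
  intro c _; simp

lemma dual_smul {S : Set W} {x : W} {c : ℝ} (hx : x ∈ dualConeSet S) (hc : 0 ≤ c) :
    c • x ∈ dualConeSet S := by
  intro y hy
  rw [real_inner_smul_left]
  exact mul_nonneg hc (hx y hy)

lemma dual_add {S : Set W} {x y : W} (hx : x ∈ dualConeSet S) (hy : y ∈ dualConeSet S) :
    x + y ∈ dualConeSet S := by
  intro c hc
  rw [inner_add_left]
  exact add_nonneg (hx c hc) (hy c hc)

lemma dual_convex (S : Set W) : Convex ℝ (dualConeSet S) := by
  intro x hx y hy a b ha hb _
  exact dual_add (dual_smul hx ha) (dual_smul hy hb)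

lemma mem_dual_cone_iff {w : W} :
    w ∈ dualConeSet (coneOfSet M) ↔ ∀ E ∈ M, 0 ≤ (inner ℝ w E : ℝ) := by
  constructor
  · exact fun h E hE => h E (mem_cone hE)
  · rintro h c ⟨l, hl, E, hE, rfl⟩
    rw [real_inner_smul_right]
    exact mul_nonneg hl (h E hE)

/-- `e/2` is an interior point of `M`. -/
lemma half_e_interior (hMconv : Convex ℝ M) (hMint : (interior M).Nonempty)
    (hMe : ∀ E ∈ M, e - E ∈ M) :
    ∃ δ : ℝ, 0 < δ ∧ ∀ u : W, ‖u‖ < δ → (2:ℝ)⁻¹ • e + u ∈ M := by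
  obtain ⟨x₀, hx₀⟩ := hMint
  have hMsym : (fun x => e - x) '' M = M := by
    apply Set.Subset.antisymm
    · rintro _ ⟨x, hx, rfl⟩; exact hMe x hx
    · intro y hy; exact ⟨e - y, hMe y hy, sub_sub_cancel e y⟩
  have hx₁ : e - x₀ ∈ interior M := by
    have h : ((Homeomorph.neg W).trans (Homeomorph.addLeft e)) '' interior M
        = interior (((Homeomorph.neg W).trans (Homeomorph.addLeft e)) '' M) :=
      Homeomorph.image_interior _ _
    have himg : ∀ s : Set W, ((Homeomorph.neg W).trans (Homeomorph.addLeft e)) '' s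
        = (fun x => e - x) '' s := by
      intro s; ext z
      have hneg : ∀ x : W, ((Homeomorph.neg W).trans (Homeomorph.addLeft e)) x = e - x := by
        intro x
        simp only [Homeomorph.trans_apply, Homeomorph.coe_addLeft]
        show e + (Homeomorph.neg W) x = e - x
        rw [show (Homeomorph.neg W) x = -x from rfl]; abel
      simp only [Set.mem_image, hneg]
    rw [himg, himg, hMsym] at h
    rw [← h]
    exact ⟨x₀, hx₀, rfl⟩
  have hmid : (2:ℝ)⁻¹ • e ∈ interior M := by
    have := (hMconv.interior) hx₀ hx₁ (by norm_num : (0:ℝ) ≤ 2⁻¹)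
      (by norm_num : (0:ℝ) ≤ 2⁻¹) (by norm_num)
    convert this using 1
    rw [smul_sub]; abel
  rw [mem_interior_iff_mem_nhds, Metric.mem_nhds_iff] at hmid
  obtain ⟨δ, hδ, hball⟩ := hmid
  refine ⟨δ, hδ, fun u hu => hball ?_⟩
  rw [Metric.mem_ball, dist_eq_norm]
  simpa using hu

end Basic

section Bounded
variable [FiniteDimensional ℝ W] {M : Set W} {e : W}

/-- The set `M` is bounded. -/
lemma M_bounded (hMcl : IsClosed M) (hMconv : Convex ℝ M)
    (hMpt : M ∩ (-M) = {0}) (hMe : ∀ E ∈ M, e - E ∈ M) :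
    ∃ R : ℝ, 0 < R ∧ ∀ x ∈ M, ‖x‖ ≤ R := by
  by_contra hcon
  push_neg at hcon
  have hx : ∀ n : ℕ, ∃ y, y ∈ M ∧ ((n : ℝ) + 1) < ‖y‖ := by
    intro n
    obtain ⟨y, hyM, hyn⟩ := hcon ((n:ℝ)+1) (by positivity)
    exact ⟨y, hyM, hyn⟩
  choose y hyM hyn using hx
  have hynorm : ∀ n, (0:ℝ) < ‖y n‖ := fun n => lt_of_le_of_lt (by positivity) (hyn n)
  set u : ℕ → W := fun n => ‖y n‖⁻¹ • y n with hu
  have hunorm : ∀ n, ‖u n‖ = 1 := by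
    intro n
    rw [hu]
    simp only [norm_smul, norm_inv, norm_norm]
    rw [inv_mul_cancel₀ (hynorm n).ne']
  have humem : ∀ n, u n ∈ Metric.closedBall (0:W) 1 := by
    intro n; rw [Metric.mem_closedBall, dist_zero_right, hunorm]
  obtain ⟨a, _, φ, hφ, hconv⟩ :=
    tendsto_subseq_of_bounded (Metric.isBounded_closedBall (x := (0:W)) (r := 1)) humem
  have ha1 : ‖a‖ = 1 := by
    have h1 : Filter.Tendsto (fun n => ‖u (φ n)‖) Filter.atTop (nhds ‖a‖) :=
      (continuous_norm.tendsto a).comp hconv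
    have h2 : (fun n => ‖u (φ n)‖) = fun _ => (1:ℝ) := funext fun n => hunorm (φ n)
    rw [h2] at h1
    exact (tendsto_nhds_unique tendsto_const_nhds h1).symm
  have hsmul01 : ∀ (c : ℝ) (x : W), x ∈ M → 0 ≤ c → c ≤ 1 → c • x ∈ M := by
    intro c x hxM hc0 hc1
    exact hMconv.smul_mem_of_zero_mem (zero_mem hMpt) hxM ⟨hc0, hc1⟩
  have hta : ∀ t : ℝ, 0 ≤ t → t • a ∈ M := by
    intro t ht
    have htend : Filter.Tendsto (fun n => t • u (φ n)) Filter.atTop (nhds (t • a)) :=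
      hconv.const_smul t
    refine hMcl.mem_of_tendsto htend ?_
    rw [Filter.eventually_atTop]
    refine ⟨⌈t⌉₊, fun n hn => ?_⟩
    have hb : t • u (φ n) = (t * ‖y (φ n)‖⁻¹) • y (φ n) := by
      rw [hu]; rw [smul_smul]
    rw [hb]
    apply hsmul01 _ _ (hyM (φ n)) (by positivity)
    have h1 : t ≤ (n : ℝ) := le_trans (Nat.le_ceil t) (by exact_mod_cast hn)
    have h2 : (n : ℝ) ≤ (φ n : ℝ) := by exact_mod_cast hφ.le_apply
    have h3 : t ≤ ‖y (φ n)‖ := by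
      have := hyn (φ n); linarith
    rw [mul_inv_le_iff₀ (hynorm (φ n)), one_mul]
    exact h3
  have hna : -a ∈ M := by
    set k : ℕ → ℝ := fun n => (φ n : ℝ) + 1 with hk
    have hkpos : ∀ n, (0:ℝ) < k n := fun n => by positivity
    have hseq : ∀ n, (k n)⁻¹ • (e - (k n) • a) ∈ M := by
      intro n
      apply hsmul01 _ _ (hMe _ (hta (k n) (hkpos n).le)) (by positivity)
      have h1 : (1:ℝ) ≤ k n := by
        have h0 : (0:ℝ) ≤ (φ n : ℝ) := Nat.cast_nonneg _
        simp only [hk]; linarith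
      rw [inv_le_one_iff₀]
      right
      exact h1
    have hktop : Filter.Tendsto k Filter.atTop Filter.atTop := by
      apply Filter.tendsto_atTop_add_const_right
      exact tendsto_natCast_atTop_atTop.comp hφ.tendsto_atTop
    have hkinv : Filter.Tendsto (fun n => (k n)⁻¹) Filter.atTop (nhds 0) :=
      hktop.inv_tendsto_atTop
    have hform : ∀ n, (k n)⁻¹ • (e - (k n) • a) = (k n)⁻¹ • e - a := by
      intro n
      rw [smul_sub, smul_smul, inv_mul_cancel₀ (hkpos n).ne', one_smul]
    have htend : Filter.Tendsto (fun n => (k n)⁻¹ • (e - (k n) • a)) Filter.atTop (nhds (-a)) := by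
      simp only [hform]
      have h1 : Filter.Tendsto (fun n => (k n)⁻¹ • e) Filter.atTop (nhds ((0:ℝ) • e)) :=
        hkinv.smul_const e
      rw [zero_smul] at h1
      have := h1.sub_const a
      rwa [zero_sub] at this
    exact hMcl.mem_of_tendsto htend (Filter.Eventually.of_forall hseq)
  have haM : a ∈ M := by simpa using hta 1 zero_le_one
  have : a ∈ M ∩ (-M) := ⟨haM, by simpa [Set.mem_neg] using hna⟩
  rw [hMpt] at this
  simp only [Set.mem_singleton_iff] at this
  rw [this] at ha1
  simp at ha1

/-- Strict positivity of `e` on the dual cone. -/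
lemma e_pos_on_dual (hMconv : Convex ℝ M) (hMint : (interior M).Nonempty)
    (hMe : ∀ E ∈ M, e - E ∈ M) :
    ∃ δ : ℝ, 0 < δ ∧ ∀ c ∈ dualConeSet (coneOfSet M), δ * ‖c‖ ≤ (inner ℝ e c : ℝ) := by
  obtain ⟨δ, hδ, hball⟩ := half_e_interior hMconv hMint hMe
  refine ⟨δ/2, by positivity, fun c hc => ?_⟩
  rcases eq_or_ne c 0 with rfl | hcne
  · simp
  · have hcn : (0:ℝ) < ‖c‖ := norm_pos_iff.2 hcne
    set E : W := (2:ℝ)⁻¹ • e + (-(δ/2)) • (‖c‖⁻¹ • c) with hE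
    have hEM : E ∈ M := by
      apply hball
      have hn : ‖(-(δ/2)) • (‖c‖⁻¹ • c)‖ = δ/2 := by
        rw [norm_smul, norm_smul, norm_inv, norm_norm, Real.norm_eq_abs, abs_neg,
          abs_of_pos (by positivity : (0:ℝ) < δ/2), inv_mul_cancel₀ hcn.ne', mul_one]
      rw [hn]
      linarith
    have h0 := hc E (mem_cone hEM)
    rw [hE] at h0
    rw [inner_add_right, real_inner_smul_right, real_inner_smul_right,
      real_inner_smul_right, real_inner_self_eq_norm_sq] at h0
    have hinner : (inner ℝ c e : ℝ) = (inner ℝ e c : ℝ) := real_inner_comm e c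
    rw [hinner] at h0
    have : -(δ/2) * (‖c‖⁻¹ * ‖c‖^2) = -(δ/2) * ‖c‖ := by
      field_simp
    rw [this] at h0
    nlinarith

end Bounded

section DN
variable [FiniteDimensional ℝ W] {M : Set W} {e v : W}

lemma dn_bddAbove (hMcl : IsClosed M) (hMconv : Convex ℝ M)
    (hMpt : M ∩ (-M) = {0}) (hMe : ∀ E ∈ M, e - E ∈ M) (v : W) :
    BddAbove {r : ℝ | ∃ E ∈ M, r = (inner ℝ (2 • E - e) v : ℝ)} := by
  obtain ⟨R, hR, hRb⟩ := M_bounded hMcl hMconv hMpt hMe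
  refine ⟨(2*R + ‖e‖) * ‖v‖, ?_⟩
  rintro r ⟨E, hE, rfl⟩
  calc (inner ℝ (2 • E - e) v : ℝ) ≤ ‖2 • E - e‖ * ‖v‖ := real_inner_le_norm _ _
    _ ≤ (2*R + ‖e‖) * ‖v‖ := by
        apply mul_le_mul_of_nonneg_right _ (norm_nonneg v)
        calc ‖2 • E - e‖ ≤ ‖2 • E‖ + ‖e‖ := norm_sub_le _ _
          _ ≤ 2*R + ‖e‖ := by
              rw [two_smul]
              have := norm_add_le E E
              have := hRb E hE
              linarith

lemma le_distNorm (hMcl : IsClosed M) (hMconv : Convex ℝ M)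
    (hMpt : M ∩ (-M) = {0}) (hMe : ∀ E ∈ M, e - E ∈ M) {E : W} (hE : E ∈ M) (v : W) :
    (inner ℝ (2 • E - e) v : ℝ) ≤ distNorm M e v :=
  le_csSup (dn_bddAbove hMcl hMconv hMpt hMe v) ⟨E, hE, rfl⟩

lemma distNorm_nonneg (hMcl : IsClosed M) (hMconv : Convex ℝ M)
    (hMpt : M ∩ (-M) = {0}) (hMe : ∀ E ∈ M, e - E ∈ M) (hv : (inner ℝ e v : ℝ) = 0) :
    0 ≤ distNorm M e v := by
  have h0 : (inner ℝ (2 • (0:W) - e) v : ℝ) = 0 := by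
    rw [smul_zero, zero_sub, inner_neg_left, hv, neg_zero]
  have := le_distNorm hMcl hMconv hMpt hMe (zero_mem hMpt) v
  rwa [h0] at this

lemma distNorm_zero (hMpt : M ∩ (-M) = {0}) : distNorm M e 0 = 0 := by
  have : {r : ℝ | ∃ E ∈ M, r = (inner ℝ (2 • E - e) (0:W) : ℝ)} = {0} := by
    ext r
    simp only [Set.mem_setOf_eq, Set.mem_singleton_iff, inner_zero_right]
    exact ⟨fun ⟨E, _, h⟩ => h, fun h => ⟨0, zero_mem hMpt, h⟩⟩
  rw [distNorm, this, csSup_singleton]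

end DN

section PartB
variable [FiniteDimensional ℝ W] {M : Set W} {e : W}

lemma cone_closed (hMcl : IsClosed M) (hMconv : Convex ℝ M) (hMint : (interior M).Nonempty)
    (hMpt : M ∩ (-M) = {0}) (hMe : ∀ E ∈ M, e - E ∈ M) (hMt : M = mTilde M e) :
    IsClosed (coneOfSet M) := by
  obtain ⟨δ, hδ, hball⟩ := half_e_interior hMconv hMint hMe
  have key : ∀ x ∈ coneOfSet M, x ≠ 0 → (δ/2) • (‖x‖⁻¹ • x) ∈ M := by
    intro x hx hxne
    have hxn : (0:ℝ) < ‖x‖ := norm_pos_iff.2 hxne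
    rw [hMt]
    constructor
    · exact cone_smul (cone_smul hx (by positivity)) (by positivity)
    · have h1 : (2:ℝ)⁻¹ • e + (-(δ/2)) • (‖x‖⁻¹ • x) ∈ M := by
        apply hball
        have : ‖(-(δ/2)) • (‖x‖⁻¹ • x)‖ = δ/2 := by
          rw [norm_smul, norm_smul, norm_inv, norm_norm, Real.norm_eq_abs, abs_neg,
            abs_of_pos (by positivity : (0:ℝ) < δ/2), inv_mul_cancel₀ hxn.ne', mul_one]
        rw [this]; linarith
      have h2 : e - (δ/2) • (‖x‖⁻¹ • x)
          = (2:ℝ)⁻¹ • e + ((2:ℝ)⁻¹ • e + (-(δ/2)) • (‖x‖⁻¹ • x)) := by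
        rw [neg_smul]
        rw [show (2:ℝ)⁻¹ • e + ((2:ℝ)⁻¹ • e + -((δ/2) • (‖x‖⁻¹ • x)))
            = ((2:ℝ)⁻¹ + (2:ℝ)⁻¹) • e - (δ/2) • (‖x‖⁻¹ • x) by rw [add_smul]; abel]
        norm_num
      rw [h2]
      exact cone_add hMconv (cone_smul (mem_cone (e_mem hMpt hMe)) (by positivity)) (mem_cone h1)
  apply IsSeqClosed.isClosed
  intro x p hx hxp
  rcases eq_or_ne p 0 with rfl | hpne
  · exact cone_zero_mem hMpt
  · have hxne : ∀ᶠ n in Filter.atTop, x n ≠ 0 := hxp.eventually_ne hpne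
    have hpn : (0:ℝ) < ‖p‖ := norm_pos_iff.2 hpne
    have hnormt : Filter.Tendsto (fun n => ‖x n‖⁻¹) Filter.atTop (nhds ‖p‖⁻¹) :=
      ((continuous_norm.tendsto p).comp hxp).inv₀ hpn.ne'
    have htend : Filter.Tendsto (fun n => (δ/2) • (‖x n‖⁻¹ • x n)) Filter.atTop
        (nhds ((δ/2) • (‖p‖⁻¹ • p))) := (hnormt.smul hxp).const_smul _
    have hmem : ∀ᶠ n in Filter.atTop, (δ/2) • (‖x n‖⁻¹ • x n) ∈ M :=
      hxne.mono fun n hn => key (x n) (hx n) hn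
    have hm : (δ/2) • (‖p‖⁻¹ • p) ∈ M := hMcl.mem_of_tendsto htend hmem
    have hform : p = ((2/δ) * ‖p‖) • ((δ/2) • (‖p‖⁻¹ • p)) := by
      rw [smul_smul, smul_smul]
      rw [show 2/δ * ‖p‖ * (δ/2) * ‖p‖⁻¹ = 1 by field_simp]
      rw [one_smul]
    rw [hform]
    exact cone_smul (mem_cone hm) (by positivity)

lemma mem_cone_of_dual_dual (hMconv : Convex ℝ M) (hMpt : M ∩ (-M) = {0})
    (hcl : IsClosed (coneOfSet M)) {y : W}
    (hy : ∀ c ∈ dualConeSet (coneOfSet M), 0 ≤ (inner ℝ y c : ℝ)) : y ∈ coneOfSet M := by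
  by_contra hyn
  have hKconv : Convex ℝ (coneOfSet M) := fun x hx z hz a b ha hb _ =>
    cone_add hMconv (cone_smul hx ha) (cone_smul hz hb)
  obtain ⟨f, u, hfK, hfy⟩ := geometric_hahn_banach_closed_point hKconv hcl hyn
  have hu0 : 0 < u := by
    have := hfK 0 (cone_zero_mem hMpt)
    rwa [map_zero] at this
  have hle : ∀ c ∈ coneOfSet M, f c ≤ 0 := by
    intro c hc
    by_contra hpos
    push_neg at hpos
    have := hfK ((u / f c) • c) (cone_smul hc (by positivity))
    rw [map_smul, smul_eq_mul, div_mul_cancel₀ _ hpos.ne'] at this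
    exact lt_irrefl _ this
  have hw : -(InnerProductSpace.toDual ℝ W).symm f ∈ dualConeSet (coneOfSet M) := by
    intro c hc
    rw [inner_neg_left, InnerProductSpace.toDual_symm_apply]
    linarith [hle c hc]
  have := hy _ hw
  rw [inner_neg_right, real_inner_comm, InnerProductSpace.toDual_symm_apply] at this
  linarith

lemma v_zero_of_dn_nonpos (hMconv : Convex ℝ M) (hMint : (interior M).Nonempty)
    (hMe : ∀ E ∈ M, e - E ∈ M) {v : W}
    (hle : ∀ E ∈ M, (inner ℝ (2 • E - e) v : ℝ) ≤ 0) : v = 0 := by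
  obtain ⟨δ, hδ, hball⟩ := half_e_interior hMconv hMint hMe
  by_contra hvne
  have hvn : (0:ℝ) < ‖v‖ := norm_pos_iff.2 hvne
  set u : W := (δ/2) • (‖v‖⁻¹ • v) with hu
  have hE : (2:ℝ)⁻¹ • e + u ∈ M := by
    apply hball
    rw [hu, norm_smul, norm_smul, norm_inv, norm_norm, Real.norm_eq_abs,
      abs_of_pos (by positivity : (0:ℝ) < δ/2), inv_mul_cancel₀ hvn.ne', mul_one]
    linarith
  have hcompute : (2 : ℕ) • ((2:ℝ)⁻¹ • e + u) - e = u + u := by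
    rw [two_smul]
    rw [show ((2:ℝ)⁻¹ • e + u) + ((2:ℝ)⁻¹ • e + u) = ((2:ℝ)⁻¹ + (2:ℝ)⁻¹) • e + (u + u) by
      rw [add_smul]; abel]
    norm_num
  have := hle _ hE
  rw [hcompute] at this
  rw [hu, inner_add_left, real_inner_smul_left, real_inner_smul_left,
    real_inner_self_eq_norm_sq] at this
  have h3 : ‖v‖⁻¹ * ‖v‖^2 = ‖v‖ := by
    rw [pow_two, ← mul_assoc, inv_mul_cancel₀ hvn.ne', one_mul]
  rw [h3] at this
  nlinarith


lemma decomposition (hMcl : IsClosed M) (hMconv : Convex ℝ M) (hMint : (interior M).Nonempty)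
    (hMpt : M ∩ (-M) = {0}) (hMe : ∀ E ∈ M, e - E ∈ M) (hMt : M = mTilde M e)
    {v : W} (hv : (inner ℝ e v : ℝ) = 0) :
    ∃ a b : W, a ∈ dualConeSet (coneOfSet M) ∧ b ∈ dualConeSet (coneOfSet M) ∧ v = a - b ∧
      (inner ℝ e a : ℝ) = (inner ℝ e b : ℝ) ∧ 2 * (inner ℝ e a : ℝ) ≤ distNorm M e v := by
  set C : Set W := dualConeSet (coneOfSet M) with hC
  set N : ℝ := distNorm M e v with hN
  rcases eq_or_ne v 0 with rfl | hvne
  · refine ⟨0, 0, dual_zero_mem _, dual_zero_mem _, by simp, rfl, ?_⟩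
    rw [hN, distNorm_zero hMpt, inner_zero_right]
    norm_num
  obtain ⟨δ, hδ, hδle⟩ := e_pos_on_dual hMconv hMint hMe
  have hN0 : 0 ≤ N := distNorm_nonneg hMcl hMconv hMpt hMe hv
  have hNpos : 0 < N := by
    rcases eq_or_lt_of_le hN0 with h0 | h; swap
    · exact h
    exfalso
    apply hvne
    apply v_zero_of_dn_nonpos hMconv hMint hMe
    intro E hE
    have := le_distNorm hMcl hMconv hMpt hMe hE v
    rw [← hN, ← h0] at this
    exact this
  have heC : ∀ a ∈ C, 0 ≤ (inner ℝ e a : ℝ) := by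
    intro a ha
    have h1 := hδle a ha
    have : (0:ℝ) ≤ δ * ‖a‖ := by positivity
    linarith
  set Q : Set (W × W) :=
    {p | p.1 ∈ C ∧ p.2 ∈ C ∧ (inner ℝ e p.1 : ℝ) + (inner ℝ e p.2 : ℝ) ≤ N} with hQ
  set D : Set W := (fun p : W × W => p.1 - p.2) '' Q with hD
  by_cases hvD : v ∈ D
  · obtain ⟨p, hp, hpv⟩ := hvD
    refine ⟨p.1, p.2, hp.1, hp.2.1, hpv.symm, ?_, ?_⟩
    · have h1 : (inner ℝ e p.1 : ℝ) - (inner ℝ e p.2 : ℝ) = (inner ℝ e v : ℝ) := by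
        rw [← hpv, inner_sub_right]
      rw [hv] at h1
      linarith
    · have h1 : (inner ℝ e p.1 : ℝ) - (inner ℝ e p.2 : ℝ) = (inner ℝ e v : ℝ) := by
        rw [← hpv, inner_sub_right]
      rw [hv] at h1
      have := hp.2.2
      linarith
  exfalso
  -- D is closed and convex
  have hQcl : IsClosed Q := by
    have h1 : IsClosed {p : W × W | p.1 ∈ C} := (dual_closed _).preimage continuous_fst
    have h2 : IsClosed {p : W × W | p.2 ∈ C} := (dual_closed _).preimage continuous_snd
    have h3 : IsClosed {p : W × W | (inner ℝ e p.1 : ℝ) + (inner ℝ e p.2 : ℝ) ≤ N} :=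
      isClosed_le ((continuous_const.inner continuous_fst).add
        (continuous_const.inner continuous_snd)) continuous_const
    exact h1.inter (h2.inter h3)
  have hQbdd : ∀ p ∈ Q, ‖p‖ ≤ N/δ := by
    rintro p ⟨h1, h2, h3⟩
    have he1 := hδle p.1 h1
    have he2 := hδle p.2 h2
    have hp1 : ‖p.1‖ ≤ N/δ := by
      rw [le_div_iff₀ hδ]
      have : (0:ℝ) ≤ δ * ‖p.2‖ := by positivity
      nlinarith [mul_comm δ ‖p.1‖]
    have hp2 : ‖p.2‖ ≤ N/δ := by
      rw [le_div_iff₀ hδ]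
      have : (0:ℝ) ≤ δ * ‖p.1‖ := by positivity
      nlinarith [mul_comm δ ‖p.2‖]
    calc ‖p‖ = max ‖p.1‖ ‖p.2‖ := rfl
      _ ≤ N/δ := max_le hp1 hp2
  have hQcp : IsCompact Q :=
    Metric.isCompact_of_isClosed_isBounded hQcl
      (isBounded_iff_forall_norm_le.2 ⟨N/δ, hQbdd⟩)
  have hDcl : IsClosed D := (hQcp.image (continuous_fst.sub continuous_snd)).isClosed
  have hQconv : Convex ℝ Q := by
    rintro p ⟨hp1, hp2, hp3⟩ q ⟨hq1, hq2, hq3⟩ α β hα hβ hαβ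
    refine ⟨dual_add (dual_smul hp1 hα) (dual_smul hq1 hβ),
      dual_add (dual_smul hp2 hα) (dual_smul hq2 hβ), ?_⟩
    have h1 : ((α • p + β • q).1 : W) = α • p.1 + β • q.1 := rfl
    have h2 : ((α • p + β • q).2 : W) = α • p.2 + β • q.2 := rfl
    rw [h1, h2, inner_add_right, inner_add_right, real_inner_smul_right, real_inner_smul_right,
      real_inner_smul_right, real_inner_smul_right]
    nlinarith
  have hDconv : Convex ℝ D :=
    hQconv.is_linear_image ⟨fun p q => by simp [Prod.fst_add, Prod.snd_add]; abel,
      fun c p => by simp [Prod.smul_fst, Prod.smul_snd, smul_sub]⟩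
  obtain ⟨f, u, hfd, hfv⟩ := geometric_hahn_banach_closed_point hDconv hDcl hvD
  have h0D : (0:W) ∈ D := by
    refine ⟨(0, 0), ⟨dual_zero_mem _, dual_zero_mem _, by simp [hN0]⟩, by simp⟩
  have hu0 : 0 < u := by
    have := hfd 0 h0D
    rwa [map_zero] at this
  -- bounds on f over the cone C
  have hfb : ∀ a ∈ C, N * f a ≤ u * (inner ℝ e a : ℝ) ∧ N * (-(f a)) ≤ u * (inner ℝ e a : ℝ) := by
    intro a ha
    have hea := heC a ha
    rcases eq_or_lt_of_le hea with h0 | hs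
    · have ha0 : a = 0 := by
        have h1 := hδle a ha
        rw [← h0] at h1
        have : ‖a‖ = 0 := by nlinarith [norm_nonneg a]
        exact norm_eq_zero.1 this
      rw [ha0, map_zero, inner_zero_right]
      norm_num
    · set s : ℝ := (inner ℝ e a : ℝ) with hs'
      set a' : W := (N/s) • a with ha'
      have ha'C : a' ∈ C := dual_smul ha (by positivity)
      have hea' : (inner ℝ e a' : ℝ) = N := by
        rw [ha', real_inner_smul_right, ← hs']
        field_simp
      have hfa' : f a' = (N/s) * f a := by rw [ha', map_smul, smul_eq_mul]
      have hd1 : a' ∈ D := ⟨(a', 0), ⟨ha'C, dual_zero_mem _, by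
        rw [hea', inner_zero_right]; linarith⟩, by simp⟩
      have hd2 : -a' ∈ D := ⟨(0, a'), ⟨dual_zero_mem _, ha'C, by
        rw [hea', inner_zero_right]; linarith⟩, by simp⟩
      have hb1 := hfd a' hd1
      have hb2 := hfd (-a') hd2
      rw [map_neg] at hb2
      rw [hfa'] at hb1 hb2
      constructor
      · have := mul_lt_mul_of_pos_left hb1 hs
        rw [show s * (N/s * f a) = N * f a by field_simp] at this
        nlinarith
      · have : -(N/s * f a) < u := by linarith
        have h2 := mul_lt_mul_of_pos_left this hs
        rw [show s * -(N/s * f a) = N * (-(f a)) by field_simp] at h2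
        nlinarith
  set w : W := (InnerProductSpace.toDual ℝ W).symm f with hw
  have hwf : ∀ z : W, (inner ℝ w z : ℝ) = f z := fun z => InnerProductSpace.toDual_symm_apply
  have hclcone : IsClosed (coneOfSet M) := cone_closed hMcl hMconv hMint hMpt hMe hMt
  set g : W := (N/u) • w with hg
  have hgin : ∀ z : W, (inner ℝ g z : ℝ) = (N/u) * f z := by
    intro z
    rw [hg, real_inner_smul_left, hwf]
  have hplus : e + g ∈ coneOfSet M := by
    apply mem_cone_of_dual_dual hMconv hMpt hclcone
    intro c hc
    rw [inner_add_left, hgin]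
    have h1 := (hfb c hc).2
    have h3 : 0 ≤ u * ((inner ℝ e c : ℝ) + N/u * f c) := by
      have h4 : u * (N/u * f c) = N * f c := by field_simp
      rw [mul_add, h4]
      linarith
    exact (mul_nonneg_iff_of_pos_left hu0).mp h3
  have hminus : e - g ∈ coneOfSet M := by
    apply mem_cone_of_dual_dual hMconv hMpt hclcone
    intro c hc
    rw [inner_sub_left, hgin]
    have h1 := (hfb c hc).1
    have h3 : 0 ≤ u * ((inner ℝ e c : ℝ) - N/u * f c) := by
      have h4 : u * (N/u * f c) = N * f c := by field_simp
      rw [mul_sub, h4]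
      linarith
    exact (mul_nonneg_iff_of_pos_left hu0).mp h3
  set E₁ : W := (2:ℝ)⁻¹ • (e + g) with hE₁
  have hE₁M : E₁ ∈ M := by
    rw [hMt]
    constructor
    · exact cone_smul hplus (by norm_num)
    · have hsum : (2:ℝ)⁻¹ • (e - g) + E₁ = e := by
        rw [hE₁, ← smul_add]
        rw [show (e - g) + (e + g) = e + e by abel]
        rw [smul_add, ← add_smul, show (2:ℝ)⁻¹ + 2⁻¹ = 1 by norm_num, one_smul]
      have heq : e - E₁ = (2:ℝ)⁻¹ • (e - g) := sub_eq_iff_eq_add.mpr hsum.symm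
      rw [heq]
      exact cone_smul hminus (by norm_num)
  have hle := le_distNorm hMcl hMconv hMpt hMe hE₁M v
  have hcomp : (2:ℕ) • E₁ - e = g := by
    rw [two_smul, hE₁, ← add_smul]
    rw [show (2:ℝ)⁻¹ + 2⁻¹ = 1 by norm_num, one_smul]
    abel
  rw [hcomp, hgin] at hle
  have hNu : 0 < N/u := by positivity
  have hfin : N < N/u * f v := by
    have := mul_lt_mul_of_pos_left hfv hNu
    rw [show N/u * u = N by field_simp] at this
    exact this
  rw [← hN] at hle
  linarith


lemma pq_arith {l₁ l₂ t p q : ℝ} (hl₁ : 1 ≤ l₁) (hl₂ : 1 ≤ l₂) (ht : 0 ≤ t)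
    (hpq1 : p ≤ l₁ * q) (hpq2 : t - q ≤ l₂ * (t - p)) :
    p - q ≤ t * ((Real.sqrt (l₁*l₂) - 1) / (Real.sqrt (l₁*l₂) + 1)) := by
  have hs1 : 1 ≤ l₁ * l₂ := by nlinarith
  rcases eq_or_lt_of_le hs1 with heq | hlt
  · have hl₁1 : l₁ = 1 := by nlinarith
    rw [← heq, Real.sqrt_one]
    norm_num
    rw [hl₁1, one_mul] at hpq1
    linarith
  · have hE1 : 0 ≤ l₁ * q - p := by linarith
    have hE2 : 0 ≤ l₂ * (t - p) - (t - q) := by linarith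
    have hG : (l₁ * l₂ - 1)*(p - q) ≤ (l₁ - 1)*((l₂ - 1)*t) := by
      nlinarith [mul_nonneg (sub_nonneg.2 hl₂) hE1, mul_nonneg (sub_nonneg.2 hl₁) hE2]
    have hsq : Real.sqrt (l₁ * l₂) ^ 2 = l₁ * l₂ := Real.sq_sqrt (by nlinarith)
    have hsqrt1 : 1 < Real.sqrt (l₁ * l₂) := by
      rw [show (1:ℝ) = Real.sqrt 1 by rw [Real.sqrt_one]]
      exact Real.sqrt_lt_sqrt (by norm_num) hlt
    have hAM : (l₁ - 1)*(l₂-1) ≤ (Real.sqrt (l₁ * l₂) - 1)^2 := by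
      have h1 : Real.sqrt l₁ ^2 = l₁ := Real.sq_sqrt (by nlinarith)
      have h2 : Real.sqrt l₂ ^2 = l₂ := Real.sq_sqrt (by nlinarith)
      have h3 : Real.sqrt l₁ * Real.sqrt l₂ = Real.sqrt (l₁ * l₂) :=
        (Real.sqrt_mul (by nlinarith) _).symm
      nlinarith [sq_nonneg (Real.sqrt l₁ - Real.sqrt l₂)]
    have hfact : l₁ * l₂ - 1 = (Real.sqrt (l₁ * l₂) - 1)*(Real.sqrt (l₁ * l₂) + 1) := by
      nlinarith [hsq]
    have hden : (0:ℝ) < Real.sqrt (l₁ * l₂) + 1 := by linarith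
    rw [mul_div_assoc', le_div_iff₀ hden]
    have h5 : (Real.sqrt (l₁ * l₂) - 1) * ((p - q)*(Real.sqrt (l₁ * l₂)+1)) ≤
        (Real.sqrt (l₁ * l₂) - 1) * (t * (Real.sqrt (l₁ * l₂)-1)) := by
      have hL : (Real.sqrt (l₁*l₂) - 1) * ((p - q)*(Real.sqrt (l₁*l₂)+1))
          = (l₁*l₂ - 1)*(p-q) := by rw [hfact]; ring
      have hR : (Real.sqrt (l₁*l₂) - 1) * (t * (Real.sqrt (l₁*l₂)-1))
          = (Real.sqrt (l₁*l₂)-1)^2 * t := by ring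
      have hmid : (l₁-1)*((l₂-1)*t) ≤ (Real.sqrt (l₁*l₂)-1)^2 * t := by
        have h6 := mul_le_mul_of_nonneg_right hAM ht
        calc (l₁-1)*((l₂-1)*t) = (l₁-1)*(l₂-1)*t := by ring
          _ ≤ _ := h6
      rw [hL, hR]
      exact le_trans hG hmid
    have := le_of_mul_le_mul_left h5 (by linarith : (0:ℝ) < Real.sqrt (l₁ * l₂) - 1)
    linarith [this]

lemma tanh_log_quarter {s : ℝ} (hs : 1 ≤ s) :
    Real.tanh (Real.log s / 4) = (Real.sqrt s - 1)/(Real.sqrt s + 1) := by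
  have hspos : 0 < s := lt_of_lt_of_le one_pos hs
  have h2 : Real.exp (Real.log s / 2) ^ 2 = s := by
    rw [sq, ← Real.exp_add, show Real.log s / 2 + Real.log s / 2 = Real.log s by ring,
      Real.exp_log hspos]
  have hE : Real.exp (Real.log s / 2) = Real.sqrt s := by
    rw [show Real.sqrt s = Real.sqrt (Real.exp (Real.log s / 2) ^2) by rw [h2],
      Real.sqrt_sq (Real.exp_pos _).le]
  rw [tanh_formula, show 2 * (Real.log s / 4) = Real.log s / 2 by ring, hE]

end PartB

section SupR
variable [FiniteDimensional ℝ W] {M' : Set W}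

lemma supRatio_attained {e' x y : W} {t : ℝ} (ht : 0 < t)
    (he' : e' ∈ coneOfSet M') (hex : (inner ℝ e' x : ℝ) = t) (hey : (inner ℝ e' y : ℝ) = t)
    (hne : supRatio (dualConeSet (coneOfSet M')) x y ≠ ⊤) :
    ∃ l : ℝ, 1 ≤ l ∧ l • y - x ∈ dualConeSet (coneOfSet M') ∧
      supRatio (dualConeSet (coneOfSet M')) x y = (l : EReal) := by
  set S : Set ℝ := {l : ℝ | l • y - x ∈ dualConeSet (coneOfSet M')} with hS
  have hSclosed : IsClosed S := by
    have : S = (fun l : ℝ => l • y - x) ⁻¹' (dualConeSet (coneOfSet M')) := rfl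
    rw [this]
    exact (dual_closed _).preimage ((continuous_id.smul continuous_const).sub continuous_const)
  have hSlb : ∀ l ∈ S, 1 ≤ l := by
    intro l hl
    have h0 := hl e' he'
    rw [inner_sub_left, real_inner_smul_left] at h0
    have hyx : (inner ℝ y e' : ℝ) = t := by rw [real_inner_comm]; exact hey
    have hxx : (inner ℝ x e' : ℝ) = t := by rw [real_inner_comm]; exact hex
    rw [hyx, hxx] at h0
    nlinarith
  have hSne : S.Nonempty := by
    by_contra hSe
    rw [Set.not_nonempty_iff_eq_empty] at hSe
    apply hne
    rw [supRatio, ← hS, hSe]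
    simp [sInf_empty]
  have hSbdd : BddBelow S := ⟨1, hSlb⟩
  obtain ⟨heq, hmem⟩ := ereal_sInf_image hSclosed hSne hSbdd
  exact ⟨sInf S, le_csInf hSne hSlb, hmem, heq⟩

end SupR
end DNC

/-- **Distinguishability norm contraction.** -/
theorem distNorm_contraction
    {V : Type*} [NormedAddCommGroup V] [InnerProductSpace ℝ V] [FiniteDimensional ℝ V]
    {V' : Type*} [NormedAddCommGroup V'] [InnerProductSpace ℝ V'] [FiniteDimensional ℝ V']
    (e : V) (M : Set V)
    (hMcl : IsClosed M) (hMconv : Convex ℝ M) (hMint : (interior M).Nonempty)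
    (hMpt : M ∩ (-M) = {0}) (hMe : ∀ E ∈ M, e - E ∈ M)
    (e' : V') (M' : Set V')
    (hM'cl : IsClosed M') (hM'conv : Convex ℝ M') (hM'int : (interior M').Nonempty)
    (hM'pt : M' ∩ (-M') = {0}) (hM'e : ∀ E ∈ M', e' - E ∈ M')
    (C : Set V) (hCdef : C = dualConeSet (coneOfSet M))
    (C' : Set V') (hC'def : C' = dualConeSet (coneOfSet M'))
    (B : Set V) (hBdef : B = C ∩ {v : V | (inner ℝ e v : ℝ) = 1})
    (B' : Set V') (hB'def : B' = C' ∩ {v : V' | (inner ℝ e' v : ℝ) = 1})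
    (T : V →ₗ[ℝ] V')
    (v₁ v₂ : V) (hv : (inner ℝ e v₁ : ℝ) = (inner ℝ e v₂ : ℝ)) :
    ((∀ E ∈ M', LinearMap.adjoint T E ∈ M) → LinearMap.adjoint T e' = e →
      distNorm M' e' (T v₁ - T v₂) ≤ distNorm M e (v₁ - v₂)) ∧
    ((∀ b ∈ B, T b ∈ B') → M = mTilde M e →
      distNorm M' e' (T v₁ - T v₂) ≤ distNorm M e (v₁ - v₂) * tanhQuarter (projDiam C C' T)) := by
  subst hCdef hC'def hBdef hB'def
  have hv0 : (inner ℝ e (v₁ - v₂) : ℝ) = 0 := by rw [inner_sub_right, hv]; ring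
  have hTv : T v₁ - T v₂ = T (v₁ - v₂) := (map_sub T v₁ v₂).symm
  constructor
  · -- part (a)
    intro hTM hTe
    rw [hTv]
    have hrepr : distNorm M' e' (T (v₁ - v₂))
        = sSup {r : ℝ | ∃ E ∈ M', r = (inner ℝ (2 • E - e') (T (v₁ - v₂)) : ℝ)} := rfl
    rw [hrepr]
    refine csSup_le ⟨(inner ℝ (2 • (0:V') - e') (T (v₁ - v₂)) : ℝ), 0, DNC.zero_mem hM'pt, rfl⟩ ?_
    rintro r ⟨E', hE', rfl⟩
    have h1 : LinearMap.adjoint T (2 • E' - e') = 2 • (LinearMap.adjoint T E') - e := by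
      rw [map_sub, hTe, two_smul, two_smul, map_add]
    have hadj : (inner ℝ (2 • E' - e') (T (v₁ - v₂)) : ℝ)
        = (inner ℝ (2 • (LinearMap.adjoint T E') - e) (v₁ - v₂) : ℝ) := by
      rw [← LinearMap.adjoint_inner_left, h1]
    rw [hadj]
    exact DNC.le_distNorm hMcl hMconv hMpt hMe (hTM E' hE') (v₁ - v₂)
  · -- part (b)
    intro hTB hMt
    rw [hTv]
    obtain ⟨a, b, haC, hbC, hvab, heab, h2t⟩ :=
      DNC.decomposition hMcl hMconv hMint hMpt hMe hMt hv0
    obtain ⟨δ, hδ, hδle⟩ := DNC.e_pos_on_dual hMconv hMint hMe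
    have ht0 : 0 ≤ (inner ℝ e a : ℝ) :=
      le_trans (by positivity : (0:ℝ) ≤ δ * ‖a‖) (hδle a haC)
    have hrepr : distNorm M' e' (T (v₁ - v₂))
        = sSup {r : ℝ | ∃ E ∈ M', r = (inner ℝ (2 • E - e') (T (v₁ - v₂)) : ℝ)} := rfl
    rw [hrepr]
    refine csSup_le ⟨(inner ℝ (2 • (0:V') - e') (T (v₁ - v₂)) : ℝ), 0, DNC.zero_mem hM'pt, rfl⟩ ?_
    rintro r ⟨E', hE', rfl⟩
    rcases eq_or_lt_of_le ht0 with h0 | htpos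
    · -- t = 0 : v = 0
      have ha0 : a = 0 := by
        have h1 := hδle a haC
        rw [← h0] at h1
        have h2 : ‖a‖ = 0 := by nlinarith [norm_nonneg a]
        exact norm_eq_zero.1 h2
      have hb0 : b = 0 := by
        have h1 := hδle b hbC
        rw [← heab, ← h0] at h1
        have h2 : ‖b‖ = 0 := by nlinarith [norm_nonneg b]
        exact norm_eq_zero.1 h2
      have hveq : v₁ - v₂ = 0 := by rw [hvab, ha0, hb0, sub_zero]
      rw [hveq, map_zero, inner_zero_right, DNC.distNorm_zero hMpt, zero_mul]
    · -- t > 0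
      set t : ℝ := (inner ℝ e a : ℝ) with htdef
      have hane : a ≠ 0 := by
        intro h
        rw [h, inner_zero_right] at htdef
        rw [htdef] at htpos
        exact lt_irrefl 0 htpos
      have hbne : b ≠ 0 := by
        intro h
        rw [h, inner_zero_right] at heab
        rw [heab] at htpos
        exact lt_irrefl 0 htpos
      -- base-preserving facts
      have hmap : ∀ z : V, z ∈ dualConeSet (coneOfSet M) → (inner ℝ e z : ℝ) = t →
          T z ∈ dualConeSet (coneOfSet M') ∧ (inner ℝ e' (T z) : ℝ) = t := by
        intro z hz hzs
        have hzb : t⁻¹ • z ∈ dualConeSet (coneOfSet M) ∩ {w : V | (inner ℝ e w : ℝ) = 1} := by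
          refine ⟨DNC.dual_smul hz (by positivity), ?_⟩
          simp only [Set.mem_setOf_eq, real_inner_smul_right]
          rw [hzs]
          field_simp
        have hTz := hTB _ hzb
        rw [map_smul T] at hTz
        obtain ⟨hTz1, hTz2⟩ := hTz
        constructor
        · have h3 := DNC.dual_smul hTz1 htpos.le
          rwa [smul_smul, mul_inv_cancel₀ htpos.ne', one_smul] at h3
        · rw [Set.mem_setOf_eq, real_inner_smul_right] at hTz2
          have h4 : (inner ℝ e' (T z) : ℝ) = t := by
            field_simp at hTz2
            linarith [hTz2]
          exact h4
      obtain ⟨hxC, hex⟩ := hmap a haC rfl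
      obtain ⟨hyC, hey⟩ := hmap b hbC heab.symm
      set x : V' := T a with hxdef
      set y : V' := T b with hydef
      -- p, q facts
      have hE'cone : E' ∈ coneOfSet M' := DNC.mem_cone hE'
      have hcE' : e' - E' ∈ coneOfSet M' := DNC.mem_cone (hM'e E' hE')
      have he'cone : e' ∈ coneOfSet M' := DNC.mem_cone (DNC.e_mem hM'pt hM'e)
      set p : ℝ := (inner ℝ E' x : ℝ) with hpdef
      set q : ℝ := (inner ℝ E' y : ℝ) with hqdef
      have hp0 : 0 ≤ p := by rw [hpdef, real_inner_comm]; exact hxC E' hE'cone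
      have hq0 : 0 ≤ q := by rw [hqdef, real_inner_comm]; exact hyC E' hE'cone
      have hpt : p ≤ t := by
        have h5 := hxC (e' - E') hcE'
        rw [inner_sub_right] at h5
        have h6 : (inner ℝ x e' : ℝ) = t := by rw [real_inner_comm]; exact hex
        rw [h6] at h5
        rw [hpdef, real_inner_comm]
        linarith
      have hqt : q ≤ t := by
        have h5 := hyC (e' - E') hcE'
        rw [inner_sub_right] at h5
        have h6 : (inner ℝ y e' : ℝ) = t := by rw [real_inner_comm]; exact hey
        rw [h6] at h5
        rw [hqdef, real_inner_comm]
        linarith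
      -- the value of the inner ℝ product
      have hr : (inner ℝ (2 • E' - e') (T (v₁ - v₂)) : ℝ) = 2*(p - q) := by
        have hTv2 : T (v₁ - v₂) = x - y := by rw [hvab, map_sub]
        rw [hTv2, inner_sub_left, inner_sub_right, inner_sub_right, two_smul, inner_add_left,
          inner_add_left, ← hpdef, ← hqdef, hex, hey]
        ring
      -- Hilbert distance to projective diameter
      have hDle : hilbertDist (dualConeSet (coneOfSet M')) x y
          ≤ projDiam (dualConeSet (coneOfSet M)) (dualConeSet (coneOfSet M')) T := by
        refine le_iSup_of_le a (le_iSup_of_le ⟨haC, by simpa using hane⟩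
          (le_iSup_of_le b (le_iSup_of_le ⟨hbC, by simpa using hbne⟩ le_rfl)))
      rcases eq_or_ne (hilbertDist (dualConeSet (coneOfSet M')) x y) ⊤ with htop | hne
      · -- infinite diameter
        have hΔ : projDiam (dualConeSet (coneOfSet M)) (dualConeSet (coneOfSet M')) T = ⊤ :=
          top_le_iff.1 (htop ▸ hDle)
        rw [hΔ]
        have hτ1 : tanhQuarter (⊤ : EReal) = 1 := by simp [tanhQuarter]
        rw [hτ1, mul_one, hr]
        linarith
      · -- finite case
        have hcond : ¬(supRatio (dualConeSet (coneOfSet M')) x y = ⊤ ∨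
            supRatio (dualConeSet (coneOfSet M')) y x = ⊤) := by
          intro hor
          apply hne
          simp only [hilbertDist]
          rw [if_pos hor]
        have hcond2 := hcond
        push_neg at hcond2
        obtain ⟨l₁, hl₁1, hl₁mem, hl₁eq⟩ :=
          DNC.supRatio_attained htpos he'cone hex hey hcond2.1
        obtain ⟨l₂, hl₂1, hl₂mem, hl₂eq⟩ :=
          DNC.supRatio_attained htpos he'cone hey hex hcond2.2
        have hs1 : (1:ℝ) ≤ l₁ * l₂ := by nlinarith
        have hdval : hilbertDist (dualConeSet (coneOfSet M')) x y
            = ((Real.log (l₁ * l₂) : ℝ) : EReal) := by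
          simp only [hilbertDist]
          rw [if_neg hcond, hl₁eq, hl₂eq]
          norm_num
        -- constraints
        have hc1 : p ≤ l₁ * q := by
          have h5 := hl₁mem E' hE'cone
          rw [inner_sub_left, real_inner_smul_left, real_inner_comm E' y,
            real_inner_comm E' x] at h5
          rw [hpdef, hqdef]
          linarith
        have hc2 : t - q ≤ l₂ * (t - p) := by
          have h5 := hl₂mem (e' - E') hcE'
          rw [inner_sub_left, real_inner_smul_left, inner_sub_right, inner_sub_right] at h5
          have h6 : (inner ℝ x e' : ℝ) = t := by rw [real_inner_comm]; exact hex
          have h7 : (inner ℝ y e' : ℝ) = t := by rw [real_inner_comm]; exact hey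
          rw [h6, h7, real_inner_comm E' x, real_inner_comm E' y] at h5
          rw [hpdef, hqdef]
          linarith
        have hkey := DNC.pq_arith hl₁1 hl₂1 ht0 hc1 hc2
        have htanh : (Real.sqrt (l₁*l₂) - 1)/(Real.sqrt (l₁*l₂)+1)
            = Real.tanh (Real.log (l₁*l₂)/4) := (DNC.tanh_log_quarter hs1).symm
        rw [htanh] at hkey
        have hlog0 : 0 ≤ Real.log (l₁*l₂) := Real.log_nonneg hs1
        have htanh0 : 0 ≤ Real.tanh (Real.log (l₁*l₂)/4) := DNC.tanh_nonneg (by linarith)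
        have hτge : Real.tanh (Real.log (l₁*l₂)/4) ≤ tanhQuarter
            (projDiam (dualConeSet (coneOfSet M)) (dualConeSet (coneOfSet M')) T) := by
          rcases eq_or_ne (projDiam (dualConeSet (coneOfSet M))
              (dualConeSet (coneOfSet M')) T) ⊤ with hΔtop | hΔne
          · rw [hΔtop]
            simp only [tanhQuarter, if_pos rfl]
            exact DNC.tanh_le_one _
          · rw [hdval] at hDle
            have h8 : Real.log (l₁*l₂) ≤ (projDiam (dualConeSet (coneOfSet M))
                (dualConeSet (coneOfSet M')) T).toReal := by
              have h9 := EReal.toReal_le_toReal hDle (EReal.coe_ne_bot _) hΔne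
              simpa using h9
            simp only [tanhQuarter, if_neg hΔne]
            exact DNC.tanh_mono (by linarith)
        have hτ0 : 0 ≤ tanhQuarter
            (projDiam (dualConeSet (coneOfSet M)) (dualConeSet (coneOfSet M')) T) :=
          le_trans htanh0 hτge
        rw [hr]
        calc 2*(p - q) ≤ 2*(t * Real.tanh (Real.log (l₁*l₂)/4)) := by linarith
          _ ≤ 2*(t * tanhQuarter
              (projDiam (dualConeSet (coneOfSet M)) (dualConeSet (coneOfSet M')) T)) := by
              have := mul_le_mul_of_nonneg_left hτge ht0
              linarith
          _ ≤ distNorm M e (v₁ - v₂) * tanhQuarter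
              (projDiam (dualConeSet (coneOfSet M)) (dualConeSet (coneOfSet M')) T) := by
              nlinarith

end
end
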